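/- arXiv:2001.03252 — 4 statements merged into one kernel-verified Lean document; each statement's English description precedes it below -/
import Mathlib

section
/- Let p_0, p_1, …, p_{2n−1} be 2n distinct points on a common circle in counterclockwise order and let μ > 0. Then there exists a perfect non-crossing matching of the points in which every edge has length at least μ if and only if there is no j such that all n boundary edges {p_i, p_{i+1}} for i = j, j+1, …, j+n−1 (indices modulo 2n) have length strictly less than μ. -/
noncomputable section

/-- The Euclidean plane. -/
abbrev Pt : Type := EuclideanSpace ℝ (Fin 2)

/-- The determinant of two plane vectors (twice the signed area). -/
def det2 (u v : Pt) : ℝ := u 0 * v 1 - u 1 * v 0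

/-- The points `p 0, p 1, …, p (N-1)` (indices in `ZMod N`) are distinct, lie on a common
circle, and are labeled in counterclockwise order: every triple of points with increasing
indices is positively (counterclockwise) oriented. -/
def OnCircleCCW (N : ℕ) (p : ZMod N → Pt) : Prop :=
  (∃ c : Pt, ∃ r : ℝ, 0 < r ∧ ∀ i, dist (p i) c = r) ∧
  Function.Injective p ∧
  (∀ i j k : ZMod N, i.val < j.val → j.val < k.val →
    0 < det2 (p j - p i) (p k - p i))

/-- `σ` encodes a perfect non-crossing matching of the points `p 0, …, p (N-1)`: it is a
fixed-point free involution of the indices, and the closed segments induced by two distinct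
edges are disjoint. -/
def IsNCM (N : ℕ) (p : ZMod N → Pt) (σ : ZMod N → ZMod N) : Prop :=
  (∀ i, σ (σ i) = i) ∧ (∀ i, σ i ≠ i) ∧
  (∀ i j : ZMod N, j ≠ i → j ≠ σ i →
    segment ℝ (p i) (p (σ i)) ∩ segment ℝ (p j) (p (σ j)) = ∅)

/-! ### Elementary determinant lemmas -/

lemma det2_swap (u v : Pt) : det2 u v = - det2 v u := by simp only [det2]; ring

lemma det2_cyc (u v w : Pt) : det2 (v - u) (w - u) = det2 (w - v) (u - v) := by
  simp only [det2, PiLp.sub_apply]; ring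

lemma det2_comb (u v w : Pt) (s t : ℝ) :
    det2 u (s • v + t • w) = s * det2 u v + t * det2 u w := by
  simp only [det2, PiLp.add_apply, PiLp.smul_apply, smul_eq_mul]; ring

lemma det2_self (u : Pt) : det2 u u = 0 := by simp only [det2]; ring

lemma det2_zero_right (u : Pt) : det2 u 0 = 0 := by
  simp only [det2]
  have h0 : (0 : Pt) 0 = 0 := rfl
  have h1 : (0 : Pt) 1 = 0 := rfl
  rw [h0, h1]; ring

lemma dist_sq (u v : Pt) : (dist u v)^2 = (u 0 - v 0)^2 + (u 1 - v 1)^2 := by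
  rw [EuclideanSpace.dist_eq, Fin.sum_univ_two, Real.sq_sqrt (by positivity)]
  simp [Real.dist_eq, sq_abs]

/-! ### The main metric lemma: a chord both of whose sides contain a pair of
circle points at distance at least `μ` has length at least `μ`. -/

def ff (O A B X : Pt) (r : ℝ) : ℝ :=
  (X 0 - O 0)*((A 0 - O 0)+(B 0 - O 0)) + (X 1 - O 1)*((A 1 - O 1)+(B 1 - O 1))
    - (r^2 + ((A 0 - O 0)*(B 0 - O 0)+(A 1 - O 1)*(B 1 - O 1)))

lemma circle_sq (O X : Pt) (r : ℝ) (h : dist X O = r) :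
    (X 0 - O 0)^2 + (X 1 - O 1)^2 = r^2 := by
  rw [← dist_sq, h]

lemma bridge (O A B X : Pt) (r : ℝ) (hA : dist A O = r) (hB : dist B O = r) :
    ff O A B X r * det2 (B - A) (O - A) = ff O A B O r * det2 (B - A) (X - A) := by
  have hA2 := circle_sq O A r hA
  have hB2 := circle_sq O B r hB
  simp only [ff, det2, PiLp.sub_apply]
  linear_combination ((X 0 - O 0)*(B 1 - O 1) - (X 1 - O 1)*(B 0 - O 0)) * hA2 +
    ((X 1 - O 1)*(A 0 - O 0) - (X 0 - O 0)*(A 1 - O 1)) * hB2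

lemma kgl (O A B C D : Pt) (r : ℝ)
    (hA : dist A O = r) (hB : dist B O = r) (hC : dist C O = r) (hD : dist D O = r)
    (hfC : 0 ≤ ff O A B C r) (hfD : 0 ≤ ff O A B D r) : dist C D ≤ dist A B := by
  have hA2 := circle_sq O A r hA
  have hB2 := circle_sq O B r hB
  have hC2 := circle_sq O C r hC
  have hD2 := circle_sq O D r hD
  set M : Pt := (1/2 : ℝ) • (A + B) with hM
  have hM0 : M 0 = (A 0 + B 0)/2 := by simp [hM]; ring
  have hM1 : M 1 = (A 1 + B 1)/2 := by simp [hM]; ring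
  have key : ∀ X : Pt, (X 0 - O 0)^2 + (X 1 - O 1)^2 = r^2 → 0 ≤ ff O A B X r →
      dist X M ≤ dist A B / 2 := by
    intro X hX2 hfX
    have h1 : (dist X M)^2 ≤ (dist A B / 2)^2 := by
      rw [div_pow, dist_sq, dist_sq, hM0, hM1]
      simp only [ff] at hfX
      linarith [hfX, hX2]
    calc dist X M = Real.sqrt ((dist X M)^2) := (Real.sqrt_sq dist_nonneg).symm
      _ ≤ Real.sqrt ((dist A B / 2)^2) := Real.sqrt_le_sqrt h1
      _ = dist A B / 2 := Real.sqrt_sq (by positivity)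
  calc dist C D ≤ dist C M + dist M D := dist_triangle C M D
    _ ≤ dist A B / 2 + dist A B / 2 := by
        have := key C hC2 hfC
        have := key D hD2 hfD
        rw [dist_comm M D]; linarith
    _ = dist A B := by ring

set_option maxHeartbeats 1000000 in
lemma chord_long (O A B C D E F : Pt) (r μ : ℝ)
    (hA : dist A O = r) (hB : dist B O = r) (hC : dist C O = r) (hD : dist D O = r)
    (hE : dist E O = r) (hF : dist F O = r) (hAB : A ≠ B)
    (hgC : det2 (B - A) (C - A) ≤ 0) (hgD : det2 (B - A) (D - A) ≤ 0)
    (hgE : 0 ≤ det2 (B - A) (E - A)) (hgF : 0 ≤ det2 (B - A) (F - A))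
    (hCD : μ ≤ dist C D) (hEF : μ ≤ dist E F) : μ ≤ dist A B := by
  have hA2 := circle_sq O A r hA
  have hB2 := circle_sq O B r hB
  have hfOeq : ff O A B O r
      = -((((A 0 - O 0)+(B 0 - O 0))^2 + ((A 1 - O 1)+(B 1 - O 1))^2))/2 := by
    simp only [ff]
    linear_combination ((1:ℝ)/2) * hA2 + ((1:ℝ)/2) * hB2
  have hfO : ff O A B O r ≤ 0 := by
    rw [hfOeq]
    have h1 := sq_nonneg ((A 0 - O 0)+(B 0 - O 0))
    have h2 := sq_nonneg ((A 1 - O 1)+(B 1 - O 1))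
    linarith
  rcases lt_trichotomy (det2 (B - A) (O - A)) 0 with hO | hO | hO
  · have h1 : 0 ≤ ff O A B E r := by
      have hb := bridge O A B E r hA hB
      have hprod : ff O A B E r * det2 (B - A) (O - A) ≤ 0 := by
        have := mul_nonpos_of_nonpos_of_nonneg hfO hgE
        linarith [hb, this]
      nlinarith [hprod, hO]
    have h2 : 0 ≤ ff O A B F r := by
      have hb := bridge O A B F r hA hB
      have hprod : ff O A B F r * det2 (B - A) (O - A) ≤ 0 := by
        have := mul_nonpos_of_nonpos_of_nonneg hfO hgF
        linarith [hb, this]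
      nlinarith [hprod, hO]
    exact le_trans hEF (kgl O A B E F r hA hB hE hF h1 h2)
  · have hABn : 0 < (A 0 - B 0)^2 + (A 1 - B 1)^2 := by
      have hd : (0:ℝ) < dist A B := dist_pos.2 hAB
      have := dist_sq A B
      nlinarith
    have hdet0 : (B 0 - A 0) * (O 1 - A 1) - (B 1 - A 1) * (O 0 - A 0) = 0 := by
      simpa only [det2, PiLp.sub_apply] using hO
    have key : (-(ff O A B O r)) * ((A 0 - B 0)^2 + (A 1 - B 1)^2)
        = 2 * ((B 0 - A 0) * (O 1 - A 1) - (B 1 - A 1) * (O 0 - A 0))^2 := by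
      simp only [ff]
      linear_combination ((A 0 - B 0)*(B 0 - O 0) + (A 1 - B 1)*(B 1 - O 1)) * hA2 +
        ((B 0 - A 0)*(A 0 - O 0) + (B 1 - A 1)*(A 1 - O 1)) * hB2
    rw [hdet0] at key
    have hfO0 : ff O A B O r = 0 := by
      have h0 : (-(ff O A B O r)) * ((A 0 - B 0)^2 + (A 1 - B 1)^2) = 0 := by
        rw [key]; ring
      rcases mul_eq_zero.1 h0 with h | h
      · linarith
      · exact absurd h (ne_of_gt hABn)
    have hsum : ((A 0 - O 0)+(B 0 - O 0))^2 + ((A 1 - O 1)+(B 1 - O 1))^2 = 0 := by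
      rw [hfOeq] at hfO0
      linarith
    have hQ1 : (A 0 - O 0)+(B 0 - O 0) = 0 := by
      have h1 := sq_nonneg ((A 0 - O 0)+(B 0 - O 0))
      have h2 := sq_nonneg ((A 1 - O 1)+(B 1 - O 1))
      have : ((A 0 - O 0)+(B 0 - O 0))^2 = 0 := by linarith
      exact pow_eq_zero_iff two_ne_zero |>.1 this
    have hQ2 : (A 1 - O 1)+(B 1 - O 1) = 0 := by
      have h1 := sq_nonneg ((A 0 - O 0)+(B 0 - O 0))
      have h2 := sq_nonneg ((A 1 - O 1)+(B 1 - O 1))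
      have : ((A 1 - O 1)+(B 1 - O 1))^2 = 0 := by linarith
      exact pow_eq_zero_iff two_ne_zero |>.1 this
    have hfzero : ∀ X : Pt, ff O A B X r = 0 := by
      intro X
      have e1 : ff O A B O r = 0 := hfO0
      simp only [ff] at e1 ⊢
      rw [hQ1, hQ2] at e1 ⊢
      linarith
    exact le_trans hCD (kgl O A B C D r hA hB hC hD (le_of_eq (hfzero C).symm)
      (le_of_eq (hfzero D).symm))
  · have h1 : 0 ≤ ff O A B C r := by
      have hb := bridge O A B C r hA hB
      have hprod : 0 ≤ ff O A B C r * det2 (B - A) (O - A) := by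
        have := mul_nonneg (neg_nonneg.2 hfO) (neg_nonneg.2 hgC)
        linarith [hb, this]
      nlinarith [hprod, hO]
    have h2 : 0 ≤ ff O A B D r := by
      have hb := bridge O A B D r hA hB
      have hprod : 0 ≤ ff O A B D r * det2 (B - A) (O - A) := by
        have := mul_nonneg (neg_nonneg.2 hfO) (neg_nonneg.2 hgD)
        linarith [hb, this]
      nlinarith [hprod, hO]
    exact le_trans hCD (kgl O A B C D r hA hB hC hD h1 h2)

/-! ### Segment separation and crossing lemmas -/

lemma seg_disjoint (A B C D : Pt) (hC : 0 < det2 (B - A) (C - A)) (hD : 0 < det2 (B - A) (D - A)) :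
    segment ℝ A B ∩ segment ℝ C D = ∅ := by
  rw [Set.eq_empty_iff_forall_notMem]
  rintro x ⟨hx1, hx2⟩
  rw [segment_eq_image' ℝ] at hx1 hx2
  obtain ⟨s, hs, rfl⟩ := hx1
  obtain ⟨t, ht, hst⟩ := hx2
  have hst' : C + t • (D - C) = A + s • (B - A) := hst
  have e1 : (A + s • (B - A)) - A = s • (B - A) + (0:ℝ) • (B - A) := by module
  have h1 : det2 (B - A) ((A + s • (B - A)) - A) = 0 := by
    rw [e1, det2_comb]
    simp only [det2]; ring
  have e2 : (A + s • (B - A)) - A = (1 - t) • (C - A) + t • (D - A) := by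
    rw [← hst']; module
  have h2 : 0 < det2 (B - A) ((A + s • (B - A)) - A) := by
    rw [e2, det2_comb]
    rcases ht with ⟨ht0, ht1⟩
    rcases le_total (det2 (B - A) (C - A)) (det2 (B - A) (D - A)) with h | h
    · nlinarith [mul_nonneg ht0 (sub_nonneg.2 h)]
    · nlinarith [mul_nonneg (sub_nonneg.2 ht1) (sub_nonneg.2 h)]
  linarith

lemma seg_cross (A B C D : Pt)
    (h1 : 0 < det2 (B - A) (C - A)) (h2 : 0 < det2 (B - A) (D - A))
    (h3 : 0 < det2 (C - A) (D - A)) (h4 : 0 < det2 (C - B) (D - B)) :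
    (segment ℝ A C ∩ segment ℝ B D).Nonempty := by
  have hgBneg : det2 (C - A) (B - A) < 0 := by rw [det2_swap]; linarith
  have hden : det2 (C - A) (B - A) - det2 (C - A) (D - A) < 0 := by linarith
  set t := det2 (C - A) (B - A) / (det2 (C - A) (B - A) - det2 (C - A) (D - A)) with hT
  have key : det2 (C - A) (B - A) + t * (det2 (C - A) (D - A) - det2 (C - A) (B - A)) = 0 := by
    have hne : det2 (C - A) (B - A) - det2 (C - A) (D - A) ≠ 0 := hden.ne
    have e : (det2 (C - A) (D - A) - det2 (C - A) (B - A))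
        = -(det2 (C - A) (B - A) - det2 (C - A) (D - A)) := by ring
    rw [hT, e, mul_neg, div_mul_cancel₀ _ hne]
    ring
  have ht0 : 0 ≤ t := by nlinarith
  have ht1 : t ≤ 1 := by nlinarith
  set X := B + t • (D - B) with hX
  have hXBD : X ∈ segment ℝ B D := by
    rw [segment_eq_image' ℝ]; exact ⟨t, ⟨ht0, ht1⟩, rfl⟩
  have e1 : X - A = (1 - t) • (B - A) + t • (D - A) := by rw [hX]; module
  have hdet0 : det2 (C - A) (X - A) = 0 := by
    rw [e1, det2_comb]; linarith [key]
  have hu : (C - A) 0 ≠ 0 ∨ (C - A) 1 ≠ 0 := by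
    by_contra h
    push_neg at h
    have : det2 (C - A) (D - A) = 0 := by
      simp only [det2, h.1, h.2]; ring
    linarith
  have hs : ∃ s : ℝ, X - A = s • (C - A) := by
    rcases hu with h | h
    · refine ⟨(X - A) 0 / (C - A) 0, ?_⟩
      ext i
      fin_cases i
      · show (X - A) 0 = (X - A) 0 / (C - A) 0 * (C - A) 0
        rw [div_mul_cancel₀ _ h]
      · show (X - A) 1 = (X - A) 0 / (C - A) 0 * (C - A) 1
        rw [div_mul_eq_mul_div, eq_div_iff h]
        simp only [det2] at hdet0
        linarith [hdet0]
    · refine ⟨(X - A) 1 / (C - A) 1, ?_⟩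
      ext i
      fin_cases i
      · show (X - A) 0 = (X - A) 1 / (C - A) 1 * (C - A) 0
        rw [div_mul_eq_mul_div, eq_div_iff h]
        simp only [det2] at hdet0
        linarith [hdet0]
      · show (X - A) 1 = (X - A) 1 / (C - A) 1 * (C - A) 1
        rw [div_mul_cancel₀ _ h]
  obtain ⟨s, hsX⟩ := hs
  have dA : 0 < det2 (D - B) (A - B) := by rw [← det2_cyc]; exact h2
  have dC : det2 (D - B) (C - B) < 0 := by
    rw [det2_swap]; linarith
  have hdet0' : det2 (D - B) (X - B) = 0 := by
    have e : X - B = t • (D - B) + (0:ℝ) • (D - B) := by rw [hX]; module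
    rw [e, det2_comb]
    simp only [det2]; ring
  have e2 : X - B = (1 - s) • (A - B) + s • (C - B) := by
    have hXs : X = A + s • (C - A) := by
      rw [sub_eq_iff_eq_add] at hsX
      rw [hsX]; module
    rw [hXs]; module
  have hcomb : (1 - s) * det2 (D - B) (A - B) + s * det2 (D - B) (C - B) = 0 := by
    rw [← det2_comb, ← e2, hdet0']
  have hs0 : 0 ≤ s := by nlinarith
  have hs1 : s ≤ 1 := by nlinarith
  have hXAC : X ∈ segment ℝ A C := by
    rw [segment_eq_image' ℝ]
    refine ⟨s, ⟨hs0, hs1⟩, ?_⟩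
    rw [sub_eq_iff_eq_add] at hsX
    rw [hsX]; module
  exact ⟨X, hXAC, hXBD⟩

/-! ### cyclic counterclockwise order -/

section CCW

variable {N : ℕ} [NeZero N] (p : ZMod N → Pt)
  (hp3 : ∀ i j k : ZMod N, i.val < j.val → j.val < k.val →
    0 < det2 (p j - p i) (p k - p i))

def ccw3 (a b c : ZMod N) : Prop := 0 < det2 (p b - p a) (p c - p a)

omit [NeZero N] in
lemma ccw3_cyc {a b c : ZMod N} (h : ccw3 p a b c) : ccw3 p b c a := by
  unfold ccw3 at *
  rw [det2_cyc] at h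
  exact h

include hp3 in
lemma ccw3_shift (t : ZMod N) (x w y : ℕ) (hxw : x < w) (hwy : w < y) (hyN : y < N) :
    ccw3 p (t + (x : ZMod N)) (t + (w : ZMod N)) (t + (y : ZMod N)) := by
  have hT : t.val < N := ZMod.val_lt t
  have hval : ∀ z : ℕ, z < N → (t + (z : ZMod N)).val = (t.val + z) % N := by
    intro z hz
    rw [ZMod.val_add, ZMod.val_natCast]
    conv_rhs => rw [Nat.add_mod]
    rw [Nat.mod_eq_of_lt hT]
  have hmod : ∀ m : ℕ, m < N → m % N = m := fun m hm => Nat.mod_eq_of_lt hm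
  have hmod2 : ∀ m : ℕ, N ≤ m → m < 2*N → m % N = m - N := by
    intro m h1 h2
    rw [Nat.mod_eq_sub_mod h1, Nat.mod_eq_of_lt (by omega)]
  have vx := hval x (by omega)
  have vw := hval w (by omega)
  have vy := hval y hyN
  by_cases c1 : t.val + y < N
  · -- no wraparound
    rw [hmod _ (by omega)] at vx vw vy
    exact hp3 _ _ _ (by omega) (by omega)
  · by_cases c2 : t.val + w < N
    · -- only y wraps : order (y, x, w)
      rw [hmod _ (by omega)] at vx vw
      rw [hmod2 _ (by omega) (by omega)] at vy
      have h : ccw3 p (t + (y : ZMod N)) (t + (x : ZMod N)) (t + (w : ZMod N)) :=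
        hp3 (t + (y : ZMod N)) (t + (x : ZMod N)) (t + (w : ZMod N)) (by omega) (by omega)
      exact ccw3_cyc p h
    · by_cases c3 : t.val + x < N
      · -- w and y wrap : order (w, y, x)
        rw [hmod _ (by omega)] at vx
        rw [hmod2 _ (by omega) (by omega)] at vw vy
        have h : ccw3 p (t + (w : ZMod N)) (t + (y : ZMod N)) (t + (x : ZMod N)) :=
          hp3 (t + (w : ZMod N)) (t + (y : ZMod N)) (t + (x : ZMod N)) (by omega) (by omega)
        exact ccw3_cyc p (ccw3_cyc p h)
      · -- all wrap
        rw [hmod2 _ (by omega) (by omega)] at vx vw vy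
        exact hp3 _ _ _ (by omega) (by omega)

end CCW

/-! ### combinatorial non-crossing matchings avoiding monochromatic pairs -/

open Finset

lemma adj_diff_aux (S : Finset ℕ) (P : ℕ → Prop) (u v : ℕ) (hu : u ∈ S) (hv : v ∈ S)
    (hPu : P u) (hPv : ¬ P v) (huv : u < v) :
    ∃ a ∈ S, ∃ b ∈ S, a < b ∧ (∀ z ∈ S, ¬(a < z ∧ z < b)) ∧ P a ∧ ¬ P b := by
  classical
  set B := S.filter (fun z => u < z ∧ ¬ P z) with hB
  have hvB : v ∈ B := by simp [hB, hv, huv, hPv]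
  have hBne : B.Nonempty := ⟨v, hvB⟩
  set b := B.min' hBne with hbdef
  have hbB : b ∈ B := B.min'_mem hBne
  simp only [hB, mem_filter] at hbB
  obtain ⟨hbS, hub, hPb⟩ := hbB
  set A := S.filter (fun z => z < b ∧ P z) with hA
  have huA : u ∈ A := by simp [hA, hu, hub, hPu]
  have hAne : A.Nonempty := ⟨u, huA⟩
  set a := A.max' hAne with hadef
  have haA : a ∈ A := A.max'_mem hAne
  simp only [hA, mem_filter] at haA
  obtain ⟨haS, hab, hPa⟩ := haA
  refine ⟨a, haS, b, hbS, hab, ?_, hPa, hPb⟩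
  rintro z hz ⟨haz, hzb⟩
  by_cases hPz : P z
  · have hzA : z ∈ A := by simp [hA, hz, hzb, hPz]
    have := A.le_max' z hzA
    omega
  · have hua : u ≤ a := A.le_max' u huA
    have hzB : z ∈ B := by
      simp only [hB, mem_filter]
      exact ⟨hz, by omega, hPz⟩
    have := B.min'_le z hzB
    omega

lemma adj_diff (S : Finset ℕ) (P : ℕ → Prop) (u v : ℕ) (hu : u ∈ S) (hv : v ∈ S)
    (hPu : P u) (hPv : ¬ P v) :
    ∃ a ∈ S, ∃ b ∈ S, a < b ∧ (∀ z ∈ S, ¬(a < z ∧ z < b)) ∧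
      ((P a ∧ ¬ P b) ∨ (¬ P a ∧ P b)) := by
  rcases lt_trichotomy u v with h | h | h
  · obtain ⟨a, ha, b, hb, h1, h2, h3, h4⟩ := adj_diff_aux S P u v hu hv hPu hPv h
    exact ⟨a, ha, b, hb, h1, h2, Or.inl ⟨h3, h4⟩⟩
  · exact absurd (h ▸ hPu) hPv
  · obtain ⟨a, ha, b, hb, h1, h2, h3, h4⟩ :=
      adj_diff_aux S (fun z => ¬ P z) v u hv hu hPv (by simpa using hPu) h
    exact ⟨a, ha, b, hb, h1, h2, Or.inr ⟨h3, by simpa using h4⟩⟩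

lemma ncm_exists : ∀ (k : ℕ) (S : Finset ℕ) (col : ℕ → ℕ),
    S.card = 2 * k → (∀ c, (S.filter (fun x => col x = c)).card ≤ k) →
    ∃ f : ℕ → ℕ,
      (∀ x ∈ S, f x ∈ S) ∧ (∀ x ∈ S, f (f x) = x) ∧ (∀ x ∈ S, f x ≠ x) ∧
      (∀ x ∈ S, col (f x) ≠ col x) ∧
      (∀ x ∈ S, ∀ y ∈ S, x < y → y < f x → x < f y ∧ f y < f x) := by
  intro k
  induction k with
  | zero =>
    intro S col hcard _
    have hS : S = ∅ := card_eq_zero.1 (by omega)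
    subst hS
    exact ⟨id, by simp, by simp, by simp, by simp, by simp⟩
  | succ k ih =>
    intro S col hcard hcls
    classical
    have hSne : S.Nonempty := card_pos.1 (by omega)
    obtain ⟨cm, hcmmem, hcmmax⟩ :=
      (S.image col).exists_max_image (fun c => (S.filter (fun x => col x = c)).card)
        (hSne.image col)
    obtain ⟨u, huS, hcolu⟩ := mem_image.1 hcmmem
    have hv : ∃ v ∈ S, ¬ col v = cm := by
      by_contra h
      push_neg at h
      have hfe : S.filter (fun x => col x = cm) = S := filter_eq_self.2 h
      have h2 := hcls cm
      rw [hfe] at h2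
      omega
    obtain ⟨v, hvS, hcolv⟩ := hv
    obtain ⟨a, haS, b, hbS, hab, hadj, hPor⟩ :=
      adj_diff S (fun x => col x = cm) u v huS hvS hcolu hcolv
    have hcolab : col a ≠ col b := by
      rcases hPor with ⟨h1, h2⟩ | ⟨h1, h2⟩
      · intro hh; exact h2 (hh.symm.trans h1)
      · intro hh; exact h1 (hh.trans h2)
    set S' := (S.erase a).erase b with hS'
    have hbmem : b ∈ S.erase a := mem_erase.2 ⟨by omega, hbS⟩
    have hS'card : S'.card = 2 * k := by
      rw [hS', card_erase_of_mem hbmem, card_erase_of_mem haS]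
      omega
    have hmemS' : ∀ x, x ∈ S' ↔ (x ∈ S ∧ x ≠ a ∧ x ≠ b) := by
      intro x
      simp only [hS', mem_erase]
      tauto
    have hcls' : ∀ c, (S'.filter (fun x => col x = c)).card ≤ k := by
      intro c
      by_cases hca : c = col a
      · have hsub : S'.filter (fun x => col x = c) ⊆ (S.filter (fun x => col x = c)).erase a := by
          intro x hx
          rw [mem_filter, hmemS'] at hx
          exact mem_erase.2 ⟨hx.1.2.1, mem_filter.2 ⟨hx.1.1, hx.2⟩⟩
        have h1 := card_le_card hsub
        have h2 : a ∈ S.filter (fun x => col x = c) := mem_filter.2 ⟨haS, hca.symm⟩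
        have h3 := card_erase_of_mem h2
        have h4 := hcls c
        omega
      · by_cases hcb : c = col b
        · have hsub : S'.filter (fun x => col x = c) ⊆ (S.filter (fun x => col x = c)).erase b := by
            intro x hx
            rw [mem_filter, hmemS'] at hx
            exact mem_erase.2 ⟨hx.1.2.2, mem_filter.2 ⟨hx.1.1, hx.2⟩⟩
          have h1 := card_le_card hsub
          have h2 : b ∈ S.filter (fun x => col x = c) := mem_filter.2 ⟨hbS, hcb.symm⟩
          have h3 := card_erase_of_mem h2
          have h4 := hcls c
          omega
        · by_contra hgt
          push_neg at hgt
          have hsub : S'.filter (fun x => col x = c) ⊆ S.filter (fun x => col x = c) := by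
            intro x hx
            rw [mem_filter, hmemS'] at hx
            exact mem_filter.2 ⟨hx.1.1, hx.2⟩
          have hCc : (S.filter (fun x => col x = c)).card = k + 1 := by
            have := card_le_card hsub
            have := hcls c
            omega
          have hcmem : c ∈ S.image col := by
            have : (S.filter (fun x => col x = c)).Nonempty := card_pos.1 (by omega)
            obtain ⟨x, hx⟩ := this
            rw [mem_filter] at hx
            exact mem_image.2 ⟨x, hx.1, hx.2⟩
          have hTk : (S.filter (fun x => col x = cm)).card = k + 1 := by
            have h1 := hcmmax c hcmem
            have h2 := hcls cm
            omega
          have hcm_ab : cm = col a ∨ cm = col b := by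
            rcases hPor with ⟨h1, _⟩ | ⟨_, h2⟩
            · exact Or.inl h1.symm
            · exact Or.inr h2.symm
          have hccm : c ≠ cm := by
            rcases hcm_ab with h | h
            · rw [h]; exact hca
            · rw [h]; exact hcb
          have hdisj : Disjoint (S.filter (fun x => col x = c)) (S.filter (fun x => col x = cm)) := by
            rw [disjoint_left]
            intro x hx1 hx2
            rw [mem_filter] at hx1 hx2
            exact hccm (hx1.2.symm.trans hx2.2)
          have hunion : (S.filter (fun x => col x = c)) ∪ (S.filter (fun x => col x = cm)) = S := by
            apply eq_of_subset_of_card_le (union_subset (filter_subset _ _) (filter_subset _ _))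
            rw [card_union_of_disjoint hdisj, hCc, hTk]
            omega
          have hmem_ab : ∀ w, w ∈ S → col w = c ∨ col w = cm := by
            intro w hw
            rw [← hunion, mem_union, mem_filter, mem_filter] at hw
            tauto
          rcases hPor with ⟨h1, h2⟩ | ⟨h1, h2⟩
          · rcases hmem_ab b hbS with h | h
            · exact hcb (h ▸ rfl)
            · exact h2 h
          · rcases hmem_ab a haS with h | h
            · exact hca (h ▸ rfl)
            · exact h1 h
    obtain ⟨f', hf1, hf2, hf3, hf4, hf5⟩ := ih S' col hS'card hcls'
    set f := fun x => if x = a then b else if x = b then a else f' x with hf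
    have hfa : f a = b := by simp [hf]
    have hfb : f b = a := by simp [hf, (by omega : b ≠ a)]
    have hfx : ∀ x, x ≠ a → x ≠ b → f x = f' x := by
      intro x h1 h2; simp [hf, h1, h2]
    have hmem' : ∀ x ∈ S, x ≠ a → x ≠ b → x ∈ S' := by
      intro x h1 h2 h3; exact (hmemS' x).2 ⟨h1, h2, h3⟩
    have hf'ab : ∀ x ∈ S', f' x ≠ a ∧ f' x ≠ b := by
      intro x hx
      have := hf1 x hx
      rw [hmemS'] at this
      exact ⟨this.2.1, this.2.2⟩
    refine ⟨f, ?_, ?_, ?_, ?_, ?_⟩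
    · intro x hxS
      by_cases h1 : x = a
      · rw [h1, hfa]; exact hbS
      by_cases h2 : x = b
      · rw [h2, hfb]; exact haS
      · rw [hfx x h1 h2]
        have := hf1 x (hmem' x hxS h1 h2)
        rw [hmemS'] at this
        exact this.1
    · intro x hxS
      by_cases h1 : x = a
      · rw [h1, hfa, hfb]
      by_cases h2 : x = b
      · rw [h2, hfb, hfa]
      · have hxS' := hmem' x hxS h1 h2
        rw [hfx x h1 h2]
        obtain ⟨n1, n2⟩ := hf'ab x hxS'
        rw [hfx (f' x) n1 n2]
        exact hf2 x hxS'
    · intro x hxS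
      by_cases h1 : x = a
      · rw [h1, hfa]; omega
      by_cases h2 : x = b
      · rw [h2, hfb]; omega
      · rw [hfx x h1 h2]
        exact hf3 x (hmem' x hxS h1 h2)
    · intro x hxS
      by_cases h1 : x = a
      · rw [h1, hfa]; exact fun h => hcolab h.symm
      by_cases h2 : x = b
      · rw [h2, hfb]; exact hcolab
      · rw [hfx x h1 h2]
        exact hf4 x (hmem' x hxS h1 h2)
    · intro x hxS y hyS hxy hyfx
      by_cases hx1 : x = a
      · exfalso
        subst hx1
        rw [hfa] at hyfx
        exact hadj y hyS ⟨hxy, hyfx⟩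
      by_cases hx2 : x = b
      · exfalso
        subst hx2
        rw [hfb] at hyfx
        omega
      have hxS' := hmem' x hxS hx1 hx2
      rw [hfx x hx1 hx2] at hyfx ⊢
      have hfxS' := hf1 x hxS'
      obtain ⟨hfxa, hfxb⟩ := hf'ab x hxS'
      by_cases hy1 : y = a
      · rw [hy1] at hxy hyfx
        rw [hy1, hfa]
        have hfxS : f' x ∈ S := by
          rw [hmemS'] at hfxS'
          exact hfxS'.1
        have hnb : ¬ (a < f' x ∧ f' x < b) := hadj (f' x) hfxS
        omega
      by_cases hy2 : y = b
      · rw [hy2] at hxy hyfx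
        rw [hy2, hfb]
        have hnx : ¬ (a < x ∧ x < b) := hadj x hxS
        omega
      · have hyS' := hmem' y hyS hy1 hy2
        rw [hfx y hy1 hy2]
        exact hf5 x hxS' y hyS' hxy hyfx


/-! ### The backward (construction) direction -/

set_option maxHeartbeats 1600000 in
lemma backward_dir (n : ℕ) (hn : 0 < n) (p : ZMod (2 * n) → Pt)
    (hccw : OnCircleCCW (2 * n) p) (μ : ℝ)
    (H : ∀ j : ZMod (2 * n), ∃ k : ℕ, k < n ∧
      μ ≤ dist (p (j + (k : ZMod (2 * n)))) (p (j + (k : ZMod (2 * n)) + 1))) :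
    ∃ σ, IsNCM (2 * n) p σ ∧ ∀ i, μ ≤ dist (p i) (p (σ i)) := by
  classical
  haveI : NeZero (2 * n) := ⟨by omega⟩
  obtain ⟨⟨O, r, hr, hOr⟩, hpinj, hp3⟩ := hccw
  obtain ⟨k0, hk0n, hk0⟩ := H 0
  set base : ZMod (2*n) := (k0 : ZMod (2*n)) + 1 with hbase
  set ι : ℕ → ZMod (2*n) := fun x => base + (x : ZMod (2*n)) with hι
  set isLong : ℕ → Prop := fun e => μ ≤ dist (p (ι e)) (p (ι e + 1)) with hisLong
  have hival : ∀ x : ℕ, x < (2*n) → (ι x - base).val = x := by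
    intro x hx
    simp only [hι]
    rw [add_sub_cancel_left]
    exact ZMod.val_natCast_of_lt hx
  have hisurj : ∀ z : ZMod (2*n), ι ((z - base).val) = z := by
    intro z
    simp only [hι]
    rw [ZMod.natCast_rightInverse (z - base)]
    ring
  have hιadd : ∀ x k : ℕ, ι x + (k : ZMod (2*n)) = ι (x + k) := by
    intro x k
    simp only [hι]
    push_cast
    ring
  have hιone : ∀ x : ℕ, ι x + 1 = ι (x + 1) := by
    intro x
    simp only [hι]
    push_cast
    ring
  have hιinj : ∀ x y : ℕ, x < (2*n) → y < (2*n) → ι x = ι y → x = y := by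
    intro x y hx hy h
    have := congrArg (fun z => (z - base).val) h
    rw [hival x hx, hival y hy] at this
    exact this
  -- the wrap-around edge is long
  have hwrap : (((2*n) - 1 : ℕ) : ZMod (2*n)) + 1 = 0 := by
    have h2 : (((2*n) - 1 : ℕ) : ZMod (2*n)) + 1 = (((2*n) - 1 + 1 : ℕ) : ZMod (2*n)) := by push_cast; ring
    rw [h2, (by omega : (2*n) - 1 + 1 = (2*n)), ZMod.natCast_self]
  have hcutE : ι ((2*n) - 1) = (k0 : ZMod (2*n)) := by
    simp only [hι, hbase]
    linear_combination hwrap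
  have hcutF : ι ((2*n) - 1) + 1 = ι 0 := by
    simp only [hι]
    push_cast
    linear_combination hwrap
  have hcutbase : ι 0 = (k0 : ZMod (2*n)) + 1 := by
    simp only [hι, hbase]; push_cast; ring
  have hcut : isLong ((2*n) - 1) := by
    simp only [hisLong]
    rw [hcutF, hcutE, hcutbase]
    simpa [zero_add] using hk0
  -- the block colouring
  set col : ℕ → ℕ := fun x => ((Finset.range x).filter isLong).card with hcol
  have hcolsub : ∀ x y : ℕ, x ≤ y →
      (Finset.range x).filter isLong ⊆ (Finset.range y).filter isLong :=
    fun x y h => filter_subset_filter _ (range_subset_range.2 h)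
  have hcol_long : ∀ x y : ℕ, x < y → col x ≠ col y → ∃ e, x ≤ e ∧ e < y ∧ isLong e := by
    intro x y hxy hc
    by_contra hno
    push_neg at hno
    apply hc
    simp only [hcol]
    congr 1
    apply Finset.Subset.antisymm (hcolsub x y hxy.le)
    intro e he
    rw [mem_filter, mem_range] at he ⊢
    refine ⟨?_, he.2⟩
    by_contra hx
    push_neg at hx
    exact hno e hx (by omega) he.2
  have hcol_short : ∀ x y : ℕ, x ≤ y → col x = col y → ∀ e, x ≤ e → e < y → ¬ isLong e := by
    intro x y hxy hc e hxe hey hL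
    have hsub := hcolsub x y hxy
    have heq : (Finset.range x).filter isLong = (Finset.range y).filter isLong :=
      Finset.eq_of_subset_of_card_le hsub (le_of_eq hc.symm)
    have : e ∈ (Finset.range y).filter isLong := mem_filter.2 ⟨mem_range.2 hey, hL⟩
    rw [← heq, mem_filter, mem_range] at this
    omega
  -- colour classes have size at most n
  have hcls : ∀ c, ((Finset.range (2*n)).filter (fun x => col x = c)).card ≤ n := by
    intro c
    by_contra hbig
    push_neg at hbig
    set cls := (Finset.range (2*n)).filter (fun x => col x = c) with hclsdef
    have hclsne : cls.Nonempty := card_pos.1 (by omega)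
    set u := cls.min' hclsne with hu
    set v := cls.max' hclsne with hvv
    have huc : u ∈ cls := cls.min'_mem hclsne
    have hvc : v ∈ cls := cls.max'_mem hclsne
    have hsubIcc : cls ⊆ Finset.Icc u v := by
      intro w hw
      rw [Finset.mem_Icc]
      exact ⟨cls.min'_le w hw, cls.le_max' w hw⟩
    have hcard2 := card_le_card hsubIcc
    rw [Nat.card_Icc] at hcard2
    have huv : u + n ≤ v := by omega
    rw [hclsdef, mem_filter] at huc hvc
    have hcolequv : col u = col v := huc.2.trans hvc.2.symm
    obtain ⟨k, hkn, hklong⟩ := H (ι u)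
    have : ι u + (k : ZMod (2*n)) = ι (u + k) := hιadd u k
    rw [this] at hklong
    have : isLong (u + k) := hklong
    exact hcol_short u v (by omega) hcolequv (u + k) (by omega) (by omega) this
  -- the abstract non-crossing matching
  obtain ⟨f, hf1, hf2, hf3, hf4, hf5⟩ := ncm_exists n (Finset.range (2*n)) col
    (by rw [card_range]) hcls
  set σ : ZMod (2*n) → ZMod (2*n) := fun z => ι (f ((z - base).val)) with hσ
  have hmemz : ∀ z : ZMod (2*n), (z - base).val ∈ Finset.range (2*n) :=
    fun z => mem_range.2 (ZMod.val_lt _)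
  have hσι : ∀ x : ℕ, x ∈ Finset.range (2*n) → σ (ι x) = ι (f x) := by
    intro x hx
    simp only [hσ]
    rw [hival x (mem_range.1 hx)]
  -- ccw facts through ι
  have hdetpos : ∀ x w y : ℕ, x < w → w < y → y < (2*n) →
      0 < det2 (p (ι w) - p (ι x)) (p (ι y) - p (ι x)) := by
    intro x w y h1 h2 h3
    exact ccw3_shift p hp3 base x w y h1 h2 h3
  -- distinctness of images
  have hιne : ∀ x y : ℕ, x < (2*n) → y < (2*n) → x ≠ y → p (ι x) ≠ p (ι y) := by
    intro x y hx hy hxy h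
    exact hxy (hιinj x y hx hy (hpinj h))
  -- chord length bound
  have hlenkey : ∀ x y : ℕ, x ∈ Finset.range (2*n) → y ∈ Finset.range (2*n) → x < y →
      col x ≠ col y → μ ≤ dist (p (ι x)) (p (ι y)) := by
    intro x y hxN' hyN' hxy hc
    have hxN := mem_range.1 hxN'
    have hyN := mem_range.1 hyN'
    obtain ⟨e, hxe, hey, helong⟩ := hcol_long x y hxy hc
    apply chord_long O (p (ι x)) (p (ι y)) (p (ι e)) (p (ι (e + 1))) (p (ι ((2*n) - 1))) (p (ι 0))
      r μ (hOr _) (hOr _) (hOr _) (hOr _) (hOr _) (hOr _)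
      (hιne x y hxN hyN (by omega))
    · -- C on the inner side
      rcases eq_or_lt_of_le hxe with h | h
      · rw [← h, sub_self, det2_zero_right]
      · have hd := hdetpos x e y h hey hyN
        rw [det2_swap]
        linarith
    · -- D similar
      rcases eq_or_lt_of_le (by omega : e + 1 ≤ y) with h | h
      · rw [h, det2_self]
      · have hd := hdetpos x (e + 1) y (by omega) h hyN
        rw [det2_swap]
        linarith
    · -- E on the outer side
      rcases eq_or_lt_of_le (by omega : y ≤ (2*n) - 1) with h | h
      · rw [h, det2_self]
      · exact le_of_lt (hdetpos x y ((2*n) - 1) hxy h (by omega))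
    · -- F on the outer side
      rcases Nat.eq_zero_or_pos x with h | h
      · rw [h, sub_self, det2_zero_right]
      · have hd := hdetpos 0 x y h hxy hyN
        rw [det2_cyc] at hd
        exact le_of_lt hd
    · -- inner edge long
      have := helong
      simp only [hisLong] at this
      rwa [hιone e] at this
    · -- wrap edge long
      have := hcut
      simp only [hisLong] at this
      rwa [hcutF] at this
  -- the core disjointness for normalised pairs
  have hcore : ∀ x u : ℕ, x ∈ Finset.range (2*n) → u ∈ Finset.range (2*n) →
      x < f x → u < f u → x < u → u ≠ f x →
      segment ℝ (p (ι x)) (p (ι (f x))) ∩ segment ℝ (p (ι u)) (p (ι (f u))) = ∅ := by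
    intro x u hxN huN hxfx hufu hxu hufx
    have hfxN := mem_range.1 (hf1 x hxN)
    have hfuN := mem_range.1 (hf1 u huN)
    rcases lt_or_gt_of_ne hufx with hcase | hcase
    · -- nested : x < u < f u < f x
      obtain ⟨h1, h2⟩ := hf5 x hxN u huN hxu hcase
      have d1 : 0 < det2 (p (ι x) - p (ι (f x))) (p (ι u) - p (ι (f x))) := by
        have h := hdetpos x u (f x) hxu hcase hfxN
        rw [det2_cyc] at h
        rw [det2_cyc] at h
        exact h
      have d2 : 0 < det2 (p (ι x) - p (ι (f x))) (p (ι (f u)) - p (ι (f x))) := by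
        have h := hdetpos x (f u) (f x) h1 h2 hfxN
        rw [det2_cyc] at h
        rw [det2_cyc] at h
        exact h
      have := seg_disjoint (p (ι (f x))) (p (ι x)) (p (ι u)) (p (ι (f u))) d1 d2
      rwa [segment_symm ℝ (p (ι (f x))) (p (ι x))] at this
    · -- disjoint : x < f x < u < f u
      have d1 : 0 < det2 (p (ι (f x)) - p (ι x)) (p (ι u) - p (ι x)) :=
        hdetpos x (f x) u hxfx hcase (mem_range.1 huN)
      have d2 : 0 < det2 (p (ι (f x)) - p (ι x)) (p (ι (f u)) - p (ι x)) :=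
        hdetpos x (f x) (f u) hxfx (lt_trans hcase hufu) hfuN
      exact seg_disjoint (p (ι x)) (p (ι (f x))) (p (ι u)) (p (ι (f u))) d1 d2
  -- normalisation
  have hnorm : ∀ x : ℕ, x ∈ Finset.range (2*n) → ∃ x' : ℕ, x' ∈ Finset.range (2*n) ∧ x' < f x' ∧
      segment ℝ (p (ι x)) (p (ι (f x))) = segment ℝ (p (ι x')) (p (ι (f x'))) ∧
      (x' = x ∨ x' = f x) ∧ (f x' = x ∨ f x' = f x) := by
    intro x hx
    rcases lt_or_gt_of_ne (Ne.symm (hf3 x hx)) with h | h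
    · exact ⟨x, hx, h, rfl, Or.inl rfl, Or.inr rfl⟩
    · refine ⟨f x, hf1 x hx, ?_, ?_, Or.inr rfl, Or.inl (hf2 x hx)⟩
      · rw [hf2 x hx]; exact h
      · rw [hf2 x hx, segment_symm]
  have hpairdisj : ∀ x u : ℕ, x ∈ Finset.range (2*n) → u ∈ Finset.range (2*n) →
      u ≠ x → u ≠ f x → f u ≠ x → f u ≠ f x →
      segment ℝ (p (ι x)) (p (ι (f x))) ∩ segment ℝ (p (ι u)) (p (ι (f u))) = ∅ := by
    intro x u hxN huN h1 h2 h3 h4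
    obtain ⟨x', hx'N, hx'lt, hx'seg, hx'or, hfx'or⟩ := hnorm x hxN
    obtain ⟨u', hu'N, hu'lt, hu'seg, hu'or, hfu'or⟩ := hnorm u huN
    rw [hx'seg, hu'seg]
    have hne1 : u' ≠ x' := by
      rcases hu'or with h' | h' <;> rcases hx'or with h | h <;> rw [h', h] <;>
        first | exact h1 | exact h2 | exact h3 | exact h4
    have hne2 : u' ≠ f x' := by
      rcases hu'or with h' | h' <;> rcases hfx'or with h | h <;> rw [h', h] <;>
        first | exact h1 | exact h2 | exact h3 | exact h4
    have hne3 : x' ≠ f u' := by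
      rcases hx'or with h | h <;> rcases hfu'or with h' | h' <;> rw [h, h'] <;>
        first | exact h1.symm | exact h2.symm | exact h3.symm | exact h4.symm
    rcases lt_trichotomy x' u' with hlt | heq | hgt
    · exact hcore x' u' hx'N hu'N hx'lt hu'lt hlt hne2
    · exact absurd heq.symm hne1
    · rw [Set.inter_comm]
      exact hcore u' x' hu'N hx'N hu'lt hx'lt hgt hne3
  refine ⟨σ, ⟨?_, ?_, ?_⟩, ?_⟩
  · -- involution
    intro z
    have hz : (z - base).val ∈ Finset.range (2*n) := hmemz z
    have e1 : σ z = ι (f ((z - base).val)) := rfl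
    rw [e1, hσι _ (hf1 _ hz), hf2 _ hz, hisurj z]
  · -- no fixed points
    intro z h
    have hz : (z - base).val ∈ Finset.range (2*n) := hmemz z
    have e1 : σ z = ι (f ((z - base).val)) := rfl
    rw [e1] at h
    have h2 : ι (f ((z - base).val)) = ι ((z - base).val) := by
      rw [h]; exact (hisurj z).symm
    have := hιinj _ _ (mem_range.1 (hf1 _ hz)) (mem_range.1 hz) h2
    exact hf3 _ hz this
  · -- segments disjoint
    intro i j hji hjσi
    set x := (i - base).val with hx
    set u := (j - base).val with hu
    have hxN := hmemz i
    have huN := hmemz j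
    have hi : ι x = i := hisurj i
    have hj : ι u = j := hisurj j
    have hσi : σ i = ι (f x) := rfl
    have hσj : σ j = ι (f u) := rfl
    rw [hσi, hσj, ← hi, ← hj]
    apply hpairdisj x u hxN huN
    · intro h; exact hji (by rw [← hj, h, hi])
    · intro h; exact hjσi (by rw [← hj, h, hσi])
    · intro h
      apply hjσi
      have : f (f u) = f x := congrArg f h
      rw [hf2 u huN] at this
      rw [← hj, this, hσi]
    · intro h
      apply hji
      have : f (f u) = f (f x) := congrArg f h
      rw [hf2 u huN, hf2 x hxN] at this
      rw [← hj, this, hi]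
  · -- all edges long
    intro z
    set x := (z - base).val with hx
    have hxN := hmemz z
    have hz : ι x = z := hisurj z
    have hσz : σ z = ι (f x) := rfl
    rw [hσz, ← hz]
    rcases lt_or_gt_of_ne (Ne.symm (hf3 x hxN)) with h | h
    · exact hlenkey x (f x) hxN (hf1 x hxN) h (fun hh => hf4 x hxN hh.symm)
    · rw [dist_comm]
      exact hlenkey (f x) x (hf1 x hxN) hxN h (hf4 x hxN)


set_option maxHeartbeats 1600000 in
lemma forward_dir (n : ℕ) (hn : 0 < n) (p : ZMod (2 * n) → Pt)
    (hccw : OnCircleCCW (2 * n) p) (μ : ℝ) (σ : ZMod (2 * n) → ZMod (2 * n))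
    (hncm : IsNCM (2 * n) p σ) (hlen : ∀ i, μ ≤ dist (p i) (p (σ i)))
    (j : ZMod (2 * n))
    (hshort : ∀ k : ℕ, k < n →
      dist (p (j + (k : ZMod (2 * n)))) (p (j + (k : ZMod (2 * n)) + 1)) < μ) :
    False := by
  classical
  haveI : NeZero (2 * n) := ⟨by omega⟩
  obtain ⟨hinv, hfpf, hdisj⟩ := hncm
  obtain ⟨_, hpinj, hp3⟩ := hccw
  have hvinj : ∀ k1 k2 : ℕ, k1 < 2 * n → k2 < 2 * n →
      j + (k1 : ZMod (2 * n)) = j + (k2 : ZMod (2 * n)) → k1 = k2 := by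
    intro k1 k2 h1 h2 h
    have h' : (k1 : ZMod (2 * n)) = (k2 : ZMod (2 * n)) := by
      exact add_left_cancel h
    have := congrArg ZMod.val h'
    rwa [ZMod.val_natCast_of_lt h1, ZMod.val_natCast_of_lt h2] at this
  have hdet : ∀ x w y : ℕ, x < w → w < y → y < 2 * n →
      0 < det2 (p (j + (w : ZMod (2 * n))) - p (j + (x : ZMod (2 * n))))
        (p (j + (y : ZMod (2 * n))) - p (j + (x : ZMod (2 * n)))) := by
    intro x w y h1 h2 h3
    exact ccw3_shift p hp3 j x w y h1 h2 h3
  -- pigeonhole : some pair inside the window is matched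
  set S : Finset (ZMod (2 * n)) :=
    (Finset.range (n + 1)).image (fun k : ℕ => j + (k : ZMod (2 * n))) with hS
  have hcardS : S.card = n + 1 := by
    rw [hS, Finset.card_image_of_injOn, Finset.card_range]
    intro k1 h1 k2 h2 h
    simp only [Finset.coe_range, Set.mem_Iio] at h1 h2
    exact hvinj k1 k2 (by omega) (by omega) h
  have hex : ∃ a ∈ S, σ a ∈ S := by
    by_contra hno
    push_neg at hno
    have hinj : Set.InjOn σ ↑S := by
      intro a _ b _ h
      have := congrArg σ h
      rwa [hinv, hinv] at this
    have hdisjST : Disjoint S (S.image σ) := by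
      rw [Finset.disjoint_left]
      intro t htS htI
      obtain ⟨a, haS, rfl⟩ := Finset.mem_image.1 htI
      exact hno a haS htS
    have hcard : (S ∪ S.image σ).card = 2 * n + 2 := by
      rw [Finset.card_union_of_disjoint hdisjST, Finset.card_image_of_injOn hinj, hcardS]
      omega
    have hle := Finset.card_le_univ (S ∪ S.image σ)
    rw [hcard] at hle
    have : Fintype.card (ZMod (2 * n)) = 2 * n := ZMod.card (2 * n)
    omega
  obtain ⟨a, haS, hσaS⟩ := hex
  obtain ⟨k1, hk1, rfl⟩ := Finset.mem_image.1 haS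
  obtain ⟨k2, hk2, hk2e⟩ := Finset.mem_image.1 hσaS
  rw [Finset.mem_range] at hk1 hk2
  -- a matched pair within the window, minimal gap
  have hPex : ∃ d : ℕ, ∃ k : ℕ, k + d ≤ n ∧ 0 < d ∧
      σ (j + (k : ZMod (2 * n))) = j + ((k + d : ℕ) : ZMod (2 * n)) := by
    have hk12 : k1 ≠ k2 := by
      intro h
      subst h
      exact hfpf _ hk2e.symm
    rcases lt_or_gt_of_ne hk12 with h | h
    · refine ⟨k2 - k1, k1, by omega, by omega, ?_⟩
      rw [(by omega : k1 + (k2 - k1) = k2)]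
      exact hk2e.symm
    · refine ⟨k1 - k2, k2, by omega, by omega, ?_⟩
      rw [(by omega : k2 + (k1 - k2) = k1)]
      have := hinv (j + (k1 : ZMod (2 * n)))
      rw [← hk2e] at this
      exact this
  set d0 := Nat.find hPex with hd0
  obtain ⟨k, hkd, hd0pos, hσk⟩ := Nat.find_spec hPex
  by_cases hd1 : d0 = 1
  · -- a short boundary edge would be a matching edge
    have h1 := hlen (j + (k : ZMod (2 * n)))
    rw [hσk] at h1
    have h2 := hshort k (by omega)
    have he : ((k + d0 : ℕ) : ZMod (2 * n)) = (k : ZMod (2 * n)) + 1 := by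
      rw [hd1]; push_cast; ring
    rw [he, ← add_assoc] at h1
    linarith
  · -- gap at least 2 : the next point must be matched inside, else crossing
    have hd2 : 2 ≤ d0 := by omega
    set m := k + 1 with hm
    set c := σ (j + (m : ZMod (2 * n))) with hc
    set e := (c - j).val with he
    have heN : e < 2 * n := ZMod.val_lt _
    have hce : j + (e : ZMod (2 * n)) = c := by
      rw [he, ZMod.natCast_rightInverse (c - j)]
      ring
    have he_m : e ≠ m := by
      intro h
      apply hfpf (j + (m : ZMod (2 * n)))
      rw [← hc, ← hce, h]
    have he_k : e ≠ k := by
      intro h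
      have h1 : σ (j + (m : ZMod (2 * n))) = j + (k : ZMod (2 * n)) := by
        rw [← hc, ← hce, h]
      have h2 := hinv (j + (m : ZMod (2 * n)))
      rw [h1, hσk] at h2
      have := hvinj m (k + d0) (by omega) (by omega) h2.symm
      omega
    have he_k2 : e ≠ k + d0 := by
      intro h
      have h1 : σ (j + (m : ZMod (2 * n))) = σ (j + (k : ZMod (2 * n))) := by
        rw [← hc, ← hce, h, hσk]
      have h2 := congrArg σ h1
      rw [hinv, hinv] at h2
      have := hvinj m k (by omega) (by omega) h2
      omega
    have htri : e < k ∨ (k < e ∧ e < k + d0) ∨ k + d0 < e := by omega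
    rcases htri with hcase | hcase | hcase
    · -- e < k : crossing with quadruple (e, k, m, k+d0)
      have hne := seg_cross (p (j + (e : ZMod (2 * n)))) (p (j + (k : ZMod (2 * n))))
        (p (j + (m : ZMod (2 * n)))) (p (j + ((k + d0 : ℕ) : ZMod (2 * n))))
        (hdet e k m hcase (by omega) (by omega))
        (hdet e k (k + d0) hcase (by omega) (by omega))
        (hdet e m (k + d0) (by omega) (by omega) (by omega))
        (hdet k m (k + d0) (by omega) (by omega) (by omega))
      have hemp := hdisj (j + (k : ZMod (2 * n))) (j + (m : ZMod (2 * n)))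
        (by
          intro h
          have := hvinj m k (by omega) (by omega) h
          omega)
        (by
          intro h
          rw [hσk] at h
          have := hvinj m (k + d0) (by omega) (by omega) h
          omega)
      rw [hσk, ← hc, ← hce] at hemp
      rw [segment_symm ℝ (p (j + (e : ZMod (2 * n)))) (p (j + (m : ZMod (2 * n)))),
        Set.inter_comm] at hne
      rw [hemp] at hne
      exact Set.not_nonempty_empty hne
    · -- k < e < k + d0 : contradicts minimality
      have hme : m < e := by omega
      have hP : ∃ kk : ℕ, kk + (e - m) ≤ n ∧ 0 < e - m ∧
          σ (j + (kk : ZMod (2 * n))) = j + ((kk + (e - m) : ℕ) : ZMod (2 * n)) := by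
        refine ⟨m, by omega, by omega, ?_⟩
        rw [(by omega : m + (e - m) = e), ← hc, ← hce]
      have := Nat.find_min hPex (show e - m < d0 by omega) hP
      exact this
    · -- k + d0 < e : crossing with quadruple (k, m, k+d0, e)
      have hne := seg_cross (p (j + (k : ZMod (2 * n)))) (p (j + (m : ZMod (2 * n))))
        (p (j + ((k + d0 : ℕ) : ZMod (2 * n)))) (p (j + (e : ZMod (2 * n))))
        (hdet k m (k + d0) (by omega) (by omega) (by omega))
        (hdet k m e (by omega) (by omega) heN)
        (hdet k (k + d0) e (by omega) (by omega) heN)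
        (hdet m (k + d0) e (by omega) (by omega) heN)
      have hemp := hdisj (j + (k : ZMod (2 * n))) (j + (m : ZMod (2 * n)))
        (by
          intro h
          have := hvinj m k (by omega) (by omega) h
          omega)
        (by
          intro h
          rw [hσk] at h
          have := hvinj m (k + d0) (by omega) (by omega) h
          omega)
      rw [hσk, ← hc, ← hce] at hemp
      rw [hemp] at hne
      exact Set.not_nonempty_empty hne

/-- For `2n` distinct points on a common circle in counterclockwise order and
`μ > 0`, a perfect non-crossing matching with all edges of length at least `μ` exists iff there
are no `n` cyclically consecutive boundary edges all of length strictly less than `μ`. -/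
theorem matching_above_threshold_iff (n : ℕ) (hn : 0 < n) (p : ZMod (2 * n) → Pt)
    (hccw : OnCircleCCW (2 * n) p) (μ : ℝ) (hμ : 0 < μ) :
    (∃ σ, IsNCM (2 * n) p σ ∧ ∀ i, μ ≤ dist (p i) (p (σ i))) ↔
      ¬ ∃ j : ZMod (2 * n), ∀ k : ℕ, k < n →
          dist (p (j + (k : ZMod (2 * n)))) (p (j + (k : ZMod (2 * n)) + 1)) < μ := by
  constructor
  · rintro ⟨σ, hncm, hlen⟩ ⟨j, hshort⟩
    exact forward_dir n hn p hccw μ σ hncm hlen j hshort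
  · intro h
    apply backward_dir n hn p hccw μ
    intro j
    push_neg at h
    obtain ⟨k, hk, hge⟩ := h j
    exact ⟨k, hk, hge⟩
end
end

section
/- Let p_0, p_1, …, p_{2n−1} be 2n distinct points on a common circle in counterclockwise order. Then the maximum, over all perfect non-crossing matchings M of the points, of the minimum edge length of M equals the minimum over j ∈ {0,1,…,2n−1} of the maximum of dist(p_i, p_{i+1}) over the n consecutive boundary edges i = j, j+1, …, j+n−1 (indices modulo 2n). -/
noncomputable section

namespace Aux

lemma apply_sub (u v : Pt) (i : Fin 2) : (u - v) i = u i - v i := rfl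
lemma apply_add (u v : Pt) (i : Fin 2) : (u + v) i = u i + v i := rfl
lemma apply_smul (t : ℝ) (u : Pt) (i : Fin 2) : (t • u) i = t * u i := rfl

lemma det2_eval (u v : Pt) : det2 u v = u 0 * v 1 - u 1 * v 0 := rfl

lemma det2_swap (u v : Pt) : det2 u v = - det2 v u := by simp [det2]; ring

lemma det2_cyc (x y z : Pt) : det2 (y - x) (z - x) = det2 (z - y) (x - y) := by
  simp only [det2, apply_sub]; ring

lemma det2_self (u : Pt) : det2 u u = 0 := by simp [det2]; ring

lemma det2_line (w a b z : Pt) (h : det2 w (b - a) = 0) :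
    det2 w (z - b) = det2 w (z - a) := by
  simp only [det2, apply_sub] at *; linarith

lemma dist_sq (x y : Pt) : dist x y ^ 2 = (x 0 - y 0)^2 + (x 1 - y 1)^2 := by
  rw [EuclideanSpace.dist_eq, Real.sq_sqrt]
  · simp [Fin.sum_univ_two, Real.dist_eq, sq_abs]
  · positivity

lemma dist_le_dist (x y z w : Pt)
    (h : (x 0 - y 0)^2 + (x 1 - y 1)^2 ≤ (z 0 - w 0)^2 + (z 1 - w 1)^2) :
    dist x y ≤ dist z w := by
  rw [EuclideanSpace.dist_eq, EuclideanSpace.dist_eq]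
  apply Real.sqrt_le_sqrt
  simpa [Fin.sum_univ_two, Real.dist_eq, sq_abs] using h

lemma seg_coord {C D x : Pt} (h : x ∈ segment ℝ C D) :
    ∃ s t : ℝ, 0 ≤ s ∧ 0 ≤ t ∧ s + t = 1 ∧
      (∀ i, x i = s * C i + t * D i) := by
  obtain ⟨s, t, hs, ht, hst, rfl⟩ := h
  exact ⟨s, t, hs, ht, hst, fun i => rfl⟩

lemma det2_seg {A B C D x : Pt} (h : x ∈ segment ℝ C D) :
    ∃ s t : ℝ, 0 ≤ s ∧ 0 ≤ t ∧ s + t = 1 ∧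
      det2 (B - A) (x - A) = s * det2 (B - A) (C - A) + t * det2 (B - A) (D - A) := by
  obtain ⟨s, t, hs, ht, hst, hx⟩ := seg_coord h
  refine ⟨s, t, hs, ht, hst, ?_⟩
  have hxa : ∀ i, x i - A i = s * (C i - A i) + t * (D i - A i) := fun i => by
    rw [hx i]; linear_combination A i * hst
  simp only [det2, apply_sub]
  rw [hxa 0, hxa 1]; ring

/-- Two points strictly on the negative side of the line through A, B:
their segment misses segment A B. -/
lemma disjoint_of_sameside {A B C D : Pt}
    (hC : det2 (B - A) (C - A) < 0) (hD : det2 (B - A) (D - A) < 0) :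
    segment ℝ C D ∩ segment ℝ A B = ∅ := by
  ext x
  simp only [Set.mem_inter_iff, Set.mem_empty_iff_false, iff_false, not_and]
  intro h1 h2
  obtain ⟨s, t, hs, ht, hst, e1⟩ := det2_seg (A := A) (B := B) h1
  obtain ⟨s', t', hs', ht', hst', e2⟩ := det2_seg (A := A) (B := B) h2
  have hz : det2 (B - A) (A - A) = 0 := by simp [det2, apply_sub]
  have hw : det2 (B - A) (B - A) = 0 := det2_self _
  rw [hz, hw] at e2
  have e2' : det2 (B - A) (x - A) = 0 := by rw [e2]; ring
  rw [e2'] at e1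
  rcases eq_or_lt_of_le hs with h | h
  · have hst1 : t = 1 := by linarith
    rw [← h, hst1] at e1; simp at e1; linarith
  · have k1 : s * det2 (B - A) (C - A) < 0 := mul_neg_of_pos_of_neg h hC
    have k2 : t * det2 (B - A) (D - A) ≤ 0 := mul_nonpos_of_nonneg_of_nonpos ht hD.le
    linarith

lemma line_param (w0 w1 z0 z1 : ℝ) (hW : 0 < w0^2 + w1^2)
    (h : w0 * z1 - w1 * z0 = 0) : ∃ t : ℝ, z0 = t * w0 ∧ z1 = t * w1 := by
  refine ⟨(w0 * z0 + w1 * z1) / (w0^2 + w1^2), ?_, ?_⟩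
  · field_simp
    linear_combination (-(w1)) * h
  · field_simp
    linear_combination (w0) * h

lemma t_bounds (a0 a1 w0 w1 t R : ℝ) (hW : 0 < w0^2 + w1^2)
    (h1 : a0^2 + a1^2 = R) (h2 : (a0+w0)^2 + (a1+w1)^2 = R)
    (h3 : (a0 + t*w0)^2 + (a1 + t*w1)^2 ≤ R) : 0 ≤ t ∧ t ≤ 1 := by
  have h4 : 2*(a0*w0 + a1*w1) + (w0^2 + w1^2) = 0 := by linear_combination h2 - h1
  have key : (t^2 - t) * (w0^2 + w1^2) ≤ 0 := by
    have e : (t^2 - t)*(w0^2+w1^2)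
        = ((a0 + t*w0)^2 + (a1 + t*w1)^2) - (a0^2+a1^2)
          - t*(2*(a0*w0+a1*w1) + (w0^2+w1^2)) := by ring
    rw [e, h4]
    simp only [mul_zero]
    linarith
  constructor
  · rcases le_or_gt 0 t with h | h
    · exact h
    · exfalso
      have hp : 0 < t^2 - t := by nlinarith
      nlinarith [mul_pos hp hW]
  · rcases le_or_gt t 1 with h | h
    · exact h
    · exfalso
      have hp : 0 < t^2 - t := by nlinarith
      nlinarith [mul_pos hp hW]

set_option maxHeartbeats 1000000 in
lemma cross_nonempty {c : Pt} {r : ℝ} {A B C D : Pt}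
    (hA : dist A c = r) (hB : dist B c = r) (hC : dist C c = r) (hD : dist D c = r)
    (hAB : A ≠ B)
    (h1 : det2 (B - A) (C - A) < 0) (h2 : 0 < det2 (B - A) (D - A)) :
    (segment ℝ A B ∩ segment ℝ C D).Nonempty := by
  obtain ⟨fC, hfC⟩ : ∃ v : ℝ, det2 (B - A) (C - A) = v := ⟨_, rfl⟩
  obtain ⟨fD, hfD⟩ : ∃ v : ℝ, det2 (B - A) (D - A) = v := ⟨_, rfl⟩
  rw [hfC] at h1
  rw [hfD] at h2
  have hden : fC - fD < 0 := by linarith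
  obtain ⟨lam, hlam⟩ : ∃ l : ℝ, l = fC / (fC - fD) := ⟨_, rfl⟩
  have hmul : lam * (fC - fD) = fC := by
    rw [hlam]; exact div_mul_cancel₀ _ hden.ne
  have hl0 : 0 ≤ lam := by nlinarith
  have hl1 : lam ≤ 1 := by nlinarith
  obtain ⟨x, hxdef⟩ : ∃ x : Pt, x = (1 - lam) • C + lam • D := ⟨_, rfl⟩
  have hxseg : x ∈ segment ℝ C D := ⟨1 - lam, lam, by linarith, hl0, by ring, hxdef.symm⟩
  have hxi : ∀ i, x i = (1 - lam) * C i + lam * D i := fun i => by rw [hxdef]; rfl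
  have hfx : det2 (B - A) (x - A) = 0 := by
    have expand : det2 (B - A) (x - A)
        = (1 - lam) * det2 (B - A) (C - A) + lam * det2 (B - A) (D - A) := by
      simp only [det2, apply_sub]
      rw [hxi 0, hxi 1]; ring
    rw [expand, hfC, hfD]
    linear_combination (-1 : ℝ) * hmul
  have hball : dist x c ≤ r := by
    have hsub : segment ℝ C D ⊆ Metric.closedBall c r := by
      apply (convex_closedBall c r).segment_subset <;>
        simp [Metric.mem_closedBall, hC.le, hD.le]
    simpa [Metric.mem_closedBall] using hsub hxseg
  have hA2 : (A 0 - c 0)^2 + (A 1 - c 1)^2 = r^2 := by rw [← dist_sq, hA]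
  have hB2 : (B 0 - c 0)^2 + (B 1 - c 1)^2 = r^2 := by rw [← dist_sq, hB]
  have hWpos : 0 < (B 0 - A 0)^2 + (B 1 - A 1)^2 := by
    rcases lt_or_eq_of_le (by positivity : (0:ℝ) ≤ (B 0 - A 0)^2 + (B 1 - A 1)^2) with h | h
    · exact h
    · exfalso; apply hAB
      have h0 : B 0 - A 0 = 0 := by nlinarith [sq_nonneg (B 0 - A 0), sq_nonneg (B 1 - A 1)]
      have h1' : B 1 - A 1 = 0 := by nlinarith [sq_nonneg (B 0 - A 0), sq_nonneg (B 1 - A 1)]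
      ext i
      fin_cases i
      · show A 0 = B 0; linarith
      · show A 1 = B 1; linarith
  obtain ⟨t, ht0, ht1⟩ := line_param (B 0 - A 0) (B 1 - A 1) (x 0 - A 0) (x 1 - A 1) hWpos
    (by simpa only [det2, apply_sub] using hfx)
  have hx2 : (x 0 - c 0)^2 + (x 1 - c 1)^2 ≤ r^2 := by
    rw [← dist_sq x c]
    have hd0 : 0 ≤ dist x c := dist_nonneg
    nlinarith [hball]
  have hbounds : 0 ≤ t ∧ t ≤ 1 := by
    apply t_bounds (A 0 - c 0) (A 1 - c 1) (B 0 - A 0) (B 1 - A 1) t (r^2) hWpos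
    · exact hA2
    · calc (A 0 - c 0 + (B 0 - A 0))^2 + (A 1 - c 1 + (B 1 - A 1))^2
          = (B 0 - c 0)^2 + (B 1 - c 1)^2 := by ring
        _ = r^2 := hB2
    · calc (A 0 - c 0 + t*(B 0 - A 0))^2 + (A 1 - c 1 + t*(B 1 - A 1))^2
          = (x 0 - c 0)^2 + (x 1 - c 1)^2 := by rw [← ht0, ← ht1]; ring
        _ ≤ r^2 := hx2
  refine ⟨x, ⟨1 - t, t, by linarith [hbounds.2], hbounds.1, by ring, ?_⟩, hxseg⟩
  ext i
  show (1-t) * A i + t * B i = x i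
  have hzi : x i - A i = t * (B i - A i) := by
    fin_cases i
    · exact ht0
    · exact ht1
  linarith


lemma det2_zero_right (u : Pt) : det2 u 0 = 0 := by
  have h0 : (0 : Pt) 0 = 0 := rfl
  have h1 : (0 : Pt) 1 = 0 := rfl
  simp [det2, h0, h1]

lemma det2_neg_left (u v : Pt) : det2 (-u) v = - det2 u v := by
  have h0 : (-u) 0 = -(u 0) := rfl
  have h1 : (-u) 1 = -(u 1) := rfl
  simp [det2, h0, h1]; ring

lemma real_prod_ge {x y z : ℝ} (hx : x ≤ z) (hy : y ≤ z) (hz : z ≤ 0) : z^2 ≤ x*y := by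
  nlinarith [mul_nonneg (sub_nonneg.mpr hx) (sub_nonneg.mpr hy),
    mul_nonneg (neg_nonneg.mpr hz) (sub_nonneg.mpr hx),
    mul_nonneg (neg_nonneg.mpr hz) (sub_nonneg.mpr hy)]

lemma real_sq_ge {x z : ℝ} (hx : x ≤ z) (hz : z ≤ 0) : z^2 ≤ x^2 := by
  nlinarith [mul_nonneg (neg_nonneg.mpr hz) (sub_nonneg.mpr hx),
    mul_nonneg (sub_nonneg.mpr hx) (sub_nonneg.mpr hx)]

lemma real_prod_lb {u v s : ℝ} (hu : u^2 ≤ s) (hv : v^2 ≤ s) : -s ≤ u*v := by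
  nlinarith [sq_nonneg (u+v)]

set_option maxHeartbeats 4000000 in
lemma chord_core (a0 a1 b0 b1 p0 p1 q0 q1 r : ℝ)
    (hA2 : a0^2 + a1^2 = r^2) (hB2 : b0^2 + b1^2 = r^2)
    (hP2 : p0^2 + p1^2 = r^2) (hQ2 : q0^2 + q1^2 = r^2)
    (hW : 0 < (b0-a0)^2 + (b1-a1)^2)
    (h1 : (b0-a0)*(p1-a1) - (b1-a1)*(p0-a0) ≤ 0)
    (h2 : (b0-a0)*(q1-a1) - (b1-a1)*(q0-a0) ≤ 0)
    (h3 : 0 ≤ (b0-a0)*(0-a1) - (b1-a1)*(0-a0)) :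
    (p0-q0)^2 + (p1-q1)^2 ≤ (a0-b0)^2 + (a1-b1)^2 := by
  obtain ⟨w0, hw0⟩ : ∃ v : ℝ, b0 - a0 = v := ⟨_, rfl⟩
  obtain ⟨w1, hw1⟩ : ∃ v : ℝ, b1 - a1 = v := ⟨_, rfl⟩
  rw [hw0, hw1] at h1 h2 h3 hW
  have hDa : w0 * a1 - w1 * a0 ≤ 0 := by nlinarith [h3]
  have hDb : w0 * b1 - w1 * b0 = w0 * a1 - w1 * a0 := by
    rw [← hw0, ← hw1]; ring
  have hDp : w0 * p1 - w1 * p0 ≤ w0 * a1 - w1 * a0 := by nlinarith [h1]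
  have hDq : w0 * q1 - w1 * q0 ≤ w0 * a1 - w1 * a0 := by nlinarith [h2]
  have hLa : (w0 * a1 - w1 * a0)^2 + (w0 * a0 + w1 * a1)^2 = (w0^2 + w1^2) * r^2 := by
    linear_combination (w0^2 + w1^2) * hA2
  have hLp : (w0 * p1 - w1 * p0)^2 + (w0 * p0 + w1 * p1)^2 = (w0^2 + w1^2) * r^2 := by
    linear_combination (w0^2 + w1^2) * hP2
  have hLq : (w0 * q1 - w1 * q0)^2 + (w0 * q0 + w1 * q1)^2 = (w0^2 + w1^2) * r^2 := by
    linear_combination (w0^2 + w1^2) * hQ2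
  have hEab : (w0 * a0 + w1 * a1) + (w0 * b0 + w1 * b1) = 0 := by
    rw [← hw0, ← hw1]
    linear_combination hB2 - hA2
  have hprod1 : (w0 * a1 - w1 * a0)^2 ≤ (w0 * p1 - w1 * p0) * (w0 * q1 - w1 * q0) :=
    real_prod_ge hDp hDq hDa
  have hDp2 : (w0 * a1 - w1 * a0)^2 ≤ (w0 * p1 - w1 * p0)^2 := real_sq_ge hDp hDa
  have hDq2 : (w0 * a1 - w1 * a0)^2 ≤ (w0 * q1 - w1 * q0)^2 := real_sq_ge hDq hDa
  have hEp2 : (w0 * p0 + w1 * p1)^2 ≤ (w0^2 + w1^2) * r^2 - (w0 * a1 - w1 * a0)^2 := by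
    linarith [hLp, hDp2]
  have hEq2 : (w0 * q0 + w1 * q1)^2 ≤ (w0^2 + w1^2) * r^2 - (w0 * a1 - w1 * a0)^2 := by
    linarith [hLq, hDq2]
  have hprod2 : -((w0^2 + w1^2) * r^2 - (w0 * a1 - w1 * a0)^2)
      ≤ (w0 * p0 + w1 * p1) * (w0 * q0 + w1 * q1) := real_prod_lb hEp2 hEq2
  have hEab2 : (w0 * a0 + w1 * a1) * (w0 * b0 + w1 * b1)
      = -((w0^2 + w1^2) * r^2 - (w0 * a1 - w1 * a0)^2) := by
    have h5 : (w0 * b0 + w1 * b1) = -(w0 * a0 + w1 * a1) := by linarith [hEab]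
    rw [h5]
    linear_combination (-1 : ℝ) * hLa
  have hinner : (w0^2 + w1^2) * (a0 * b0 + a1 * b1) ≤ (w0^2 + w1^2) * (p0 * q0 + p1 * q1) := by
    have hida : (w0^2 + w1^2) * (a0 * b0 + a1 * b1)
        = (w0 * a1 - w1 * a0) * (w0 * b1 - w1 * b0)
          + (w0 * a0 + w1 * a1) * (w0 * b0 + w1 * b1) := by
      rw [← hw0, ← hw1]; ring
    have hidp : (w0^2 + w1^2) * (p0 * q0 + p1 * q1)
        = (w0 * p1 - w1 * p0) * (w0 * q1 - w1 * q0)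
          + (w0 * p0 + w1 * p1) * (w0 * q0 + w1 * q1) := by
      rw [← hw0, ← hw1]; ring
    rw [hida, hidp, hDb, hEab2, ← pow_two (w0 * a1 - w1 * a0)]
    linarith [hprod1, hprod2]
  have hpq : a0 * b0 + a1 * b1 ≤ p0 * q0 + p1 * q1 :=
    le_of_mul_le_mul_left hinner hW
  calc (p0-q0)^2 + (p1-q1)^2
      = (p0^2+p1^2) + (q0^2+q1^2) - 2*(p0*q0 + p1*q1) := by ring
    _ = 2*r^2 - 2*(p0*q0+p1*q1) := by rw [hP2, hQ2]; ring
    _ ≤ 2*r^2 - 2*(a0*b0+a1*b1) := by linarith [hpq]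
    _ = (a0^2+a1^2) + (b0^2+b1^2) - 2*(a0*b0+a1*b1) := by rw [hA2, hB2]; ring
    _ = (a0-b0)^2 + (a1-b1)^2 := by ring

/-- Chord comparison: if P, Q lie (weakly) on the side of line AB away from the center,
then the chord PQ is at most AB. -/
lemma chord_le {c : Pt} {r : ℝ} {A B P Q : Pt}
    (hA : dist A c = r) (hB : dist B c = r) (hP : dist P c = r) (hQ : dist Q c = r)
    (hne : A ≠ B)
    (h1 : det2 (B - A) (P - A) ≤ 0) (h2 : det2 (B - A) (Q - A) ≤ 0)
    (h3 : 0 ≤ det2 (B - A) (c - A)) : dist P Q ≤ dist A B := by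
  have hA2 : (A 0 - c 0)^2 + (A 1 - c 1)^2 = r^2 := by rw [← dist_sq, hA]
  have hB2 : (B 0 - c 0)^2 + (B 1 - c 1)^2 = r^2 := by rw [← dist_sq, hB]
  have hP2 : (P 0 - c 0)^2 + (P 1 - c 1)^2 = r^2 := by rw [← dist_sq, hP]
  have hQ2 : (Q 0 - c 0)^2 + (Q 1 - c 1)^2 = r^2 := by rw [← dist_sq, hQ]
  have hWpos : 0 < (B 0 - A 0)^2 + (B 1 - A 1)^2 := by
    rcases lt_or_eq_of_le (by positivity : (0:ℝ) ≤ (B 0 - A 0)^2 + (B 1 - A 1)^2) with h | h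
    · exact h
    · exfalso; apply hne
      have h0 : B 0 - A 0 = 0 := by nlinarith [sq_nonneg (B 0 - A 0), sq_nonneg (B 1 - A 1)]
      have h1' : B 1 - A 1 = 0 := by nlinarith [sq_nonneg (B 0 - A 0), sq_nonneg (B 1 - A 1)]
      ext i
      fin_cases i
      · show A 0 = B 0; linarith
      · show A 1 = B 1; linarith
  have e1 : det2 (B - A) (P - A)
      = ((B 0 - c 0) - (A 0 - c 0)) * ((P 1 - c 1) - (A 1 - c 1))
        - ((B 1 - c 1) - (A 1 - c 1)) * ((P 0 - c 0) - (A 0 - c 0)) := by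
    simp only [det2, apply_sub]; ring
  have e2 : det2 (B - A) (Q - A)
      = ((B 0 - c 0) - (A 0 - c 0)) * ((Q 1 - c 1) - (A 1 - c 1))
        - ((B 1 - c 1) - (A 1 - c 1)) * ((Q 0 - c 0) - (A 0 - c 0)) := by
    simp only [det2, apply_sub]; ring
  have e3 : det2 (B - A) (c - A)
      = ((B 0 - c 0) - (A 0 - c 0)) * (0 - (A 1 - c 1))
        - ((B 1 - c 1) - (A 1 - c 1)) * (0 - (A 0 - c 0)) := by
    simp only [det2, apply_sub]; ring
  rw [e1] at h1
  rw [e2] at h2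
  rw [e3] at h3
  have hW2 : 0 < ((B 0 - c 0) - (A 0 - c 0))^2 + ((B 1 - c 1) - (A 1 - c 1))^2 := by
    calc (0:ℝ) < (B 0 - A 0)^2 + (B 1 - A 1)^2 := hWpos
      _ = ((B 0 - c 0) - (A 0 - c 0))^2 + ((B 1 - c 1) - (A 1 - c 1))^2 := by ring
  have key := chord_core (A 0 - c 0) (A 1 - c 1) (B 0 - c 0) (B 1 - c 1)
    (P 0 - c 0) (P 1 - c 1) (Q 0 - c 0) (Q 1 - c 1) r hA2 hB2 hP2 hQ2 hW2 h1 h2 h3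
  apply dist_le_dist
  calc (P 0 - Q 0)^2 + (P 1 - Q 1)^2
      = ((P 0 - c 0) - (Q 0 - c 0))^2 + ((P 1 - c 1) - (Q 1 - c 1))^2 := by ring
    _ ≤ ((A 0 - c 0) - (B 0 - c 0))^2 + ((A 1 - c 1) - (B 1 - c 1))^2 := key
    _ = (A 0 - B 0)^2 + (A 1 - B 1)^2 := by ring

section Cyc

variable {N : ℕ} [NeZero N]

lemma cast_val (x : ZMod N) : ((x.val : ℕ) : ZMod N) = x := ZMod.natCast_rightInverse x

lemma val_lt (x : ZMod N) : x.val < N := ZMod.val_lt x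

lemma off_val (a : ZMod N) {s : ℕ} (hs : s < N) : ((a + (s : ZMod N)) - a).val = s := by
  rw [add_sub_cancel_left, ZMod.val_cast_of_lt hs]

lemma eq_add_off (a x : ZMod N) : x = a + (((x - a).val : ℕ) : ZMod N) := by
  rw [cast_val]; ring

lemma off_eq_zero {a x : ZMod N} : (x - a).val = 0 ↔ x = a := by
  rw [ZMod.val_eq_zero, sub_eq_zero]

lemma off_diff (a : ZMod N) {s t : ℕ} (hs : s < N) (ht : t < N) :
    ((a + (t : ZMod N)) - (a + (s : ZMod N))).val
      = if s ≤ t then t - s else t + N - s := by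
  have e : (a + (t : ZMod N)) - (a + (s : ZMod N)) = (t : ZMod N) - (s : ZMod N) := by ring
  rw [e]
  split_ifs with h
  · have e2 : (t : ZMod N) - (s : ZMod N) = ((t - s : ℕ) : ZMod N) := by
      rw [Nat.cast_sub h]
    rw [e2, ZMod.val_cast_of_lt (by omega)]
  · have e2 : (t : ZMod N) - (s : ZMod N) = ((t + N - s : ℕ) : ZMod N) := by
      rw [Nat.cast_sub (by omega), Nat.cast_add, ZMod.natCast_self, add_zero]
    rw [e2, ZMod.val_cast_of_lt (by omega)]

lemma off_neg (a b : ZMod N) (h : b ≠ a) : (a - b).val = N - (b - a).val := by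
  have hN : 0 < N := Nat.pos_of_ne_zero (NeZero.ne N)
  have h1 : 0 < (b - a).val := Nat.pos_of_ne_zero (fun hh => h (off_eq_zero.mp hh))
  have e : a - b = ((N - (b - a).val : ℕ) : ZMod N) := by
    rw [Nat.cast_sub (val_lt _).le, ZMod.natCast_self, cast_val]; ring
  rw [e, ZMod.val_cast_of_lt (by omega)]

/-- `x` lies strictly inside the counterclockwise arc from `a` to `b`. -/
def Btw (a x b : ZMod N) : Prop := 0 < (x - a).val ∧ (x - a).val < (b - a).val

lemma btw_iff (a : ZMod N) {s t : ℕ} (hs : s < N) (ht : t < N) :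
    Btw a (a + (s : ZMod N)) (a + (t : ZMod N)) ↔ 0 < s ∧ s < t := by
  unfold Btw
  rw [off_val a hs, off_val a ht]

lemma ne_of_off {a : ZMod N} {s t : ℕ} (hs : s < N) (ht : t < N) (hst : s ≠ t) :
    a + (s : ZMod N) ≠ a + (t : ZMod N) := by
  intro h
  apply hst
  have h1 := off_val a hs
  rw [h, off_val a ht] at h1
  omega

lemma btw_ne {a x b : ZMod N} (h : Btw a x b) : x ≠ a ∧ x ≠ b ∧ a ≠ b := by
  obtain ⟨h1, h2⟩ := h
  refine ⟨fun hh => ?_, fun hh => ?_, fun hh => ?_⟩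
  · rw [hh] at h1; simp at h1
  · rw [hh] at h1 h2; omega
  · rw [hh] at h2; simp [sub_self] at h2

lemma btw_cases {a b x : ZMod N} (hab : a ≠ b) (hxa : x ≠ a) (hxb : x ≠ b) :
    Btw a x b ∨ Btw b x a := by
  have hs : 0 < (x - a).val := Nat.pos_of_ne_zero (fun h => hxa (off_eq_zero.mp h))
  have ht : 0 < (b - a).val := Nat.pos_of_ne_zero (fun h => hab.symm (off_eq_zero.mp h))
  rcases lt_trichotomy ((x - a).val) ((b - a).val) with h | h | h
  · exact Or.inl ⟨hs, h⟩
  · exfalso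
    apply hxb
    conv_lhs => rw [eq_add_off a x]
    conv_rhs => rw [eq_add_off a b]
    rw [h]
  · right
    have e1 : (x - b).val = (x - a).val - (b - a).val := by
      conv_lhs => rw [eq_add_off a x, eq_add_off a b]
      rw [off_diff a (val_lt _) (val_lt _), if_pos h.le]
    have e2 : (a - b).val = N - (b - a).val := off_neg a b hab.symm
    have hxlt : (x - a).val < N := val_lt _
    exact ⟨by omega, by omega⟩

end Cyc

section Orient

variable {N : ℕ} [NeZero N] (p : ZMod N → Pt)

lemma btw_pos
    (hp : ∀ i j k : ZMod N, i.val < j.val → j.val < k.val →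
      0 < det2 (p j - p i) (p k - p i))
    {a x b : ZMod N} (h : Btw a x b) : 0 < det2 (p x - p a) (p b - p a) := by
  obtain ⟨h1, h2⟩ := h
  have hxa : x = a + (((x - a).val : ℕ) : ZMod N) := eq_add_off a x
  have hba : b = a + (((b - a).val : ℕ) : ZMod N) := eq_add_off a b
  set s := (x - a).val with hsdef
  set t := (b - a).val with htdef
  have hsN : s < N := val_lt _
  have htN : t < N := val_lt _
  have hvx : x.val = (a.val + s) % N := by rw [hxa, ZMod.val_add, ZMod.val_cast_of_lt hsN]
  have hvb : b.val = (a.val + t) % N := by rw [hba, ZMod.val_add, ZMod.val_cast_of_lt htN]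
  have haN : a.val < N := val_lt _
  rcases lt_or_ge (a.val + t) N with hcase | hcase
  · -- a.val < x.val < b.val
    have ex : x.val = a.val + s := by rw [hvx, Nat.mod_eq_of_lt (by omega)]
    have eb : b.val = a.val + t := by rw [hvb, Nat.mod_eq_of_lt (by omega)]
    exact hp a x b (by omega) (by omega)
  · rcases lt_or_ge (a.val + s) N with hcase2 | hcase2
    · -- b.val < a.val < x.val ; use triple (b, a, x)
      have ex : x.val = a.val + s := by rw [hvx, Nat.mod_eq_of_lt (by omega)]
      have eb : b.val = a.val + t - N := by
        rw [hvb, Nat.mod_eq_sub_mod (by omega), Nat.mod_eq_of_lt (by omega)]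
      have key := hp b a x (by omega) (by omega)
      rw [det2_cyc (p b) (p a) (p x)] at key
      exact key
    · -- x.val < b.val < a.val ; use triple (x, b, a)
      have ex : x.val = a.val + s - N := by
        rw [hvx, Nat.mod_eq_sub_mod (by omega), Nat.mod_eq_of_lt (by omega)]
      have eb : b.val = a.val + t - N := by
        rw [hvb, Nat.mod_eq_sub_mod (by omega), Nat.mod_eq_of_lt (by omega)]
      have key := hp x b a (by omega) (by omega)
      rw [det2_cyc (p x) (p b) (p a), det2_cyc (p b) (p a) (p x)] at key
      exact key

lemma btw_neg
    (hp : ∀ i j k : ZMod N, i.val < j.val → j.val < k.val →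
      0 < det2 (p j - p i) (p k - p i))
    {a x b : ZMod N} (h : Btw a x b) :
    det2 (p b - p a) (p x - p a) < 0 := by
  have := btw_pos p hp h
  rw [det2_swap] at this
  linarith

lemma btw_pos2
    (hp : ∀ i j k : ZMod N, i.val < j.val → j.val < k.val →
      0 < det2 (p j - p i) (p k - p i))
    {a x b : ZMod N} (h : Btw b x a) :
    0 < det2 (p b - p a) (p x - p a) := by
  have key := btw_pos p hp h
  rw [det2_cyc (p b) (p x) (p a), det2_cyc (p x) (p a) (p b)] at key
  exact key

end Orient


section ArcKeys

variable {N : ℕ} [NeZero N]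

lemma add_off_ne (a : ZMod N) {s : ℕ} (h0 : 0 < s) (hsN : s < N) : a + (s : ZMod N) ≠ a := by
  intro h
  have h1 := off_val a hsN
  rw [h, sub_self, ZMod.val_zero] at h1
  omega

lemma arc_key1 {x x' a b : ZMod N} (h1 : Btw x a x') (h2 : Btw x' b x) : Btw a x' b := by
  have hxx' : x' ≠ x := (btw_ne h1).2.2.symm
  obtain ⟨h1a, h1b⟩ := h1
  obtain ⟨h2a, h2b⟩ := h2
  have hv1 : (b - x').val
      = if (x' - x).val ≤ (b - x).val then (b - x).val - (x' - x).val
        else (b - x).val + N - (x' - x).val := by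
    conv_lhs => rw [eq_add_off x b, eq_add_off x x']
    exact off_diff x (val_lt _) (val_lt _)
  have hv2 : (x - x').val = N - (x' - x).val := off_neg x x' hxx'
  have hv3 : (x' - a).val
      = if (a - x).val ≤ (x' - x).val then (x' - x).val - (a - x).val
        else (x' - x).val + N - (a - x).val := by
    conv_lhs => rw [eq_add_off x x', eq_add_off x a]
    exact off_diff x (val_lt _) (val_lt _)
  have hv4 : (b - a).val
      = if (a - x).val ≤ (b - x).val then (b - x).val - (a - x).val
        else (b - x).val + N - (a - x).val := by
    conv_lhs => rw [eq_add_off x b, eq_add_off x a]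
    exact off_diff x (val_lt _) (val_lt _)
  rw [hv1] at h2a h2b
  rw [hv2] at h2b
  have l1 := val_lt (a - x)
  have l2 := val_lt (x' - x)
  have l3 := val_lt (b - x)
  constructor
  · rw [hv3]; split_ifs at * <;> omega
  · rw [hv3, hv4]; split_ifs at * <;> omega

lemma arc_key2 {x x' a b : ZMod N} (h1 : Btw x b x') (h2 : Btw x' a x) : Btw a x b := by
  have hxx' : x' ≠ x := (btw_ne h1).2.2.symm
  have hax : a ≠ x := (btw_ne h2).2.1
  obtain ⟨h1a, h1b⟩ := h1
  obtain ⟨h2a, h2b⟩ := h2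
  have hv1 : (a - x').val
      = if (x' - x).val ≤ (a - x).val then (a - x).val - (x' - x).val
        else (a - x).val + N - (x' - x).val := by
    conv_lhs => rw [eq_add_off x a, eq_add_off x x']
    exact off_diff x (val_lt _) (val_lt _)
  have hv2 : (x - x').val = N - (x' - x).val := off_neg x x' hxx'
  have hv5 : (x - a).val = N - (a - x).val := off_neg x a hax
  have hv4 : (b - a).val
      = if (a - x).val ≤ (b - x).val then (b - x).val - (a - x).val
        else (b - x).val + N - (a - x).val := by
    conv_lhs => rw [eq_add_off x b, eq_add_off x a]
    exact off_diff x (val_lt _) (val_lt _)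
  rw [hv1] at h2a h2b
  rw [hv2] at h2b
  have l1 := val_lt (a - x)
  have l2 := val_lt (x' - x)
  have l3 := val_lt (b - x)
  have hb0 : 0 < (a - x).val := Nat.pos_of_ne_zero (fun hh => hax (off_eq_zero.mp hh))
  constructor
  · rw [hv5]; split_ifs at * <;> omega
  · rw [hv5, hv4]; split_ifs at * <;> omega

end ArcKeys

section Matching

open scoped Classical

variable {n : ℕ} [NeZero (2*n)] {H : ZMod (2*n) → Prop}

def WinH (n : ℕ) (H : ZMod (2*n) → Prop) : Prop :=
  ∀ j : ZMod (2*n), ∃ t : ℕ, t < n ∧ H (j + (t : ZMod (2*n)))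

noncomputable def ofs (hWin : WinH n H) (x : ZMod (2*n)) : ℕ := Nat.find (hWin x)

noncomputable def nxt (hWin : WinH n H) (x : ZMod (2*n)) : ZMod (2*n) :=
  x + ((ofs hWin x : ℕ) : ZMod (2*n))

lemma ofs_lt (hWin : WinH n H) (x : ZMod (2*n)) : ofs hWin x < n := (Nat.find_spec (hWin x)).1

lemma ofs_heavy (hWin : WinH n H) (x : ZMod (2*n)) :
    H (x + ((ofs hWin x : ℕ) : ZMod (2*n))) := (Nat.find_spec (hWin x)).2

lemma ofs_min' (hWin : WinH n H) (x : ZMod (2*n)) {t : ℕ} (ht : t < ofs hWin x) :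
    ¬ H (x + (t : ZMod (2*n))) := by
  intro hH
  exact Nat.find_min (hWin x) ht ⟨by have := ofs_lt hWin x; omega, hH⟩

lemma ofs_le (hWin : WinH n H) (x : ZMod (2*n)) {t : ℕ} (ht : t < n)
    (hH : H (x + (t : ZMod (2*n)))) : ofs hWin x ≤ t :=
  Nat.find_le ⟨ht, hH⟩

lemma nxt_shift (hWin : WinH n H) (x : ZMod (2*n)) {d : ℕ} (hd : d ≤ ofs hWin x) :
    ofs hWin (x + (d : ZMod (2*n))) = ofs hWin x - d ∧
      nxt hWin (x + (d : ZMod (2*n))) = nxt hWin x := by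
  have hlt := ofs_lt hWin x
  have hcast : (x + (d : ZMod (2*n))) + ((ofs hWin x - d : ℕ) : ZMod (2*n))
      = x + ((ofs hWin x : ℕ) : ZMod (2*n)) := by
    rw [Nat.cast_sub hd]; ring
  have hle : ofs hWin (x + (d : ZMod (2*n))) ≤ ofs hWin x - d := by
    apply ofs_le hWin _ (by omega)
    rw [hcast]; exact ofs_heavy hWin x
  have hge : ¬ ofs hWin (x + (d : ZMod (2*n))) < ofs hWin x - d := by
    intro hless
    have hH := ofs_heavy hWin (x + (d : ZMod (2*n)))
    rw [show (x + (d : ZMod (2*n))) + ((ofs hWin (x + (d:ZMod (2*n))) : ℕ) : ZMod (2*n))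
        = x + ((d + ofs hWin (x + (d:ZMod (2*n))) : ℕ) : ZMod (2*n)) by push_cast; ring] at hH
    exact ofs_min' hWin x (by omega) hH
  have heq : ofs hWin (x + (d : ZMod (2*n))) = ofs hWin x - d := by omega
  refine ⟨heq, ?_⟩
  unfold nxt
  rw [heq, hcast]

lemma sideHeavy (hWin : WinH n H) {a b : ZMod (2*n)} (hne : nxt hWin b ≠ nxt hWin a) :
    ofs hWin a < (b - a).val := by
  by_contra hcon
  push_neg at hcon
  apply hne
  have := (nxt_shift hWin a hcon).2
  rw [← eq_add_off a b] at this
  exact this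

lemma block_card (hWin : WinH n H) (S : Finset (ZMod (2*n))) (x : ZMod (2*n)) :
    (S.filter (fun y => nxt hWin y = nxt hWin x)).card ≤ n := by
  have hle : (S.filter (fun y => nxt hWin y = nxt hWin x)).card
      ≤ (Finset.range n).card := by
    apply Finset.card_le_card_of_injOn (fun y => ofs hWin y)
    · intro y hy
      simp only [Finset.mem_range]
      exact Finset.mem_coe.mpr (Finset.mem_range.mpr (ofs_lt hWin y))
    · intro y hy z hz hoz
      simp only [Finset.mem_coe, Finset.mem_filter] at hy hz
      have hoz' : ofs hWin y = ofs hWin z := hoz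
      have heq : nxt hWin y = nxt hWin z := by rw [hy.2, hz.2]
      unfold nxt at heq
      rw [hoz'] at heq
      exact add_right_cancel heq
  simpa using hle

lemma match_core (hWin : WinH n H) :
    ∀ m : ℕ, ∀ S : Finset (ZMod (2*n)), S.card = 2 * m →
    (∀ x ∈ S, (S.filter (fun y => nxt hWin y = nxt hWin x)).card ≤ m) →
    ∃ σ : ZMod (2*n) → ZMod (2*n),
      (∀ x, x ∉ S → σ x = x) ∧
      (∀ x ∈ S, σ x ∈ S ∧ σ (σ x) = x ∧ σ x ≠ x ∧ nxt hWin (σ x) ≠ nxt hWin x) ∧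
      (∀ x ∈ S, ∀ y ∈ S, y ≠ x → y ≠ σ x → (Btw x y (σ x) ↔ Btw x (σ y) (σ x))) := by
  intro m
  induction m generalizing H with
  | zero =>
      intro S hcard _
      have hS : S = ∅ := Finset.card_eq_zero.mp (by omega)
      subst hS
      exact ⟨id, fun x _ => rfl, fun x hx => absurd hx (by simp),
        fun x hx => absurd hx (by simp)⟩
  | succ m ih =>
      intro S hcard hblk
      have hn : 0 < n := by have := NeZero.ne (2*n); omega
      have hSne : S.Nonempty := Finset.card_pos.mp (by omega)
      obtain ⟨astar, hastar, hmax⟩ := Finset.exists_max_image S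
        (fun x => (S.filter (fun y => nxt hWin y = nxt hWin x)).card) hSne
      obtain ⟨a, haB, hamin⟩ := Finset.exists_min_image
        (S.filter (fun y => nxt hWin y = nxt hWin astar)) (fun y => ofs hWin y)
        ⟨astar, Finset.mem_filter.mpr ⟨hastar, rfl⟩⟩
      rw [Finset.mem_filter] at haB
      obtain ⟨haS, hanxt⟩ := haB
      have hex : ∃ t : ℕ, 0 < t ∧ t < 2*n ∧ a + (t : ZMod (2*n)) ∈ S := by
        obtain ⟨y, hyS, hyne⟩ := Finset.exists_mem_ne (s := S) (by omega) a
        refine ⟨(y - a).val, Nat.pos_of_ne_zero (fun hh => hyne (off_eq_zero.mp hh)),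
          val_lt _, ?_⟩
        rw [← eq_add_off a y]; exact hyS
      obtain ⟨ht0pos, ht0N, hbS⟩ := Nat.find_spec hex
      set t0 := Nat.find hex with ht0def
      set b := a + ((t0:ℕ) : ZMod (2*n)) with hbdef
      have hba : b ≠ a := add_off_ne a ht0pos ht0N
      have hoffba : (b - a).val = t0 := off_val a ht0N
      have hempty : ∀ u, Btw a u b → u ∉ S := by
        intro u hu huS
        obtain ⟨hu1, hu2⟩ := hu
        rw [hoffba] at hu2
        refine Nat.find_min hex hu2 ⟨hu1, ?_, ?_⟩
        · have := val_lt (u - a); omega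
        · rw [← eq_add_off a u]; exact huS
      -- the matched pair joins two distinct blocks
      have hnxtb : nxt hWin b ≠ nxt hWin a := by
        intro heq
        rcases le_or_gt t0 (ofs hWin a) with hc | hc
        · have hs := (nxt_shift hWin a hc).1
          have hob : ofs hWin b = ofs hWin a - t0 := hs
          have hmem : b ∈ S.filter (fun y => nxt hWin y = nxt hWin astar) :=
            Finset.mem_filter.mpr ⟨hbS, by rw [heq, hanxt]⟩
          have hmb : ofs hWin a ≤ ofs hWin b := hamin b hmem
          omega
        · -- ofs a < t0 : then the whole of S is a single block, contradiction
          have hob : ofs hWin b = ofs hWin a + 2*n - t0 := by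
            have h2 : ((t0 + ofs hWin b : ℕ) : ZMod (2*n)) = ((ofs hWin a : ℕ) : ZMod (2*n)) := by
              have h3 : a + ((t0 + ofs hWin b : ℕ) : ZMod (2*n))
                  = a + ((ofs hWin a : ℕ) : ZMod (2*n)) := by
                have heq' := heq
                unfold nxt at heq'
                rw [hbdef] at heq'
                rw [Nat.cast_add, ← add_assoc]
                exact heq'
              exact add_left_cancel h3
            have h4 := congrArg ZMod.val h2
            rw [ZMod.val_natCast, ZMod.val_natCast] at h4
            have hb1 := ofs_lt hWin b
            have ha1 := ofs_lt hWin a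
            rcases Nat.lt_or_ge (t0 + ofs hWin b) (2*n) with hlt | hge
            · rw [Nat.mod_eq_of_lt hlt, Nat.mod_eq_of_lt (by omega)] at h4
              omega
            · rw [Nat.mod_eq_sub_mod hge, Nat.mod_eq_of_lt (by omega),
                Nat.mod_eq_of_lt (by omega)] at h4
              omega
          have hall : ∀ x ∈ S, nxt hWin x = nxt hWin a := by
            intro x hxS
            by_cases hxa : x = a
            · rw [hxa]
            · have he0 : 0 < (x - a).val := Nat.pos_of_ne_zero (fun hh => hxa (off_eq_zero.mp hh))
              have heN : (x - a).val < 2*n := val_lt _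
              have het0 : t0 ≤ (x - a).val := by
                by_contra hcon
                push_neg at hcon
                exact hempty x ⟨he0, by omega⟩ hxS
              set e := (x - a).val with hedef
              set g := ofs hWin x with hgdef
              have hgn : g < n := ofs_lt hWin x
              have han : ofs hWin a < n := ofs_lt hWin a
              -- heavy point of x sits at a-offset e + g
              have hHeavyx : H (a + ((e + g : ℕ) : ZMod (2*n))) := by
                have := ofs_heavy hWin x
                rw [show x + ((g:ℕ) : ZMod (2*n)) = a + ((e + g : ℕ) : ZMod (2*n)) by
                  rw [eq_add_off a x, ← hedef]; push_cast; ring] at this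
                exact this
              have hglb : ofs hWin a + 2*n - e ≤ g := by
                rcases Nat.lt_or_ge (e + g) (2*n) with hcase | hcase
                · -- relative to b
                  by_contra hcon
                  push_neg at hcon
                  apply ofs_min' hWin b (t := e + g - t0) (by omega)
                  rw [show b + ((e + g - t0 : ℕ) : ZMod (2*n)) = a + ((e + g : ℕ) : ZMod (2*n)) by
                    rw [hbdef, add_assoc, ← Nat.cast_add,
                      show t0 + (e + g - t0) = e + g by omega]]
                  exact hHeavyx
                · -- wrapped all the way around a
                  by_contra hcon
                  push_neg at hcon
                  apply ofs_min' hWin a (t := e + g - 2*n) (by omega)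
                  rw [show a + ((e + g - 2*n : ℕ) : ZMod (2*n)) = a + ((e + g : ℕ) : ZMod (2*n)) by
                    conv_rhs => rw [show (e+g : ℕ) = (e + g - 2*n) + 2*n by omega, Nat.cast_add,
                      ZMod.natCast_self, add_zero]]
                  exact hHeavyx
              have hgub : g ≤ ofs hWin a + 2*n - e := by
                by_contra hcon
                push_neg at hcon
                apply ofs_min' hWin x (t := ofs hWin a + 2*n - e) hcon
                rw [show x + ((ofs hWin a + 2*n - e : ℕ) : ZMod (2*n))
                    = a + ((ofs hWin a : ℕ) : ZMod (2*n)) by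
                  conv_lhs => rw [eq_add_off a x, ← hedef]
                  rw [add_assoc, ← Nat.cast_add,
                    show e + (ofs hWin a + 2*n - e) = ofs hWin a + 2*n by omega,
                    Nat.cast_add, ZMod.natCast_self, add_zero]]
                exact ofs_heavy hWin a
              have hgeq : g = ofs hWin a + 2*n - e := le_antisymm hgub hglb
              unfold nxt
              rw [← hgdef, hgeq]
              conv_lhs => rw [eq_add_off a x, ← hedef]
              rw [add_assoc, ← Nat.cast_add,
                show e + (ofs hWin a + 2*n - e) = ofs hWin a + 2*n by omega,
                Nat.cast_add, ZMod.natCast_self, add_zero]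
          have hsub : S ⊆ S.filter (fun y => nxt hWin y = nxt hWin astar) := by
            intro x hxS
            exact Finset.mem_filter.mpr ⟨hxS, by rw [hall x hxS, hanxt]⟩
          have hcard2 := Finset.card_le_card hsub
          have := hblk astar hastar
          omega
      -- new instance S'
      have hbS' : b ∈ S.erase a := Finset.mem_erase.mpr ⟨hba, hbS⟩
      set S' := (S.erase a).erase b with hS'def
      have hS'card : S'.card = 2 * m := by
        rw [hS'def, Finset.card_erase_of_mem hbS', Finset.card_erase_of_mem haS]
        omega
      have hS'sub : S' ⊆ S := by
        intro x hx
        exact Finset.mem_of_mem_erase (Finset.mem_of_mem_erase hx)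
      have hS'mem : ∀ x, x ∈ S' ↔ (x ∈ S ∧ x ≠ a ∧ x ≠ b) := by
        intro x
        rw [hS'def, Finset.mem_erase, Finset.mem_erase]
        tauto
      have hblk' : ∀ x ∈ S', (S'.filter (fun y => nxt hWin y = nxt hWin x)).card ≤ m := by
        intro x hxS'
        obtain ⟨hxS, hxa, hxb⟩ := (hS'mem x).mp hxS'
        by_cases hca : nxt hWin x = nxt hWin a
        · have hsub2 : S'.filter (fun y => nxt hWin y = nxt hWin x)
              ⊆ (S.filter (fun y => nxt hWin y = nxt hWin x)).erase a := by
            intro y hy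
            rw [Finset.mem_filter] at hy
            rw [Finset.mem_erase, Finset.mem_filter]
            exact ⟨((hS'mem y).mp hy.1).2.1, hS'sub hy.1, hy.2⟩
          have hamem : a ∈ S.filter (fun y => nxt hWin y = nxt hWin x) :=
            Finset.mem_filter.mpr ⟨haS, hca.symm⟩
          have h5 := Finset.card_le_card hsub2
          rw [Finset.card_erase_of_mem hamem] at h5
          have h6 := hblk x hxS
          omega
        · by_cases hcb : nxt hWin x = nxt hWin b
          · have hsub2 : S'.filter (fun y => nxt hWin y = nxt hWin x)
                ⊆ (S.filter (fun y => nxt hWin y = nxt hWin x)).erase b := by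
              intro y hy
              rw [Finset.mem_filter] at hy
              rw [Finset.mem_erase, Finset.mem_filter]
              exact ⟨((hS'mem y).mp hy.1).2.2, hS'sub hy.1, hy.2⟩
            have hbmem : b ∈ S.filter (fun y => nxt hWin y = nxt hWin x) :=
              Finset.mem_filter.mpr ⟨hbS, hcb.symm⟩
            have h5 := Finset.card_le_card hsub2
            rw [Finset.card_erase_of_mem hbmem] at h5
            have h6 := hblk x hxS
            omega
          · -- third block: 2|Bx| + 1 ≤ |S|
            have hBaeq : S.filter (fun y => nxt hWin y = nxt hWin astar)
                = S.filter (fun y => nxt hWin y = nxt hWin a) :=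
              Finset.filter_congr (fun y _ => by rw [hanxt])
            have hdisj1 : Disjoint (S.filter (fun y => nxt hWin y = nxt hWin x))
                (S.filter (fun y => nxt hWin y = nxt hWin a)) := by
              rw [Finset.disjoint_left]
              intro y h1 h2
              rw [Finset.mem_filter] at h1 h2
              exact hca (h1.2 ▸ h2.2 ▸ rfl : nxt hWin x = nxt hWin a)
            have hdisj2 : Disjoint ((S.filter (fun y => nxt hWin y = nxt hWin x))
                ∪ (S.filter (fun y => nxt hWin y = nxt hWin a)))
                (S.filter (fun y => nxt hWin y = nxt hWin b)) := by
              rw [Finset.disjoint_left]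
              intro y h1 h2
              rw [Finset.mem_union, Finset.mem_filter, Finset.mem_filter] at h1
              rw [Finset.mem_filter] at h2
              rcases h1 with h1 | h1
              · exact hcb (h1.2 ▸ h2.2 ▸ rfl : nxt hWin x = nxt hWin b)
              · exact hnxtb (h2.2 ▸ h1.2 ▸ rfl : nxt hWin b = nxt hWin a)
            have hsubU : ((S.filter (fun y => nxt hWin y = nxt hWin x))
                ∪ (S.filter (fun y => nxt hWin y = nxt hWin a)))
                ∪ (S.filter (fun y => nxt hWin y = nxt hWin b)) ⊆ S := by
              intro y hy
              rw [Finset.mem_union, Finset.mem_union, Finset.mem_filter,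
                Finset.mem_filter, Finset.mem_filter] at hy
              tauto
            have hsum : (S.filter (fun y => nxt hWin y = nxt hWin x)).card
                + (S.filter (fun y => nxt hWin y = nxt hWin a)).card
                + (S.filter (fun y => nxt hWin y = nxt hWin b)).card ≤ S.card := by
              have e1 := Finset.card_union_of_disjoint hdisj1
              have e2 := Finset.card_union_of_disjoint hdisj2
              have e3 := Finset.card_le_card hsubU
              omega
            have hmx := hmax x hxS
            rw [hBaeq] at hmx
            have hb1 : 1 ≤ (S.filter (fun y => nxt hWin y = nxt hWin b)).card :=
              Finset.card_pos.mpr ⟨b, Finset.mem_filter.mpr ⟨hbS, rfl⟩⟩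
            have hsub3 : S'.filter (fun y => nxt hWin y = nxt hWin x)
                ⊆ S.filter (fun y => nxt hWin y = nxt hWin x) := by
              intro y hy
              rw [Finset.mem_filter] at hy ⊢
              exact ⟨hS'sub hy.1, hy.2⟩
            have := Finset.card_le_card hsub3
            omega
      -- induction hypothesis on S'
      obtain ⟨σ0, hid0, hmem0, hnc0⟩ := ih hWin S' hS'card hblk'
      classical
      set σ1 : ZMod (2*n) → ZMod (2*n) :=
        fun x => if x = a then b else if x = b then a else σ0 x with hσ1
      have hva : σ1 a = b := by simp [hσ1]
      have hvb : σ1 b = a := by simp [hσ1, hba]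
      have hvx : ∀ x, x ≠ a → x ≠ b → σ1 x = σ0 x := by
        intro x h1 h2; simp [hσ1, h1, h2]
      refine ⟨σ1, ?_, ?_, ?_⟩
      · intro x hxS
        have hxa : x ≠ a := fun h => hxS (h ▸ haS)
        have hxb : x ≠ b := fun h => hxS (h ▸ hbS)
        rw [hvx x hxa hxb]
        exact hid0 x (fun hc => hxS (hS'sub hc))
      · intro x hxS
        by_cases hxa : x = a
        · subst hxa
          rw [hva, hvb]
          exact ⟨hbS, rfl, hba, hnxtb⟩
        · by_cases hxb : x = b
          · subst hxb
            rw [hvb, hva]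
            exact ⟨haS, rfl, Ne.symm hba, fun h => hnxtb h.symm⟩
          · have hxS' : x ∈ S' := (hS'mem x).mpr ⟨hxS, hxa, hxb⟩
            obtain ⟨h1, h2, h3, h4⟩ := hmem0 x hxS'
            have hs0a : σ0 x ≠ a := ((hS'mem _).mp h1).2.1
            have hs0b : σ0 x ≠ b := ((hS'mem _).mp h1).2.2
            rw [hvx x hxa hxb, hvx _ hs0a hs0b]
            exact ⟨hS'sub h1, h2, h3, h4⟩
      · intro x hxS y hyS hyx hyσx
        by_cases hxa : x = a
        · subst hxa
          rw [hva] at hyσx ⊢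
          have hy : y ∈ S' := (hS'mem y).mpr ⟨hyS, hyx, hyσx⟩
          rw [hvx y hyx hyσx]
          have hs0 := (hmem0 y hy).1
          exact iff_of_false (fun h => hempty y h hyS)
            (fun h => hempty _ h (hS'sub hs0))
        · by_cases hxb : x = b
          · subst hxb
            rw [hvb] at hyσx ⊢
            have hy : y ∈ S' := (hS'mem y).mpr ⟨hyS, hyσx, hyx⟩
            rw [hvx y hyσx hyx]
            have hs0 := (hmem0 y hy).1
            have hs0a : σ0 y ≠ a := ((hS'mem _).mp hs0).2.1
            have hs0b : σ0 y ≠ b := ((hS'mem _).mp hs0).2.2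
            apply iff_of_true
            · rcases btw_cases (Ne.symm hba) hyσx hyx with h | h
              · exact absurd hyS (hempty y h)
              · exact h
            · rcases btw_cases (Ne.symm hba) hs0a hs0b with h | h
              · exact absurd (hS'sub hs0) (hempty _ h)
              · exact h
          · have hxS' : x ∈ S' := (hS'mem x).mpr ⟨hxS, hxa, hxb⟩
            obtain ⟨hx1, hx2, hx3, hx4⟩ := hmem0 x hxS'
            have hx1a : σ0 x ≠ a := ((hS'mem _).mp hx1).2.1
            have hx1b : σ0 x ≠ b := ((hS'mem _).mp hx1).2.2
            rw [hvx x hxa hxb] at hyσx ⊢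
            have key : Btw x a (σ0 x) ↔ Btw x b (σ0 x) := by
              have hax : a ≠ x := Ne.symm hxa
              have hax' : a ≠ σ0 x := Ne.symm hx1a
              have hbx : b ≠ x := Ne.symm hxb
              have hbx' : b ≠ σ0 x := Ne.symm hx1b
              have hxσ0 : x ≠ σ0 x := Ne.symm hx3
              constructor
              · intro h
                rcases btw_cases hxσ0 hbx hbx' with h2 | h2
                · exact h2
                · exact absurd (hS'sub hx1) (hempty _ (arc_key1 h h2))
              · intro h
                rcases btw_cases hxσ0 hax hax' with h2 | h2
                · exact h2
                · exact absurd hxS (hempty _ (arc_key2 h h2))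
            by_cases hya : y = a
            · subst hya
              rw [hva]
              exact key
            · by_cases hyb : y = b
              · subst hyb
                rw [hvb]
                exact key.symm
              · have hyS' : y ∈ S' := (hS'mem y).mpr ⟨hyS, hya, hyb⟩
                rw [hvx y hya hyb]
                exact hnc0 x hxS' y hyS' hyx hyσx

end Matching


section Upper

variable {n : ℕ} [NeZero (2*n)] (p : ZMod (2*n) → Pt)

lemma btw_asymm {N : ℕ} [NeZero N] {a x b : ZMod N} (h : Btw a x b) : ¬ Btw b x a := by
  intro h2
  obtain ⟨hxa, hxb, hab⟩ := btw_ne h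
  obtain ⟨h1a, h1b⟩ := h
  obtain ⟨h2a, h2b⟩ := h2
  have e1 : (x - b).val
      = if (b - a).val ≤ (x - a).val then (x - a).val - (b - a).val
        else (x - a).val + N - (b - a).val := by
    conv_lhs => rw [eq_add_off a x, eq_add_off a b]
    exact off_diff a (val_lt _) (val_lt _)
  have e2 : (a - b).val = N - (b - a).val := off_neg a b (Ne.symm hab)
  rw [e1] at h2a h2b
  rw [e2] at h2b
  have := val_lt (x - a)
  have := val_lt (b - a)
  split_ifs at h2a h2b <;> omega

/-- Every non-crossing perfect matching contains a boundary edge inside each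
window of `n` consecutive boundary positions. -/
lemma window_edge (hccw : OnCircleCCW (2*n) p) {σ : ZMod (2*n) → ZMod (2*n)}
    (hσ : IsNCM (2*n) p σ) (hn : 0 < n) (j : ZMod (2*n)) :
    ∃ s : ℕ, s < n ∧ σ (j + (s : ZMod (2*n))) = j + (s : ZMod (2*n)) + 1 := by
  obtain ⟨⟨c, r, hr, hcirc⟩, hinj, hp⟩ := hccw
  obtain ⟨hinv, hne, hdisj⟩ := hσ
  have hσinj : Function.Injective σ := by
    intro x y h
    rw [← hinv x, h, hinv y]
  have hN : 0 < 2*n := by omega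
  -- geometric non-crossing implies combinatorial non-crossing
  have cnc : ∀ i k, k ≠ i → k ≠ σ i → ¬(Btw i k (σ i) ∧ Btw (σ i) (σ k) i) := by
    rintro i k h1 h2 ⟨hb1, hb2⟩
    have hC : det2 (p (σ i) - p i) (p k - p i) < 0 := btw_neg p hp hb1
    have hD : 0 < det2 (p (σ i) - p i) (p (σ k) - p i) := btw_pos2 p hp hb2
    have hnAB : p i ≠ p (σ i) := fun h => (hne i) (hinj h).symm
    have hcross := cross_nonempty (hcirc i) (hcirc (σ i)) (hcirc k) (hcirc (σ k)) hnAB hC hD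
    rw [hdisj i k h1 h2] at hcross
    exact Set.not_nonempty_empty hcross
  -- pigeonhole: a pair inside the window
  classical
  set W : Finset (ℕ × ℕ) := (Finset.range (n+1) ×ˢ Finset.range (n+1)).filter
    (fun st => st.1 < st.2 ∧ σ (j + (st.1 : ZMod (2*n))) = j + (st.2 : ZMod (2*n)))
    with hWdef
  have hWne : W.Nonempty := by
    by_contra hcon
    rw [Finset.not_nonempty_iff_eq_empty] at hcon
    have hnopair : ∀ s t : ℕ, s < n+1 → t < n+1 → s < t →
        σ (j + (s : ZMod (2*n))) ≠ j + (t : ZMod (2*n)) := by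
      intro s t hs ht hst heq
      have : (s, t) ∈ W := by
        rw [hWdef]
        refine Finset.mem_filter.mpr ⟨Finset.mem_product.mpr ⟨?_, ?_⟩, hst, heq⟩ <;>
          simp [hs, ht]
      rw [hcon] at this
      exact absurd this (Finset.notMem_empty _)
    set JW : Finset (ZMod (2*n)) :=
      (Finset.range (n+1)).image (fun t : ℕ => j + ((t : ℕ) : ZMod (2*n))) with hJW
    have hinj2 : Set.InjOn (fun t : ℕ => j + ((t : ℕ) : ZMod (2*n)))
        (Finset.range (n+1)) := by
      intro s hs t ht hst
      rw [Finset.coe_range, Set.mem_Iio] at hs ht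
      simp only at hst
      have h1 := off_val (N := 2*n) j (s := s) (by omega)
      rw [hst, off_val j (by omega)] at h1
      omega
    have hJWcard : JW.card = n + 1 := by
      rw [hJW, Finset.card_image_of_injOn hinj2, Finset.card_range]
    have hmaps : ∀ x ∈ JW, σ x ∈ Finset.univ \ JW := by
      intro x hx
      rw [hJW, Finset.mem_image] at hx
      obtain ⟨s, hs, rfl⟩ := hx
      rw [Finset.mem_range] at hs
      rw [Finset.mem_sdiff]
      refine ⟨Finset.mem_univ _, ?_⟩
      rw [hJW, Finset.mem_image]
      rintro ⟨t, ht, heq⟩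
      rw [Finset.mem_range] at ht
      rcases lt_trichotomy s t with h | h | h
      · exact hnopair s t hs ht h heq.symm
      · subst h
        exact hne _ heq.symm
      · apply hnopair t s ht hs h
        rw [heq, hinv]
    have hcard2 := Finset.card_le_card_of_injOn σ hmaps
      (fun x _ y _ h => hσinj h)
    rw [hJWcard, Finset.card_sdiff_of_subset (Finset.subset_univ _), hJWcard, Finset.card_univ,
      ZMod.card] at hcard2
    omega
  obtain ⟨st, hstW, hstmin⟩ := Finset.exists_min_image W (fun st => st.2 - st.1) hWne
  rw [hWdef, Finset.mem_filter, Finset.mem_product, Finset.mem_range, Finset.mem_range] at hstW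
  obtain ⟨⟨hs1, ht1⟩, hst, hedge⟩ := hstW
  set s := st.1
  set t := st.2
  rcases eq_or_lt_of_le (Nat.succ_le_of_lt hst) with hts | hts
  · -- t = s + 1 : done
    refine ⟨s, by omega, ?_⟩
    rw [hedge, ← hts]
    push_cast
    ring
  · -- breadth at least 2: contradiction with minimality
    exfalso
    have hcast : ∀ u v : ℕ, (j + (u : ZMod (2*n))) + (v : ZMod (2*n))
        = j + ((u + v : ℕ) : ZMod (2*n)) := by
      intro u v; push_cast; ring
    have hsn : s < n := by omega
    have hBu : Btw (j + (s : ZMod (2*n))) (j + ((s+1 : ℕ) : ZMod (2*n)))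
        (j + (t : ZMod (2*n))) := by
      have e1 : (j + ((s+1:ℕ) : ZMod (2*n))) = (j + (s : ZMod (2*n))) + ((1:ℕ) : ZMod (2*n)) := by
        rw [hcast]
      have e2 : (j + (t : ZMod (2*n))) = (j + (s : ZMod (2*n))) + ((t - s : ℕ) : ZMod (2*n)) := by
        rw [hcast, show s + (t - s) = t by omega]
      rw [e1, e2]
      rw [btw_iff _ (by omega) (by omega)]
      omega
    set u := j + ((s+1 : ℕ) : ZMod (2*n)) with hudef
    have hui : u ≠ j + (s : ZMod (2*n)) := by
      rw [hudef]
      exact ne_of_off (by omega) (by omega) (by omega)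
    have huσ : u ≠ σ (j + (s : ZMod (2*n))) := by
      rw [hudef, hedge]
      exact ne_of_off (by omega) (by omega) (by omega)
    have hkey := cnc (j + (s : ZMod (2*n))) u hui huσ
    rw [hedge] at hkey
    have hm2 : ¬ Btw (j + (t : ZMod (2*n))) (σ u) (j + (s : ZMod (2*n))) := by
      intro hcon2
      exact hkey ⟨hBu, hcon2⟩
    have hmne1 : σ u ≠ j + (s : ZMod (2*n)) := by
      intro heq2
      apply huσ
      rw [← heq2, hinv]
    have hmne2 : σ u ≠ j + (t : ZMod (2*n)) := by
      intro heq2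
      rw [← hedge] at heq2
      exact hui (hσinj heq2)
    have hmbtw : Btw (j + (s : ZMod (2*n))) (σ u) (j + (t : ZMod (2*n))) := by
      rcases btw_cases (ne_of_off (s := s) (by omega) (by omega) (by omega)) hmne1 hmne2 with h | h
      · exact h
      · exact absurd h hm2
    -- extract offset
    have hd1 : 0 < (σ u - (j + (s : ZMod (2*n)))).val := hmbtw.1
    have hd2 : (σ u - (j + (s : ZMod (2*n)))).val < t - s := by
      have := hmbtw.2
      rwa [show (j + (t : ZMod (2*n))) - (j + (s : ZMod (2*n)))
          = (((t - s : ℕ)) : ZMod (2*n)) by push_cast [Nat.cast_sub hst.le]; ring,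
        ZMod.val_cast_of_lt (by omega)] at this
    set d := (σ u - (j + (s : ZMod (2*n)))).val with hddef
    have hmrep : σ u = j + ((s + d : ℕ) : ZMod (2*n)) := by
      conv_lhs => rw [eq_add_off (j + (s : ZMod (2*n))) (σ u)]
      rw [← hddef, hcast]
    have hdne1 : d ≠ 1 := by
      intro h1
      apply hne u
      rw [hmrep, h1]
    have hpair : (s+1, s+d) ∈ W := by
      rw [hWdef, Finset.mem_filter, Finset.mem_product, Finset.mem_range, Finset.mem_range]
      refine ⟨⟨by omega, by omega⟩, by omega, ?_⟩
      rw [← hudef, hmrep]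
    have hfin : t - s ≤ (s + d) - (s + 1) := hstmin _ hpair
    omega

end Upper


end Aux

set_option maxHeartbeats 1600000 in
/-- For `2n` distinct points on a common circle in counterclockwise order, the
maximum over all perfect non-crossing matchings of the minimum edge length equals the minimum
over `j` of the maximum length of the `n` consecutive boundary edges starting at `j`. -/
theorem maxmin_eq_min_sliding_window_max (n : ℕ) (hn : 0 < n) (p : ZMod (2 * n) → Pt)
    (hccw : OnCircleCCW (2 * n) p) :
    IsGreatest {val : ℝ | ∃ σ, IsNCM (2 * n) p σ ∧ val = ⨅ i, dist (p i) (p (σ i))}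
      (⨅ j : ZMod (2 * n), ⨆ k : Fin n,
        dist (p (j + ((k : ℕ) : ZMod (2 * n)))) (p (j + ((k : ℕ) : ZMod (2 * n)) + 1))) := by
  haveI : NeZero (2 * n) := ⟨by omega⟩
  haveI : Nonempty (Fin n) := ⟨⟨0, hn⟩⟩
  set V : ℝ := ⨅ j : ZMod (2 * n), ⨆ k : Fin n,
      dist (p (j + ((k : ℕ) : ZMod (2 * n)))) (p (j + ((k : ℕ) : ZMod (2 * n)) + 1)) with hVdef
  have hub : ∀ σ, IsNCM (2 * n) p σ → (⨅ i, dist (p i) (p (σ i))) ≤ V := by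
    intro σ hσ
    rw [hVdef]
    apply le_ciInf
    intro j
    obtain ⟨s, hs, hedge⟩ := Aux.window_edge p hccw hσ hn j
    have step1 : (⨅ i, dist (p i) (p (σ i)))
        ≤ dist (p (j + (s : ZMod (2*n)))) (p (σ (j + (s : ZMod (2*n))))) :=
      ciInf_le (Set.Finite.bddBelow (Set.finite_range _)) _
    rw [hedge] at step1
    refine le_trans step1 ?_
    have step2 := le_ciSup (f := fun k : Fin n =>
        dist (p (j + ((k : ℕ) : ZMod (2*n)))) (p (j + ((k : ℕ) : ZMod (2*n)) + 1)))
      (Set.Finite.bddAbove (Set.finite_range _)) (⟨s, hs⟩ : Fin n)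
    exact step2
  constructor
  · -- membership : construct an optimal matching
    obtain ⟨⟨c, r, hr, hcirc⟩, hinj, hp⟩ := hccw
    set H : ZMod (2*n) → Prop := fun k => V ≤ dist (p k) (p (k + 1)) with hHdef
    have hWin : Aux.WinH n H := by
      intro j
      have h1 : V ≤ ⨆ k : Fin n,
          dist (p (j + ((k : ℕ) : ZMod (2*n)))) (p (j + ((k : ℕ) : ZMod (2*n)) + 1)) := by
        rw [hVdef]
        exact ciInf_le (Set.Finite.bddBelow (Set.finite_range _)) j
      obtain ⟨km, hkm⟩ := Finite.exists_max (fun k : Fin n =>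
        dist (p (j + ((k : ℕ) : ZMod (2*n)))) (p (j + ((k : ℕ) : ZMod (2*n)) + 1)))
      have h2 := ciSup_le hkm
      refine ⟨(km : ℕ), km.isLt, ?_⟩
      show V ≤ dist (p (j + ((km : ℕ) : ZMod (2*n)))) (p ((j + ((km : ℕ) : ZMod (2*n))) + 1))
      exact le_trans h1 h2
    obtain ⟨σ, hid, hmem, hnc⟩ := Aux.match_core hWin n Finset.univ
      (by rw [Finset.card_univ, ZMod.card]) (fun x _ => Aux.block_card hWin _ x)
    have hmemx := fun x => hmem x (Finset.mem_univ x)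
    have hinv : ∀ i, σ (σ i) = i := fun i => (hmemx i).2.1
    have hneq : ∀ i, σ i ≠ i := fun i => (hmemx i).2.2.1
    have hblkx : ∀ i, Aux.nxt hWin (σ i) ≠ Aux.nxt hWin i := fun i => (hmemx i).2.2.2
    have hncx : ∀ i k, k ≠ i → k ≠ σ i → (Aux.Btw i k (σ i) ↔ Aux.Btw i (σ k) (σ i)) :=
      fun i k h1 h2 => hnc i (Finset.mem_univ i) k (Finset.mem_univ k) h1 h2
    have hσinj : Function.Injective σ := fun x y h => by rw [← hinv x, h, hinv y]
    have hNCM : IsNCM (2*n) p σ := by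
      refine ⟨hinv, hneq, ?_⟩
      intro i k h1 h2
      have hσkσ : σ k ≠ σ i := fun h => h1 (hσinj h)
      have hσki : σ k ≠ i := fun h => h2 (by rw [← h, hinv])
      have hiσ : i ≠ σ i := fun h => hneq i h.symm
      have hiff := hncx i k h1 h2
      rcases Aux.btw_cases hiσ h1 h2 with hside | hside
      · have hside2 : Aux.Btw i (σ k) (σ i) := hiff.mp hside
        have d1 : det2 (p (σ i) - p i) (p k - p i) < 0 := Aux.btw_neg p hp hside
        have d2 : det2 (p (σ i) - p i) (p (σ k) - p i) < 0 := Aux.btw_neg p hp hside2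
        rw [Set.inter_comm]
        exact Aux.disjoint_of_sameside d1 d2
      · have hside2 : Aux.Btw (σ i) (σ k) i := by
          rcases Aux.btw_cases hiσ hσki hσkσ with h | h
          · exact absurd hside (Aux.btw_asymm (hiff.mpr h))
          · exact h
        have d1 : det2 (p i - p (σ i)) (p k - p (σ i)) < 0 := by
          have e0 : det2 (p (σ i) - p i) (p k - p (σ i))
              = det2 (p (σ i) - p i) (p k - p i) :=
            Aux.det2_line _ _ _ _ (by rw [Aux.det2_self])
          have hpos := Aux.btw_pos2 p hp hside
          rw [show p i - p (σ i) = -(p (σ i) - p i) from (neg_sub _ _).symm,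
            Aux.det2_neg_left, e0]
          linarith
        have d2 : det2 (p i - p (σ i)) (p (σ k) - p (σ i)) < 0 := by
          have e0 : det2 (p (σ i) - p i) (p (σ k) - p (σ i))
              = det2 (p (σ i) - p i) (p (σ k) - p i) :=
            Aux.det2_line _ _ _ _ (by rw [Aux.det2_self])
          have hpos := Aux.btw_pos2 p hp hside2
          rw [show p i - p (σ i) = -(p (σ i) - p i) from (neg_sub _ _).symm,
            Aux.det2_neg_left, e0]
          linarith
        rw [Set.inter_comm,
          show segment ℝ (p i) (p (σ i)) = segment ℝ (p (σ i)) (p i) from segment_symm ℝ _ _]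
        exact Aux.disjoint_of_sameside d1 d2
    have hEdge : ∀ i, V ≤ dist (p i) (p (σ i)) := by
      intro i
      have hd1 : Aux.ofs hWin i < (σ i - i).val := Aux.sideHeavy hWin (hblkx i)
      have hd2 : Aux.ofs hWin (σ i) < (i - σ i).val := Aux.sideHeavy hWin (hblkx i).symm
      have hpne : p (σ i) ≠ p i := fun h => hneq i (hinj h)
      -- points of the heavy edge inside arc (i → σ i) lie on the nonpositive side
      have hull1 : ∀ m : ℕ, m ≤ (σ i - i).val →
          det2 (p (σ i) - p i) (p (i + (m : ZMod (2*n))) - p i) ≤ 0 := by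
        intro m hm
        rcases Nat.eq_zero_or_pos m with h0 | h0
        · subst h0
          rw [show ((0:ℕ) : ZMod (2*n)) = 0 by simp, add_zero, sub_self,
            Aux.det2_zero_right]
        · rcases eq_or_lt_of_le hm with hEq | hLt
          · rw [show i + (m : ZMod (2*n)) = σ i by
              rw [hEq]; exact (Aux.eq_add_off i (σ i)).symm]
            exact le_of_eq (Aux.det2_self _)
          · have hmN : m < 2*n := lt_trans hLt (Aux.val_lt _)
            have hb : Aux.Btw i (i + (m : ZMod (2*n))) (σ i) := by
              constructor
              · rw [Aux.off_val i hmN]; exact h0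
              · rw [Aux.off_val i hmN]; exact hLt
            exact le_of_lt (Aux.btw_neg p hp hb)
      have hull2 : ∀ m : ℕ, m ≤ (i - σ i).val →
          0 ≤ det2 (p (σ i) - p i) (p (σ i + (m : ZMod (2*n))) - p i) := by
        intro m hm
        rcases Nat.eq_zero_or_pos m with h0 | h0
        · subst h0
          rw [show ((0:ℕ) : ZMod (2*n)) = 0 by simp, add_zero]
          exact le_of_eq (Aux.det2_self _).symm
        · rcases eq_or_lt_of_le hm with hEq | hLt
          · rw [show σ i + (m : ZMod (2*n)) = i by
              rw [hEq]; exact (Aux.eq_add_off (σ i) i).symm]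
            rw [sub_self, Aux.det2_zero_right]
          · have hmN : m < 2*n := lt_trans hLt (Aux.val_lt _)
            have hb : Aux.Btw (σ i) (σ i + (m : ZMod (2*n))) i := by
              constructor
              · rw [Aux.off_val (σ i) hmN]; exact h0
              · rw [Aux.off_val (σ i) hmN]; exact hLt
            exact le_of_lt (Aux.btw_pos2 p hp hb)
      have hH1 : V ≤ dist (p (i + ((Aux.ofs hWin i : ℕ) : ZMod (2*n))))
          (p (i + ((Aux.ofs hWin i : ℕ) : ZMod (2*n)) + 1)) := Aux.ofs_heavy hWin i
      have hH2 : V ≤ dist (p (σ i + ((Aux.ofs hWin (σ i) : ℕ) : ZMod (2*n))))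
          (p (σ i + ((Aux.ofs hWin (σ i) : ℕ) : ZMod (2*n)) + 1)) := Aux.ofs_heavy hWin (σ i)
      rcases le_or_gt (det2 (p (σ i) - p i) (c - p i)) 0 with hcs | hcs
      · -- center on the nonpositive side: use the heavy edge on the arc σ i → i
        have flip : ∀ z : Pt, det2 (p i - p (σ i)) (z - p (σ i))
            = - det2 (p (σ i) - p i) (z - p i) := by
          intro z
          rw [show p i - p (σ i) = -(p (σ i) - p i) from (neg_sub _ _).symm,
            Aux.det2_neg_left, Aux.det2_line _ _ _ _ (by rw [Aux.det2_self])]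
        have hcast : σ i + ((Aux.ofs hWin (σ i) : ℕ) : ZMod (2*n)) + 1
            = σ i + (((Aux.ofs hWin (σ i) + 1 : ℕ)) : ZMod (2*n)) := by push_cast; ring
        have hP : det2 (p i - p (σ i))
            (p (σ i + ((Aux.ofs hWin (σ i) : ℕ) : ZMod (2*n))) - p (σ i)) ≤ 0 := by
          rw [flip]
          have := hull2 (Aux.ofs hWin (σ i)) (le_of_lt hd2)
          linarith
        have hQ : det2 (p i - p (σ i))
            (p (σ i + ((Aux.ofs hWin (σ i) : ℕ) : ZMod (2*n)) + 1) - p (σ i)) ≤ 0 := by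
          rw [flip, hcast]
          have := hull2 (Aux.ofs hWin (σ i) + 1) (by omega)
          linarith
        have hc3 : 0 ≤ det2 (p i - p (σ i)) (c - p (σ i)) := by
          rw [flip]; linarith
        have hchord := Aux.chord_le (hcirc (σ i)) (hcirc i)
          (hcirc (σ i + ((Aux.ofs hWin (σ i) : ℕ) : ZMod (2*n))))
          (hcirc (σ i + ((Aux.ofs hWin (σ i) : ℕ) : ZMod (2*n)) + 1))
          hpne hP hQ hc3
        calc V ≤ _ := hH2
          _ ≤ dist (p (σ i)) (p i) := hchord
          _ = dist (p i) (p (σ i)) := dist_comm _ _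
      · -- center on the positive side: use the heavy edge on the arc i → σ i
        have hcast : i + ((Aux.ofs hWin i : ℕ) : ZMod (2*n)) + 1
            = i + (((Aux.ofs hWin i + 1 : ℕ)) : ZMod (2*n)) := by push_cast; ring
        have hP : det2 (p (σ i) - p i)
            (p (i + ((Aux.ofs hWin i : ℕ) : ZMod (2*n))) - p i) ≤ 0 :=
          hull1 (Aux.ofs hWin i) (le_of_lt hd1)
        have hQ : det2 (p (σ i) - p i)
            (p (i + ((Aux.ofs hWin i : ℕ) : ZMod (2*n)) + 1) - p i) ≤ 0 := by
          rw [hcast]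
          exact hull1 (Aux.ofs hWin i + 1) (by omega)
        have hchord := Aux.chord_le (hcirc i) (hcirc (σ i))
          (hcirc (i + ((Aux.ofs hWin i : ℕ) : ZMod (2*n))))
          (hcirc (i + ((Aux.ofs hWin i : ℕ) : ZMod (2*n)) + 1))
          (fun h => hneq i (hinj h.symm)) hP hQ (le_of_lt hcs)
        exact le_trans hH1 hchord
    exact ⟨σ, hNCM, le_antisymm (le_ciInf hEdge) (hub σ hNCM)⟩
  · rintro v ⟨σ', hσ', rfl⟩
    exact hub σ' hσ'
end
end

section
/- Let p_0, p_1, …, p_{2n−1} be 2n distinct points on a common circle in counterclockwise order. Then there exists a perfect non-crossing matching of the points consisting only of boundary edges whose maximum edge length is at most the maximum edge length of every perfect non-crossing matching of the points. -/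
noncomputable section

namespace MM
open Real Complex

theorem exp_sub_exp (a b : ℝ) :
    Complex.exp (a * I) - Complex.exp (b * I)
      = Complex.exp ((((a + b) / 2 : ℝ)) * I) * (2 * (Real.sin ((a - b) / 2) : ℂ) * I) := by
  rw [Complex.ofReal_sin]
  have hu : (a : ℂ) * I = (((a+b)/2 : ℝ) : ℂ) * I + (((a-b)/2 : ℝ) : ℂ) * I := by push_cast; ring
  have hv : (b : ℂ) * I = (((a+b)/2 : ℝ) : ℂ) * I - (((a-b)/2 : ℝ) : ℂ) * I := by push_cast; ring
  rw [hu, hv, Complex.exp_add, Complex.exp_sub, Complex.sin, neg_mul, Complex.exp_neg]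
  have hI : (I:ℂ) * I = -1 := Complex.I_mul_I
  set x := Complex.exp ((((a+b)/2 : ℝ) : ℂ) * I)
  set y := Complex.exp ((((a-b)/2 : ℝ) : ℂ) * I)
  have hy : y ≠ 0 := Complex.exp_ne_zero _
  field_simp
  linear_combination (x*y^2 - x) * hI

theorem conj_diff_mul (z : ℂ) (a b c : ℝ) :
    ((starRingEnd ℂ) (z * Complex.exp (b*I) - z * Complex.exp (a*I))
      * (z * Complex.exp (c*I) - z * Complex.exp (a*I))).im
    = Complex.normSq z *
        (4 * Real.sin ((b-a)/2) * Real.sin ((c-a)/2) * Real.sin ((c-b)/2)) := by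
  have hconjE : ∀ t : ℝ, (starRingEnd ℂ) (Complex.exp ((t:ℂ)*I)) = Complex.exp (-(t:ℂ)*I) := by
    intro t
    rw [← Complex.exp_conj]
    congr 1
    simp
  have hEmul : Complex.exp (-((((b+a)/2 : ℝ)):ℂ)*I) * Complex.exp ((((c+a)/2 : ℝ):ℂ)*I)
      = Complex.exp ((((c-b)/2 : ℝ):ℂ)*I) := by
    rw [← Complex.exp_add]
    congr 1
    push_cast
    ring
  have hzz : (starRingEnd ℂ) z * z = (Complex.normSq z : ℂ) := by
    rw [mul_comm, Complex.mul_conj]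
  have hI : (I:ℂ) * I = -1 := Complex.I_mul_I
  have key : (starRingEnd ℂ) (z * Complex.exp ((b:ℂ)*I) - z * Complex.exp ((a:ℂ)*I))
      * (z * Complex.exp ((c:ℂ)*I) - z * Complex.exp ((a:ℂ)*I))
      = (Complex.normSq z : ℂ) * Complex.exp ((((c-b)/2 : ℝ))*I)
        * (4 * (Real.sin ((b-a)/2) : ℂ) * (Real.sin ((c-a)/2) : ℂ)) := by
    rw [← mul_sub z, ← mul_sub z, exp_sub_exp b a, exp_sub_exp c a]
    simp only [map_mul, Complex.conj_ofReal, Complex.conj_I, hconjE, map_ofNat]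
    set u := (starRingEnd ℂ) z
    set E1n := Complex.exp (-((((b+a)/2 : ℝ)):ℂ)*I)
    set E2 := Complex.exp ((((c+a)/2 : ℝ):ℂ)*I)
    set S1 := ((Real.sin ((b-a)/2) : ℝ) : ℂ)
    set S2 := ((Real.sin ((c-a)/2) : ℝ) : ℂ)
    linear_combination (-4*S1*S2*u*z*E1n*E2) * hI + (4*S1*S2*E1n*E2) * hzz
      + (4*S1*S2*(Complex.normSq z : ℂ)) * hEmul
  rw [key]
  set θ := ((c-b)/2 : ℝ) with hθ
  set s1 := Real.sin ((b-a)/2)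
  set s2 := Real.sin ((c-a)/2)
  simp [Complex.mul_im, Complex.mul_re, Complex.exp_ofReal_mul_I_re, Complex.exp_ofReal_mul_I_im]
  ring

noncomputable def W (x : Pt) : ℂ := x 0 + x 1 * Complex.I

lemma W_sub (x y : Pt) : W (x - y) = W x - W y := by
  simp [W, PiLp.sub_apply]; ring

lemma W_inj : Function.Injective W := by
  intro x y h
  have hre := congrArg Complex.re h
  have him := congrArg Complex.im h
  simp [W] at hre him
  ext i
  fin_cases i <;> assumption

lemma dist_W (x y : Pt) : dist x y = ‖W x - W y‖ := by
  rw [EuclideanSpace.dist_eq, Complex.norm_def, Complex.normSq_apply]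
  simp [W, Fin.sum_univ_two, Real.dist_eq]
  congr 1 <;> ring

lemma det2_W (u v : Pt) : det2 u v = ((starRingEnd ℂ) (W u) * W v).im := by
  simp [det2, W]; ring

section main
variable {N : ℕ} (p : ZMod N → Pt) (c : Pt) (r : ℝ)

noncomputable def w (i : ZMod N) : ℂ := W (p i - c)

lemma w_sub (i j : ZMod N) : w p c i - w p c j = W (p i) - W (p j) := by
  simp [w, W_sub]

variable (hr : 0 < r) (hd : ∀ i, dist (p i) c = r)
include hr hd

lemma abs_w (i : ZMod N) : ‖w p c i‖ = r := by
  have h1 : dist (p i) c = ‖W (p i) - W c‖ := dist_W _ _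
  rw [hd i] at h1
  rw [w, W_sub, ← h1]

lemma w_ne (i : ZMod N) : w p c i ≠ 0 := by
  intro h
  have := abs_w p c r hr hd i
  rw [h] at this
  simp at this
  exact absurd this.symm (ne_of_gt hr)

noncomputable def A (i : ZMod N) : ℝ :=
  if 0 ≤ (w p c i / w p c 0).arg then (w p c i / w p c 0).arg
  else (w p c i / w p c 0).arg + 2*π

lemma A_zero : A p c 0 = 0 := by
  unfold A
  rw [div_self (w_ne p c r hr hd 0)]
  simp [Complex.arg_one]

lemma exp_A (i : ZMod N) : w p c i = w p c 0 * Complex.exp ((A p c i : ℝ) * I) := by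
  have h0 : ‖w p c i / w p c 0‖ = 1 := by
    rw [norm_div, abs_w p c r hr hd, abs_w p c r hr hd, div_self (ne_of_gt hr)]
  have h1 : Complex.exp ((w p c i / w p c 0).arg * I) = w p c i / w p c 0 := by
    have := Complex.norm_mul_exp_arg_mul_I (w p c i / w p c 0)
    rwa [h0, Complex.ofReal_one, one_mul] at this
  unfold A
  split_ifs
  · rw [h1, mul_div_cancel₀ _ (w_ne p c r hr hd 0)]
  · have : ((((w p c i / w p c 0).arg + 2*π : ℝ)) : ℂ) * I
        = (w p c i / w p c 0).arg * I + 2*π*I := by push_cast; ring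
    rw [this, Complex.exp_add, Complex.exp_two_pi_mul_I, mul_one, h1,
      mul_div_cancel₀ _ (w_ne p c r hr hd 0)]

variable (hinj : Function.Injective p)
include hinj

lemma A_mem (i : ZMod N) (hi : i ≠ 0) : 0 < A p c i ∧ A p c i < 2*π := by
  have hζne : (w p c i / w p c 0) ≠ 1 := by
    intro h
    rw [div_eq_one_iff_eq (w_ne p c r hr hd 0)] at h
    have : p i - c = p 0 - c := W_inj h
    have : p i = p 0 := by
      have := congrArg (· + c) this
      simpa using this
    exact hi (hinj this)
  have hargne : (w p c i / w p c 0).arg ≠ 0 := by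
    intro h
    have h0 : ‖w p c i / w p c 0‖ = 1 := by
      rw [norm_div, abs_w p c r hr hd, abs_w p c r hr hd, div_self (ne_of_gt hr)]
    have := Complex.norm_mul_exp_arg_mul_I (w p c i / w p c 0)
    rw [h0, h, Complex.ofReal_one, one_mul, Complex.ofReal_zero, zero_mul,
      Complex.exp_zero] at this
    exact hζne this.symm
  have hle := Complex.arg_le_pi (w p c i / w p c 0)
  have hgt := Complex.neg_pi_lt_arg (w p c i / w p c 0)
  have hpi := Real.pi_pos
  unfold A
  split_ifs with h
  · constructor
    · cases lt_or_eq_of_le h with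
      | inl h' => exact h'
      | inr h' => exact absurd h'.symm hargne
    · nlinarith
  · push_neg at h
    constructor <;> nlinarith

omit hinj in
lemma dist_A (i j : ZMod N) :
    dist (p i) (p j) = 2 * r * |Real.sin ((A p c j - A p c i)/2)| := by
  rw [dist_W, ← w_sub p c, exp_A p c r hr hd i, exp_A p c r hr hd j, ← mul_sub,
    exp_sub_exp (A p c i) (A p c j)]
  have h2 : (A p c i - A p c j)/2 = -((A p c j - A p c i)/2) := by ring
  rw [norm_mul, norm_mul, norm_mul, norm_mul, abs_w p c r hr hd, Complex.norm_exp_ofReal_mul_I,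
    Complex.norm_two, Complex.norm_I, Complex.norm_real, Real.norm_eq_abs, h2, Real.sin_neg, abs_neg]
  ring

omit hinj in
lemma det2_A (i j k : ZMod N) :
    det2 (p j - p i) (p k - p i)
      = r^2 * (4 * Real.sin ((A p c j - A p c i)/2) * Real.sin ((A p c k - A p c i)/2)
          * Real.sin ((A p c k - A p c j)/2)) := by
  have hW : ∀ a b : ZMod N, W (p a - p b) = w p c a - w p c b := by
    intro a b
    rw [W_sub, ← w_sub p c]
  rw [det2_W, hW, hW, exp_A p c r hr hd i, exp_A p c r hr hd j, exp_A p c r hr hd k,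
    conj_diff_mul]
  have : Complex.normSq (w p c 0) = r^2 := by
    rw [← Complex.sq_norm, abs_w p c r hr hd]
  rw [this]

end main
section main2
variable {N : ℕ} [NeZero N] (p : ZMod N → Pt) (c : Pt) (r : ℝ)
variable (hr : 0 < r) (hd : ∀ i, dist (p i) c = r) (hinj : Function.Injective p)
variable (htri : ∀ i j k : ZMod N, i.val < j.val → j.val < k.val →
    0 < det2 (p j - p i) (p k - p i))

include hr hd hinj in
lemma A_nonneg (x : ZMod N) : 0 ≤ A p c x := by
  by_cases hx : x = 0
  · rw [hx, A_zero p c r hr hd]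
  · exact le_of_lt (A_mem p c r hr hd hinj x hx).1

include hr hd hinj in
lemma A_lt_two_pi (x : ZMod N) : A p c x < 2*π := by
  by_cases hx : x = 0
  · rw [hx, A_zero p c r hr hd]; positivity
  · exact (A_mem p c r hr hd hinj x hx).2

include hr hd hinj htri in
lemma A_lt (i j : ZMod N) (hij : i.val < j.val) : A p c i < A p c j := by
  have hj : j ≠ 0 := by
    intro h; rw [h, ZMod.val_zero] at hij; omega
  have hmj := A_mem p c r hr hd hinj j hj
  by_cases hi : i = 0
  · rw [hi, A_zero p c r hr hd]; exact hmj.1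
  · have hmi := A_mem p c r hr hd hinj i hi
    have h0i : (0:ZMod N).val < i.val := by rw [ZMod.val_zero]; exact ZMod.val_pos.mpr hi
    have hdet := htri 0 i j h0i hij
    rw [det2_A p c r hr hd, A_zero p c r hr hd, sub_zero, sub_zero] at hdet
    have hpi := Real.pi_pos
    have hs1 : 0 < Real.sin (A p c i / 2) :=
      Real.sin_pos_of_pos_of_lt_pi (by linarith [hmi.1]) (by linarith [hmi.2])
    have hs2 : 0 < Real.sin (A p c j / 2) :=
      Real.sin_pos_of_pos_of_lt_pi (by linarith [hmj.1]) (by linarith [hmj.2])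
    have hr2 : 0 < r^2 := by positivity
    have hs3 : 0 < Real.sin ((A p c j - A p c i)/2) := by
      by_contra hcon
      push_neg at hcon
      nlinarith [mul_pos hr2 (mul_pos hs1 hs2)]
    by_contra hle
    push_neg at hle
    have : Real.sin ((A p c j - A p c i)/2) ≤ 0 :=
      Real.sin_nonpos_of_nonpos_of_neg_pi_le (by linarith)
        (by nlinarith [hmi.2, hmj.1])
    linarith

noncomputable def B (t : ℕ) : ℝ := 2*π*(t / N : ℕ) + A p c (t : ℕ)

include hr hd hinj htri in
lemma B_strictMono : StrictMono (B p c) := by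
  have hNpos : 0 < N := Nat.pos_of_ne_zero (NeZero.ne N)
  apply strictMono_nat_of_lt_succ
  intro t
  have hdm := Nat.div_add_mod t N
  have hsN : t % N < N := Nat.mod_lt _ hNpos
  by_cases hs : t % N + 1 = N
  · have hexp : N * (t / N + 1) = N * (t / N) + N := by ring
    have ht1 : t + 1 = N * (t / N + 1) := by omega
    have hdiv : (t+1)/N = t/N + 1 := by
      rw [ht1, Nat.mul_div_cancel_left _ hNpos]
    have hcast : ((t+1 : ℕ) : ZMod N) = 0 := by
      rw [ht1]; push_cast [ZMod.natCast_self]; ring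
    unfold B
    rw [hdiv, hcast, A_zero p c r hr hd]
    push_cast
    have := A_lt_two_pi p c r hr hd hinj ((t : ℕ) : ZMod N)
    have hpi := Real.pi_pos
    nlinarith
  · have hdiv : (t+1)/N = t/N := by
      have h1 : t + 1 = N * (t/N) + (t % N + 1) := by omega
      rw [h1, Nat.mul_add_div hNpos, Nat.div_eq_of_lt (show t % N + 1 < N by omega), add_zero]
    have h1' : t + 1 = N*(t/N) + (t % N + 1) := by omega
    have hval1 : ((t+1 : ℕ) : ZMod N).val = t % N + 1 := by
      rw [ZMod.val_natCast, h1', Nat.mul_add_mod,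
        Nat.mod_eq_of_lt (show t % N + 1 < N by omega)]
    have hval0 : ((t : ℕ) : ZMod N).val = t % N := ZMod.val_natCast N t
    unfold B
    rw [hdiv]
    have := A_lt p c r hr hd hinj htri ((t:ℕ) : ZMod N) ((t+1:ℕ) : ZMod N)
      (by rw [hval0, hval1]; omega)
    push_cast at this ⊢
    linarith

lemma B_add_N (t : ℕ) : B p c (t + N) = B p c t + 2*π := by
  have hNpos : 0 < N := Nat.pos_of_ne_zero (NeZero.ne N)
  unfold B
  rw [Nat.add_div_right _ hNpos]
  have : ((t + N : ℕ) : ZMod N) = ((t : ℕ) : ZMod N) := by push_cast [ZMod.natCast_self]; ring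
  rw [this]
  push_cast
  ring

include hr hd hinj htri in
lemma dist_B (a b : ℕ) (hab : a ≤ b) (hbn : b ≤ a + N) :
    dist (p a) (p b) = 2*r*Real.sin ((B p c b - B p c a)/2) := by
  have hmono := B_strictMono p c r hr hd hinj htri
  have hdl : a / N ≤ b / N := Nat.div_le_div_right hab
  set mnat := b / N - a / N with hm
  have hBd : (B p c b - B p c a)/2
      = (A p c (b : ℕ) - A p c (a : ℕ))/2 + (mnat : ℤ) * π := by
    unfold B
    have : ((b/N : ℕ) : ℝ) - ((a/N : ℕ) : ℝ) = (mnat : ℝ) := by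
      rw [hm]; push_cast [Nat.cast_sub hdl]; ring
    push_cast at this ⊢
    linear_combination π * this
  have habs : |Real.sin ((B p c b - B p c a)/2)|
      = |Real.sin ((A p c (b:ℕ) - A p c (a:ℕ))/2)| := by
    rw [hBd, Real.sin_add_int_mul_pi, abs_mul]
    have : |((-1 : ℝ))^(mnat : ℤ)| = 1 := by
      rw [zpow_natCast, _root_.abs_pow, abs_neg, abs_one, one_pow]
    rw [this, one_mul]
  have hge : B p c a ≤ B p c b := hmono.monotone hab
  have hle2 : B p c b - B p c a ≤ 2*π := by
    have := hmono.monotone hbn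
    rw [B_add_N] at this
    linarith
  have hsnn : 0 ≤ Real.sin ((B p c b - B p c a)/2) :=
    Real.sin_nonneg_of_nonneg_of_le_pi (by linarith) (by linarith)
  rw [dist_A p c r hr hd, habs.symm, _root_.abs_of_nonneg hsnn]

include hr hd hinj htri in
lemma chord_ge (a k b m : ℕ) (h1 : a ≤ k) (h2 : k + 1 ≤ b) (h3 : b ≤ m) (h4 : m + 1 ≤ a + N) :
    min (dist (p (k:ℕ)) (p ((k+1:ℕ)))) (dist (p (m:ℕ)) (p ((m+1:ℕ))))
      ≤ dist (p (a:ℕ)) (p (b:ℕ)) := by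
  have hNpos : 0 < N := Nat.pos_of_ne_zero (NeZero.ne N)
  have hmono := B_strictMono p c r hr hd hinj htri
  have hpi := Real.pi_pos
  rw [dist_B p c r hr hd hinj htri a b (by omega) (by omega),
    dist_B p c r hr hd hinj htri k (k+1) (by omega) (by omega),
    dist_B p c r hr hd hinj htri m (m+1) (by omega) (by omega)]
  set α := (B p c (k+1) - B p c k)/2 with hα
  set β := (B p c (m+1) - B p c m)/2 with hβ
  set s := (B p c b - B p c a)/2 with hs
  have hα0 : 0 < α := by
    have := hmono (show k < k+1 by omega); simp only [hα]; linarith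
  have hβ0 : 0 < β := by
    have := hmono (show m < m+1 by omega); simp only [hβ]; linarith
  have hαs : α ≤ s := by
    have e1 := hmono.monotone h1
    have e2 := hmono.monotone h2
    simp only [hα, hs]; linarith
  have hsβ : s + β ≤ π := by
    have e3 := hmono.monotone h3
    have e4 := hmono.monotone h4
    rw [B_add_N] at e4
    simp only [hβ, hs]; linarith
  have hsin : min (Real.sin α) (Real.sin β) ≤ Real.sin s := by
    rcases le_or_gt s (π/2) with hc | hc
    · refine min_le_of_left_le ?_
      exact Real.strictMonoOn_sin.monotoneOn ⟨by linarith, by linarith⟩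
        ⟨by linarith, by linarith⟩ hαs
    · refine min_le_of_right_le ?_
      rw [← Real.sin_pi_sub s]
      exact Real.strictMonoOn_sin.monotoneOn ⟨by linarith, by linarith⟩
        ⟨by linarith, by linarith⟩ (by linarith)
  rcases le_total (Real.sin α) (Real.sin β) with hc | hc
  · rw [min_eq_left hc] at hsin
    refine min_le_of_left_le ?_
    nlinarith
  · rw [min_eq_right hc] at hsin
    refine min_le_of_right_le ?_
    nlinarith

end main2
lemma det2_cyc (u v w : Pt) : det2 (v - u) (w - u) = det2 (w - v) (u - v) := by
  simp only [det2, PiLp.sub_apply]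
  ring

lemma det2_self (u : Pt) : det2 u u = 0 := by simp [det2]; ring

section comb
variable {N : ℕ} [NeZero N] (p : ZMod N → Pt) (c : Pt) (r : ℝ)
variable (hinj : Function.Injective p)
variable (htri : ∀ i j k : ZMod N, i.val < j.val → j.val < k.val →
    0 < det2 (p j - p i) (p k - p i))

-- ZMod helpers
lemma zmod_cast_val (i : ZMod N) : ((i.val : ℕ) : ZMod N) = i := by
  rw [ZMod.natCast_val, ZMod.cast_id]

lemma zmod_val_add_one (i : ZMod N) (h : i.val + 1 < N) : (i + 1).val = i.val + 1 := by
  have : i + 1 = ((i.val + 1 : ℕ) : ZMod N) := by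
    push_cast [zmod_cast_val]
    ring
  rw [this, ZMod.val_cast_of_lt h]

lemma zmod_add_one_zero (i : ZMod N) (h : i.val + 1 = N) : i + 1 = 0 := by
  have : i + 1 = ((i.val + 1 : ℕ) : ZMod N) := by
    push_cast [zmod_cast_val]
    ring
  rw [this, h, ZMod.natCast_self]

lemma zmod_val_sub_one (i : ZMod N) (h : i ≠ 0) : (i - 1).val = i.val - 1 := by
  have hpos : 0 < i.val := ZMod.val_pos.mpr h
  have h1 : i - 1 = ((i.val - 1 : ℕ) : ZMod N) := by
    have : ((i.val - 1 : ℕ) : ZMod N) + 1 = i := by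
      have : (i.val - 1) + 1 = i.val := by omega
      rw [show ((i.val - 1 : ℕ) : ZMod N) + 1 = (((i.val - 1) + 1 : ℕ) : ZMod N) by push_cast; ring,
        this, zmod_cast_val]
    exact (eq_sub_of_add_eq this).symm
  rw [h1, ZMod.val_cast_of_lt (by have := ZMod.val_lt i; omega)]

include hinj htri in
lemma halfplane (u x : ZMod N) (h1 : x ≠ u) (h2 : x ≠ u + 1) :
    0 < det2 (p (u + 1) - p u) (p x - p u) := by
  have hvi : Function.Injective (ZMod.val (n := N)) := ZMod.val_injective N
  have hxu : x.val ≠ u.val := fun h => h1 (hvi h)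
  by_cases hu : u.val + 1 < N
  · have hu1 : (u + 1).val = u.val + 1 := zmod_val_add_one u hu
    have hxu1 : x.val ≠ u.val + 1 := fun h => h2 (hvi (by rw [hu1]; exact h))
    rcases lt_trichotomy x.val u.val with hc | hc | hc
    · have := htri x u (u + 1) hc (by omega)
      calc 0 < det2 (p u - p x) (p (u+1) - p x) := this
        _ = det2 (p (u+1) - p u) (p x - p u) := det2_cyc _ _ _
    · exact absurd hc hxu
    · have := htri u (u+1) x (by omega) (by omega)
      exact this
  · have hu1 : u + 1 = 0 := zmod_add_one_zero u (by have := ZMod.val_lt u; omega)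
    have hx0 : x ≠ 0 := by rw [← hu1]; exact h2
    have hxpos : 0 < x.val := ZMod.val_pos.mpr hx0
    have hxlt : x.val < u.val := by
      have := ZMod.val_lt x; omega
    have := htri (u+1) x u (by rw [hu1, ZMod.val_zero]; omega) hxlt
    calc 0 < det2 (p x - p (u+1)) (p u - p (u+1)) := this
      _ = det2 (p u - p x) (p (u+1) - p x) := det2_cyc _ _ _
      _ = det2 (p (u+1) - p u) (p x - p u) := det2_cyc _ _ _

include hinj htri in
lemma seg_disj (u v : ZMod N) (h1 : v ≠ u) (h2 : v ≠ u + 1) (h3 : v + 1 ≠ u)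
    (h4 : v + 1 ≠ u + 1) :
    segment ℝ (p u) (p (u + 1)) ∩ segment ℝ (p v) (p (v + 1)) = ∅ := by
  have hD1 : 0 < det2 (p (u+1) - p u) (p v - p u) := halfplane p hinj htri u v h1 h2
  have hD2 : 0 < det2 (p (u+1) - p u) (p (v+1) - p u) := halfplane p hinj htri u (v+1) h3 h4
  rw [Set.eq_empty_iff_forall_notMem]
  rintro z ⟨hz1, hz2⟩
  obtain ⟨s1, t1, hs1, ht1, hst1, hz1'⟩ := hz1
  obtain ⟨s2, t2, hs2, ht2, hst2, hz2'⟩ := hz2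
  have e1 : det2 (p (u+1) - p u) (z - p u) = 0 := by
    rw [← hz1']
    simp only [det2, PiLp.sub_apply, PiLp.add_apply, PiLp.smul_apply, smul_eq_mul]
    linear_combination (p u 1 * p (u+1) 0 - p u 0 * p (u+1) 1) * hst1
  have e2 : det2 (p (u+1) - p u) (z - p u)
      = s2 * det2 (p (u+1) - p u) (p v - p u) + t2 * det2 (p (u+1) - p u) (p (v+1) - p u) := by
    rw [← hz2']
    simp only [det2, PiLp.sub_apply, PiLp.add_apply, PiLp.smul_apply, smul_eq_mul]
    linear_combination ((p (u+1) 0 - p u 0) * p u 1 - (p (u+1) 1 - p u 1) * p u 0) * hst2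
  rcases eq_or_lt_of_le hs2 with hc | hc
  · have ht2' : t2 = 1 := by linarith
    rw [← hc, ht2'] at e2
    simp at e2
    linarith [e1, e2, hD2]
  · nlinarith [mul_pos hc hD1, mul_nonneg ht2 hD2.le]

end comb
section matching
variable {N : ℕ} [NeZero N]

def spar (par : ℕ) : ZMod N → ZMod N := fun i => if i.val % 2 = par then i + 1 else i - 1

lemma spar_or (par : ℕ) (i : ZMod N) : spar par i = i + 1 ∨ spar par i = i - 1 := by
  unfold spar
  split <;> simp

variable (hN2 : 2 ∣ N)

include hN2

lemma zmod_val_zero_sub_one : ((0 : ZMod N) - 1).val = N - 1 := by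
  have hNpos : 0 < N := Nat.pos_of_ne_zero (NeZero.ne N)
  have h1 : (0 : ZMod N) - 1 = ((N - 1 : ℕ) : ZMod N) := by
    have h2 : ((N - 1 : ℕ) : ZMod N) + 1 = 0 := by
      rw [show ((N - 1 : ℕ) : ZMod N) + 1 = (((N - 1) + 1 : ℕ) : ZMod N) by push_cast; ring,
        show (N - 1) + 1 = N by omega, ZMod.natCast_self]
    exact (eq_sub_of_add_eq h2).symm
  rw [h1, ZMod.val_cast_of_lt (by omega)]

lemma spar_parity_flip (par : ℕ) (hpar : par < 2) (i : ZMod N) (h : i.val % 2 = par) :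
    (i + 1).val % 2 ≠ par ∧ (i + 1) - 1 = i := by
  constructor
  · have hvl := ZMod.val_lt i
    by_cases hc : i.val + 1 < N
    · rw [zmod_val_add_one i hc]; omega
    · have : i.val + 1 = N := by omega
      rw [zmod_add_one_zero i this, ZMod.val_zero]
      omega
  · ring

lemma spar_parity_flip' (par : ℕ) (hpar : par < 2) (i : ZMod N) (h : ¬(i.val % 2 = par)) :
    (i - 1).val % 2 = par ∧ (i - 1) + 1 = i := by
  refine ⟨?_, by ring⟩
  have hNpos : 0 < N := Nat.pos_of_ne_zero (NeZero.ne N)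
  by_cases h0 : i = 0
  · rw [h0, zmod_val_zero_sub_one hN2]
    rw [h0, ZMod.val_zero] at h
    omega
  · rw [zmod_val_sub_one i h0]
    have := ZMod.val_pos.mpr h0
    omega

lemma spar_invol (par : ℕ) (hpar : par < 2) (i : ZMod N) : spar par (spar par i) = i := by
  by_cases h : i.val % 2 = par
  · have h1 : spar par i = i + 1 := by unfold spar; rw [if_pos h]
    obtain ⟨hp, hs⟩ := spar_parity_flip hN2 par hpar i h
    rw [h1]
    unfold spar
    rw [if_neg hp, hs]
  · have h1 : spar par i = i - 1 := by unfold spar; rw [if_neg h]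
    obtain ⟨hp, hs⟩ := spar_parity_flip' hN2 par hpar i h
    rw [h1]
    unfold spar
    rw [if_pos hp, hs]

omit hN2 in
lemma spar_ne (hN1 : 1 < N) (par : ℕ) (i : ZMod N) : spar par i ≠ i := by
  haveI : Fact (1 < N) := ⟨hN1⟩
  rcases spar_or par i with h | h <;> rw [h]
  · intro hc
    have : (1 : ZMod N) = 0 := by linear_combination hc
    exact one_ne_zero this
  · intro hc
    rw [sub_eq_self] at hc
    exact one_ne_zero hc

variable (p : ZMod N → Pt)
variable (hinj : Function.Injective p)
variable (htri : ∀ i j k : ZMod N, i.val < j.val → j.val < k.val →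
    0 < det2 (p j - p i) (p k - p i))

include hinj htri in
lemma spar_seg (par : ℕ) (hpar : par < 2) :
    ∀ i j : ZMod N, j ≠ i → j ≠ spar par i →
      segment ℝ (p i) (p (spar par i)) ∩ segment ℝ (p j) (p (spar par j)) = ∅ := by
  intro i j h1 h2
  have hji : spar par j ≠ i := by
    intro h
    apply h2
    rw [← h, spar_invol hN2 par hpar]
  have hjj : spar par j ≠ spar par i := by
    intro h
    apply h1
    have := congrArg (spar par) h
    rwa [spar_invol hN2 par hpar, spar_invol hN2 par hpar] at this
  have hsymm : ∀ a : ZMod N, segment ℝ (p a) (p (a - 1))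
      = segment ℝ (p (a - 1)) (p ((a - 1) + 1)) := by
    intro a
    rw [sub_add_cancel, segment_symm]
  by_cases hi : i.val % 2 = par <;> by_cases hj : j.val % 2 = par
  · have hsi : spar par i = i + 1 := by unfold spar; rw [if_pos hi]
    have hsj : spar par j = j + 1 := by unfold spar; rw [if_pos hj]
    rw [hsj] at hji hjj
    rw [hsi] at h2 hjj
    rw [hsi, hsj]
    exact seg_disj p hinj htri i j h1 h2 hji hjj
  · have hsi : spar par i = i + 1 := by unfold spar; rw [if_pos hi]
    have hsj : spar par j = j - 1 := by unfold spar; rw [if_neg hj]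
    rw [hsj] at hji hjj
    rw [hsi] at h2 hjj
    rw [hsi, hsj, hsymm j]
    refine seg_disj p hinj htri i (j - 1) hji hjj ?_ ?_
    · rw [sub_add_cancel]; exact h1
    · rw [sub_add_cancel]; exact h2
  · have hsi : spar par i = i - 1 := by unfold spar; rw [if_neg hi]
    have hsj : spar par j = j + 1 := by unfold spar; rw [if_pos hj]
    rw [hsj] at hji hjj
    rw [hsi] at h2 hjj
    rw [hsi, hsj, hsymm i]
    refine seg_disj p hinj htri (i - 1) j h2 ?_ hjj ?_
    · rw [sub_add_cancel]; exact h1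
    · rw [sub_add_cancel]; exact hji
  · have hsi : spar par i = i - 1 := by unfold spar; rw [if_neg hi]
    have hsj : spar par j = j - 1 := by unfold spar; rw [if_neg hj]
    rw [hsj] at hji hjj
    rw [hsi] at h2 hjj
    rw [hsi, hsj, hsymm i, hsymm j]
    refine seg_disj p hinj htri (i - 1) (j - 1) hjj ?_ ?_ ?_
    · rw [sub_add_cancel]; exact hji
    · rw [sub_add_cancel]; exact h2
    · rw [sub_add_cancel, sub_add_cancel]; exact h1
end matching
section core
variable {N : ℕ} [NeZero N] (p : ZMod N → Pt) (c : Pt) (r : ℝ)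
variable (hr : 0 < r) (hd : ∀ i, dist (p i) c = r) (hinj : Function.Injective p)
variable (htri : ∀ i j k : ZMod N, i.val < j.val → j.val < k.val →
    0 < det2 (p j - p i) (p k - p i))
variable (hN2 : 2 ∣ N)

include hN2 in
lemma odd_val_sub (k m : ZMod N) (hk : k.val % 2 = 0) (hm : m.val % 2 = 1) :
    (m - k).val % 2 = 1 := by
  have hcast : ∀ v : ZMod N, ((v.val : ℕ) : ZMod 2) = ZMod.castHom hN2 (ZMod 2) v := by
    intro v
    rw [ZMod.castHom_apply, ZMod.natCast_val]
  have h1 : (((m - k).val : ℕ) : ZMod 2) = ((m.val : ℕ) : ZMod 2) - ((k.val : ℕ) : ZMod 2) := by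
    rw [hcast, hcast, hcast, map_sub]
  have h22 : (2 : ZMod 2) = 0 := rfl
  have hm2 : ((m.val : ℕ) : ZMod 2) = 1 := by
    rw [show m.val = 2 * (m.val / 2) + 1 by omega]
    push_cast
    rw [h22]
    ring
  have hk2 : ((k.val : ℕ) : ZMod 2) = 0 := by
    rw [show k.val = 2 * (k.val / 2) by omega]
    push_cast
    rw [h22]
    ring
  rw [hm2, hk2, sub_zero] at h1
  have h2 := congrArg ZMod.val h1
  rw [ZMod.val_natCast] at h2
  exact h2

include hr hd hinj htri hN2 in
lemma exists_long_edge (k m : ZMod N) (hk : k.val % 2 = 0) (hm : m.val % 2 = 1)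
    (σ' : ZMod N → ZMod N) (hinv : ∀ i, σ' (σ' i) = i) (hfix : ∀ i, σ' i ≠ i) :
    ∃ x, min (dist (p k) (p (k + 1))) (dist (p m) (p (m + 1))) ≤ dist (p x) (p (σ' x)) := by
  by_contra hcon
  push_neg at hcon
  set d := (m - k).val with hdd
  have hdodd : d % 2 = 1 := odd_val_sub hN2 k m hk hm
  have hdN : d < N := ZMod.val_lt _
  have hd1 : 1 ≤ d := by omega
  classical
  set f : ℕ → ZMod N := fun t => k + 1 + (t : ℕ) with hf
  set P : Finset (ZMod N) := (Finset.range d).image f with hP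
  have hPmem : ∀ v : ZMod N, v ∈ P ↔ (v - (k + 1)).val < d := by
    intro v
    constructor
    · intro hv
      obtain ⟨t, ht, rfl⟩ := Finset.mem_image.mp hv
      rw [Finset.mem_range] at ht
      have : f t - (k + 1) = ((t : ℕ) : ZMod N) := by rw [hf]; ring
      rw [this, ZMod.val_natCast, Nat.mod_eq_of_lt (by omega)]
      exact ht
    · intro hv
      refine Finset.mem_image.mpr ⟨(v - (k + 1)).val, Finset.mem_range.mpr hv, ?_⟩
      rw [hf]
      simp only [zmod_cast_val]
      ring
  have hclosed : ∀ x ∈ P, σ' x ∈ P := by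
    intro x hx
    rw [hPmem] at hx ⊢
    by_contra hy
    push_neg at hy
    have huN : (σ' x - (k + 1)).val < N := ZMod.val_lt _
    have hdc : ((d : ℕ) : ZMod N) = m - k := by rw [hdd, zmod_cast_val]
    have ec1 : ((k.val + 1 + (x - (k + 1)).val : ℕ) : ZMod N) = x := by
      push_cast [zmod_cast_val]
      ring
    have ec2 : ((k.val + 1 + (σ' x - (k + 1)).val : ℕ) : ZMod N) = σ' x := by
      push_cast [zmod_cast_val]
      ring
    have ec3 : ((k.val + d : ℕ) : ZMod N) = m := by
      push_cast [zmod_cast_val, hdc]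
      ring
    have ec4 : ((k.val + d + 1 : ℕ) : ZMod N) = m + 1 := by
      push_cast [zmod_cast_val, hdc]
      ring
    have ec5 : ((k.val + N : ℕ) : ZMod N) = k := by
      push_cast [ZMod.natCast_self, zmod_cast_val]
      ring
    have ec6 : ((k.val + N + 1 : ℕ) : ZMod N) = k + 1 := by
      push_cast [ZMod.natCast_self, zmod_cast_val]
      ring
    have hcomp := chord_ge p c r hr hd hinj htri (k.val + 1 + (x - (k + 1)).val) (k.val + d)
      (k.val + 1 + (σ' x - (k + 1)).val)
      (k.val + N) (by omega) (by omega) (by omega) (by omega)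
    rw [ec1, ec2, ec3, ec4, ec5, ec6] at hcomp
    have hlt := hcon x
    rw [min_comm] at hcomp
    linarith
  have hcard : P.card = d := by
    rw [hP]
    rw [Finset.card_image_of_injOn, Finset.card_range]
    intro t1 ht1 t2 ht2 he
    simp only [Finset.coe_range, Set.mem_Iio] at ht1 ht2
    have : ((t1 : ℕ) : ZMod N) = ((t2 : ℕ) : ZMod N) := by
      have := he
      rw [hf] at this
      simpa using this
    have := congrArg ZMod.val this
    rwa [ZMod.val_natCast, ZMod.val_natCast, Nat.mod_eq_of_lt (by omega),
      Nat.mod_eq_of_lt (by omega)] at this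
  have hprod : ∏ _x ∈ P, (-1 : ℤ) = 1 := by
    refine Finset.prod_involution (fun a _ => σ' a) (fun a _ => by ring) ?_ ?_ ?_
    · intro a _ _
      exact hfix a
    · intro a ha
      exact hclosed a ha
    · intro a ha
      exact hinv a
  rw [Finset.prod_const, hcard] at hprod
  have heven : Even d := by
    rwa [neg_one_pow_eq_one_iff_even (by norm_num : (-1 : ℤ) ≠ 1)] at hprod
  obtain ⟨e, he⟩ := heven
  omega

include hN2 in
lemma gap_of (par : ℕ) (hpar : par < 2) (i0 : ZMod N) :
    ∃ g : ZMod N, g.val % 2 = par ∧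
      dist (p g) (p (g + 1)) = dist (p i0) (p (spar par i0)) := by
  by_cases h : i0.val % 2 = par
  · refine ⟨i0, h, ?_⟩
    rw [show spar par i0 = i0 + 1 by unfold spar; rw [if_pos h]]
  · obtain ⟨hp, hs⟩ := spar_parity_flip' hN2 par hpar i0 h
    refine ⟨i0 - 1, hp, ?_⟩
    rw [show spar par i0 = i0 - 1 by unfold spar; rw [if_neg h], hs, dist_comm]
end core
end MM

/-- For `2n` distinct points on a common circle in counterclockwise order,
there exists a perfect non-crossing matching consisting only of boundary edges whose maximum
edge length is at most the maximum edge length of every perfect non-crossing matching. -/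
theorem minmax_attained_by_boundary_matching (n : ℕ) (hn : 0 < n) (p : ZMod (2 * n) → Pt)
    (hccw : OnCircleCCW (2 * n) p) :
    ∃ σ, IsNCM (2 * n) p σ ∧ (∀ i, σ i = i + 1 ∨ σ i = i - 1) ∧
      ∀ σ', IsNCM (2 * n) p σ' →
        (⨆ i, dist (p i) (p (σ i))) ≤ ⨆ i, dist (p i) (p (σ' i)) := by
  classical
  haveI : NeZero (2 * n) := ⟨by omega⟩
  obtain ⟨⟨c, r, hr, hd⟩, hinj, htri⟩ := hccw
  have hN2 : 2 ∣ 2 * n := ⟨n, rfl⟩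
  have hN1 : 1 < 2 * n := by omega
  haveI : Nonempty (ZMod (2 * n)) := ⟨0⟩
  obtain ⟨i0, hi0⟩ := Finite.exists_max (fun i : ZMod (2 * n) => dist (p i) (p (MM.spar 0 i)))
  obtain ⟨i1, hi1⟩ := Finite.exists_max (fun i : ZMod (2 * n) => dist (p i) (p (MM.spar 1 i)))
  have hbdd0 : BddAbove (Set.range fun i : ZMod (2 * n) => dist (p i) (p (MM.spar 0 i))) :=
    Set.Finite.bddAbove (Set.finite_range _)
  have hbdd1 : BddAbove (Set.range fun i : ZMod (2 * n) => dist (p i) (p (MM.spar 1 i))) :=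
    Set.Finite.bddAbove (Set.finite_range _)
  have hM0 : (⨆ i, dist (p i) (p (MM.spar 0 i))) = dist (p i0) (p (MM.spar 0 i0)) :=
    le_antisymm (ciSup_le hi0) (le_ciSup hbdd0 i0)
  have hM1 : (⨆ i, dist (p i) (p (MM.spar 1 i))) = dist (p i1) (p (MM.spar 1 i1)) :=
    le_antisymm (ciSup_le hi1) (le_ciSup hbdd1 i1)
  obtain ⟨k, hk, hkd⟩ := MM.gap_of p hN2 0 (by omega) i0
  obtain ⟨m, hm, hmd⟩ := MM.gap_of p hN2 1 (by omega) i1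
  refine ⟨if (⨆ i, dist (p i) (p (MM.spar 0 i))) ≤ (⨆ i, dist (p i) (p (MM.spar 1 i)))
    then MM.spar 0 else MM.spar 1, ?_, ?_, ?_⟩
  · split_ifs
    · exact ⟨MM.spar_invol hN2 0 (by omega), MM.spar_ne hN1 0,
        MM.spar_seg hN2 p hinj htri 0 (by omega)⟩
    · exact ⟨MM.spar_invol hN2 1 (by omega), MM.spar_ne hN1 1,
        MM.spar_seg hN2 p hinj htri 1 (by omega)⟩
  · intro i
    split_ifs
    · exact MM.spar_or 0 i
    · exact MM.spar_or 1 i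
  · intro σ' hσ'
    obtain ⟨hinv', hfix', _⟩ := hσ'
    obtain ⟨x, hx⟩ := MM.exists_long_edge p c r hr hd hinj htri hN2 k m hk hm σ' hinv' hfix'
    have hbdd' : BddAbove (Set.range fun i : ZMod (2 * n) => dist (p i) (p (σ' i))) :=
      Set.Finite.bddAbove (Set.finite_range _)
    have hstep : min (⨆ i, dist (p i) (p (MM.spar 0 i))) (⨆ i, dist (p i) (p (MM.spar 1 i)))
        ≤ dist (p x) (p (σ' x)) := by
      rw [hM0, hM1, ← hkd, ← hmd]
      exact hx
    have hfin : dist (p x) (p (σ' x)) ≤ ⨆ i, dist (p i) (p (σ' i)) := le_ciSup hbdd' x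
    split_ifs with hif
    · calc (⨆ i, dist (p i) (p (MM.spar 0 i)))
          = min (⨆ i, dist (p i) (p (MM.spar 0 i))) (⨆ i, dist (p i) (p (MM.spar 1 i))) :=
            (min_eq_left hif).symm
        _ ≤ dist (p x) (p (σ' x)) := hstep
        _ ≤ _ := hfin
    · calc (⨆ i, dist (p i) (p (MM.spar 1 i)))
          = min (⨆ i, dist (p i) (p (MM.spar 0 i))) (⨆ i, dist (p i) (p (MM.spar 1 i))) :=
            (min_eq_right (le_of_not_ge hif)).symm
        _ ≤ dist (p x) (p (σ' x)) := hstep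
        _ ≤ _ := hfin
end
end

section
/- Let p_0, p_1, …, p_{2n−1} be 2n distinct points on a common circle in counterclockwise order. Then the minimum, over all perfect non-crossing matchings M of the points, of the maximum edge length of M equals the minimum of the two values max_{0 ≤ k < n} dist(p_{2k}, p_{2k+1}) and max_{0 ≤ k < n} dist(p_{2k+1}, p_{2k+2}) (indices modulo 2n), i.e., the optimum is attained by one of the two perfect matchings consisting only of boundary edges. -/
noncomputable section

open Real

/-! ### Elementary geometry helpers -/

lemma det2_cyc_s9 (a b c : Pt) : det2 (b - a) (c - a) = det2 (c - b) (a - b) := by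
  simp only [det2, PiLp.sub_apply]; ring

lemma seg_disjoint_s9 (a b c d : Pt) (h1 : 0 < det2 (b - a) (c - a))
    (h2 : 0 < det2 (b - a) (d - a)) :
    segment ℝ a b ∩ segment ℝ c d = ∅ := by
  ext x
  simp only [Set.mem_inter_iff, Set.mem_empty_iff_false, iff_false, not_and]
  intro hab hcd
  obtain ⟨t, u, ht, hu, htu, hx⟩ := hab
  obtain ⟨s, w, hs, hw, hsw, hy⟩ := hcd
  have hu' : u = 1 - t := by linarith
  have hw' : w = 1 - s := by linarith
  subst hu' hw'
  have e1 : det2 (b - a) (x - a) = 0 := by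
    rw [← hx]
    simp only [det2, PiLp.sub_apply, PiLp.add_apply, PiLp.smul_apply, smul_eq_mul]
    ring
  have e2 : det2 (b - a) (x - a)
      = s * det2 (b - a) (c - a) + (1 - s) * det2 (b - a) (d - a) := by
    rw [← hy]
    simp only [det2, PiLp.sub_apply, PiLp.add_apply, PiLp.smul_apply, smul_eq_mul]
    ring
  nlinarith [mul_nonneg hs h1.le, mul_nonneg hw h2.le, mul_pos h1 h2]

/-! ### Trigonometric identities -/

lemma trig_prod (s t : ℝ) :
    sin (2*t - 2*s) - sin (2*t) + sin (2*s) = 4 * sin s * sin t * sin (t - s) := by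
  rw [show 2*t - 2*s = 2*(t-s) by ring, Real.sin_two_mul, Real.sin_two_mul,
    Real.sin_two_mul, Real.sin_sub, Real.cos_sub]
  linear_combination (2*sin t*cos t)*(Real.sin_sq_add_cos_sq s)
    - (2*sin s*cos s)*(Real.sin_sq_add_cos_sq t)

lemma trig_prod' (x y : ℝ) :
    sin y * cos x - cos y * sin x - sin y + sin x
      = 4 * sin (x/2) * sin (y/2) * sin ((y-x)/2) := by
  have h := trig_prod (x/2) (y/2)
  rw [show 2*(y/2) - 2*(x/2) = y - x by ring, show 2*(y/2) = y by ring,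
    show 2*(x/2) = x by ring, show y/2 - x/2 = (y-x)/2 by ring, Real.sin_sub] at h
  linarith [h]

lemma cos_half_sq (x : ℝ) : cos x = 1 - 2 * sin (x/2)^2 := by
  rw [show x = 2*(x/2) by ring, Real.cos_two_mul]
  rw [show 2*(x/2)/2 = x/2 by ring]
  linear_combination 2*(Real.sin_sq_add_cos_sq (x/2))

lemma det_id (r φ x y : ℝ) :
    (r*cos (φ+x) - r*cos φ) * (r*sin (φ+y) - r*sin φ)
      - (r*sin (φ+x) - r*sin φ) * (r*cos (φ+y) - r*cos φ)
      = 4*r^2*sin (x/2)*sin (y/2)*sin ((y-x)/2) := by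
  have h := trig_prod' x y
  rw [cos_add, cos_add, sin_add, sin_add]
  linear_combination (r^2*(sin y*cos x - cos y*sin x - sin y + sin x))*(Real.sin_sq_add_cos_sq φ)
    + r^2*h

lemma dist_id (r A B : ℝ) (hr : 0 ≤ r) :
    Real.sqrt ((r*cos A - r*cos B)^2 + (r*sin A - r*sin B)^2)
      = 2*r*|sin ((A-B)/2)| := by
  have habs : (2*r*|sin ((A-B)/2)|)^2 = 4*r^2*(sin ((A-B)/2))^2 := by
    rw [mul_pow, mul_pow, sq_abs]; ring
  have h1 := Real.cos_sub A B
  have h2 := cos_half_sq (A - B)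
  have h3 := Real.sin_sq_add_cos_sq A
  have h4 := Real.sin_sq_add_cos_sq B
  have key : (r*cos A - r*cos B)^2 + (r*sin A - r*sin B)^2 = (2*r*|sin ((A-B)/2)|)^2 := by
    rw [habs]
    linear_combination r^2*h3 + r^2*h4 + 2*r^2*h1 - 2*r^2*h2
  rw [key, Real.sqrt_sq (by positivity)]

lemma coord_extract (v : Pt) (r : ℝ) (hr : 0 < r) (hv : ‖v‖ = r) :
    ∃ φ : ℝ, v 0 = r * cos φ ∧ v 1 = r * sin φ := by
  set z : ℂ := ⟨v 0, v 1⟩ with hz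
  have habs : ‖z‖ = r := by
    have h2 : ‖z‖ ^ 2 = r ^ 2 := by
      rw [Complex.sq_norm, Complex.normSq_mk]
      have := EuclideanSpace.norm_eq v
      rw [this] at hv
      have : (∑ i, ‖v i‖^2) = r^2 := by
        rw [← hv]; rw [Real.sq_sqrt]; positivity
      rw [Fin.sum_univ_two] at this
      rw [Real.norm_eq_abs, Real.norm_eq_abs, sq_abs, sq_abs] at this
      linear_combination this
    have := abs_of_pos hr
    nlinarith [norm_nonneg z]
  refine ⟨Complex.arg z, ?_, ?_⟩
  · have := Complex.norm_mul_exp_arg_mul_I z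
    rw [habs] at this
    have hre := congrArg Complex.re this
    simpa [Complex.exp_ofReal_mul_I_re, hz] using hre.symm
  · have := Complex.norm_mul_exp_arg_mul_I z
    rw [habs] at this
    have him := congrArg Complex.im this
    simp [hz, Complex.exp_mul_I] at him
    simpa [Complex.sin_ofReal_re, hz] using him.symm

/-! ### Angular parametrization -/

lemma exists_angles (N : ℕ) (hN : 0 < N) (p : ZMod N → Pt) (c : Pt) (r : ℝ) (hr : 0 < r)
    (hc : ∀ i, dist (p i) c = r) (hinj : Function.Injective p)
    (hccw3 : ∀ i j k : ZMod N, i.val < j.val → j.val < k.val →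
      0 < det2 (p j - p i) (p k - p i)) :
    ∃ θ : ZMod N → ℝ, θ 0 = 0 ∧ (∀ i, 0 ≤ θ i) ∧ (∀ i, θ i < 2*π) ∧
      (∀ i j, i.val < j.val → θ i < θ j) ∧
      (∀ i j, dist (p i) (p j) = 2*r*|sin ((θ i - θ j)/2)|) := by
  haveI : NeZero N := ⟨hN.ne'⟩
  have hnorm : ∀ i, ‖p i - c‖ = r := by
    intro i; rw [← dist_eq_norm]; exact hc i
  have hφ : ∀ i, ∃ φ : ℝ, (p i - c) 0 = r * cos φ ∧ (p i - c) 1 = r * sin φ := by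
    intro i; exact coord_extract _ r hr (hnorm i)
  choose φ hφ0 hφ1 using hφ
  set θ : ZMod N → ℝ := fun i => 2*π*Int.fract ((φ i - φ 0)/(2*π)) with hθdef
  have hpi : (0:ℝ) < 2*π := by positivity
  have hθ0 : θ 0 = 0 := by simp [hθdef]
  have hθnn : ∀ i, 0 ≤ θ i := fun i => by
    have := Int.fract_nonneg ((φ i - φ 0)/(2*π)); positivity
  have hθlt : ∀ i, θ i < 2*π := fun i => by
    have h := Int.fract_lt_one ((φ i - φ 0)/(2*π))
    calc θ i < 2*π*1 := by
          apply mul_lt_mul_of_pos_left h hpi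
      _ = 2*π := by ring
  have hco : ∀ i, (p i - c) 0 = r * cos (φ 0 + θ i) ∧ (p i - c) 1 = r * sin (φ 0 + θ i) := by
    intro i
    have harg : φ 0 + θ i = φ i - (⌊(φ i - φ 0)/(2*π)⌋ : ℤ) * (2*π) := by
      rw [hθdef]
      simp only [Int.fract]
      field_simp
      ring
    constructor
    · rw [harg, Real.cos_sub_int_mul_two_pi]; exact hφ0 i
    · rw [harg, Real.sin_sub_int_mul_two_pi]; exact hφ1 i
  have hdist : ∀ i j, dist (p i) (p j) = 2*r*|sin ((θ i - θ j)/2)| := by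
    intro i j
    have h1 : dist (p i) (p j)
        = Real.sqrt ((r*cos (φ 0 + θ i) - r*cos (φ 0 + θ j))^2
          + (r*sin (φ 0 + θ i) - r*sin (φ 0 + θ j))^2) := by
      rw [EuclideanSpace.dist_eq, Fin.sum_univ_two]
      congr 1
      have e0 : p i 0 - p j 0 = (p i - c) 0 - (p j - c) 0 := by
        simp [PiLp.sub_apply]
      have e1 : p i 1 - p j 1 = (p i - c) 1 - (p j - c) 1 := by
        simp [PiLp.sub_apply]
      rw [Real.dist_eq, Real.dist_eq, sq_abs, sq_abs, e0, e1,
        (hco i).1, (hco j).1, (hco i).2, (hco j).2]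
    rw [h1, dist_id _ _ _ hr.le]
    congr 2
    ring
  refine ⟨θ, hθ0, hθnn, hθlt, ?_, hdist⟩
  have hne : ∀ i, i ≠ 0 → 0 < θ i := by
    intro i hi
    rcases lt_or_eq_of_le (hθnn i) with h | h
    · exact h
    · exfalso
      apply hi
      apply hinj
      have h0 : (p i - c) 0 = (p 0 - c) 0 := by rw [(hco i).1, (hco 0).1, ← h, hθ0]
      have h1 : (p i - c) 1 = (p 0 - c) 1 := by rw [(hco i).2, (hco 0).2, ← h, hθ0]
      have hpc : p i - c = p 0 - c := by
        ext k
        fin_cases k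
        · exact h0
        · exact h1
      have := congrArg (· + c) hpc
      simpa using this
  intro i j hij
  rcases eq_or_ne i 0 with rfl | hi0
  · rw [hθ0]
    apply hne
    intro h
    rw [h] at hij
    simp at hij
  · have hi : 0 < i.val := Nat.pos_of_ne_zero (fun h => hi0 ((ZMod.val_eq_zero i).1 h))
    have hdet := hccw3 0 i j (by simpa [ZMod.val_zero] using hi) hij
    have hdval : det2 (p i - p 0) (p j - p 0)
        = 4*r^2*sin (θ i/2)*sin (θ j/2)*sin ((θ j - θ i)/2) := by
      have e : ∀ (a : ZMod N) (k : Fin 2), (p a - p 0) k = (p a - c) k - (p 0 - c) k := by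
        intro a k; simp [PiLp.sub_apply]
      rw [det2, e i 0, e i 1, e j 0, e j 1, (hco i).1, (hco 0).1, (hco i).2, (hco 0).2,
        (hco j).1, (hco j).2, hθ0, add_zero]
      exact det_id r (φ 0) (θ i) (θ j)
    rw [hdval] at hdet
    have hsi : 0 < sin (θ i / 2) := by
      apply Real.sin_pos_of_pos_of_lt_pi
      · have := hne i hi0; linarith
      · have := hθlt i; linarith
    have hj0 : j ≠ 0 := by
      intro h; rw [h] at hij; simp at hij
    have hsj : 0 < sin (θ j / 2) := by
      apply Real.sin_pos_of_pos_of_lt_pi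
      · have := hne j hj0; linarith
      · have := hθlt j; linarith
    have hfac : 0 < 4*r^2*sin (θ i/2)*sin (θ j/2) :=
      mul_pos (mul_pos (by positivity) hsi) hsj
    have hs3 : 0 < sin ((θ j - θ i)/2) := by
      by_contra hle
      push_neg at hle
      nlinarith [mul_nonpos_of_nonneg_of_nonpos hfac.le hle]
    by_contra hle
    push_neg at hle
    have : sin ((θ j - θ i)/2) ≤ 0 := by
      apply Real.sin_nonpos_of_nonpos_of_neg_pi_le
      · linarith
      · have h1 := hθnn j
        have h2 := hθlt i
        have := Real.pi_pos
        linarith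
    linarith

/-! ### Concavity-type estimate for chords -/

lemma sin_min_le (x y S : ℝ) (hx : 0 < x) (hy : 0 < y) (h1 : x ≤ S) (h2 : S ≤ 2*π - y) :
    min (sin (x/2)) (sin (y/2)) ≤ sin (S/2) := by
  have hpi := Real.pi_pos
  rcases le_or_gt (S/2) (π/2) with hc | hc
  · have : sin (x/2) ≤ sin (S/2) := by
      apply Real.strictMonoOn_sin.monotoneOn _ _ (by linarith)
      · constructor <;> [linarith; linarith]
      · constructor <;> [linarith; linarith]
    exact le_trans (min_le_left _ _) this
  · have hss : sin (π - S/2) = sin (S/2) := Real.sin_pi_sub _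
    have : sin (y/2) ≤ sin (π - S/2) := by
      apply Real.strictMonoOn_sin.monotoneOn _ _ (by linarith)
      · constructor <;> [linarith; linarith]
      · constructor <;> [linarith; linarith]
    rw [hss] at this
    exact le_trans (min_le_right _ _) this

lemma min_chord (r : ℝ) (hr : 0 < r) (sx sy sS : ℝ) (h : min sx sy ≤ sS) :
    min (2*r*sx) (2*r*sy) ≤ 2*r*sS := by
  rcases le_total sx sy with h' | h'
  · rw [min_eq_left h'] at h
    exact le_trans (min_le_left _ _) (by nlinarith)
  · rw [min_eq_right h'] at h
    exact le_trans (min_le_right _ _) (by nlinarith)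

/-! ### Parity: fixed-point-free involutions have even orbits -/

lemma even_card_invol {α : Type*} [DecidableEq α] (s : Finset α) (f : α → α)
    (h1 : ∀ x ∈ s, f x ∈ s) (h2 : ∀ x ∈ s, f (f x) = x) (h3 : ∀ x ∈ s, f x ≠ x) :
    Even s.card := by
  classical
  induction s using Finset.strongInduction with
  | _ s ih =>
    rcases s.eq_empty_or_nonempty with rfl | ⟨x, hx⟩
    · simp
    · have hfx := h1 x hx
      have hxne := h3 x hx
      set t := s \ {x, f x} with ht
      have hsub : t ⊂ s := by
        apply Finset.sdiff_ssubset
        · intro y hy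
          simp at hy
          rcases hy with rfl | rfl
          · exact hx
          · exact hfx
        · simp
      have hpair : ({x, f x} : Finset α) ⊆ s := by
        intro y hy
        simp at hy
        rcases hy with rfl | rfl
        · exact hx
        · exact hfx
      have hpc : ({x, f x} : Finset α).card = 2 := by
        rw [Finset.card_insert_of_notMem (by simpa using hxne.symm), Finset.card_singleton]
      have hle := Finset.card_le_card hpair
      have hcard : s.card = t.card + 2 := by
        rw [ht, Finset.card_sdiff_of_subset hpair, hpc]
        omega
      have hteven : Even t.card := by
        apply ih t hsub
        · intro y hy
          simp only [ht, Finset.mem_sdiff, Finset.mem_insert, Finset.mem_singleton] at hy ⊢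
          obtain ⟨hys, hyne⟩ := hy
          push_neg at hyne
          refine ⟨h1 y hys, ?_⟩
          rintro (h | h)
          · exact hyne.2 (by rw [← h2 y hys, h])
          · have hff : f (f y) = f (f x) := by rw [h]
            rw [h2 y hys, h2 x hx] at hff
            exact hyne.1 hff
        · intro y hy
          simp only [ht, Finset.mem_sdiff] at hy
          exact h2 y hy.1
        · intro y hy
          simp only [ht, Finset.mem_sdiff] at hy
          exact h3 y hy.1
      rcases hteven with ⟨m, hm⟩
      rw [hcard]
      exact ⟨m + 1, by omega⟩

/-! ### The two boundary matchings -/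

def sE (n : ℕ) : ZMod (2*n) → ZMod (2*n) := fun i => if i.val % 2 = 0 then i + 1 else i - 1

def sO (n : ℕ) : ZMod (2*n) → ZMod (2*n) := fun i => if i.val % 2 = 0 then i - 1 else i + 1

section Matchings

variable {n : ℕ}

lemma val_cast_parity (hn : 0 < n) (m : ℕ) : (((m:ℕ) : ZMod (2*n))).val % 2 = m % 2 := by
  haveI : NeZero (2*n) := ⟨by omega⟩
  rw [ZMod.val_natCast]
  exact Nat.mod_mod_of_dvd m ⟨n, rfl⟩

lemma sE_even (hn : 0 < n) (k : ℕ) (hk : k < n) :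
    sE n ((2*k : ℕ) : ZMod (2*n)) = ((2*k+1 : ℕ) : ZMod (2*n)) := by
  haveI : NeZero (2*n) := ⟨by omega⟩
  have hval : (((2*k : ℕ) : ZMod (2*n))).val = 2*k := ZMod.val_cast_of_lt (by omega)
  simp only [sE, hval]
  rw [if_pos (by omega)]
  push_cast
  ring

lemma sE_odd (hn : 0 < n) (k : ℕ) (hk : k < n) :
    sE n ((2*k+1 : ℕ) : ZMod (2*n)) = ((2*k : ℕ) : ZMod (2*n)) := by
  haveI : NeZero (2*n) := ⟨by omega⟩
  have hval : (((2*k+1 : ℕ) : ZMod (2*n))).val = 2*k+1 := ZMod.val_cast_of_lt (by omega)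
  simp only [sE, hval]
  rw [if_neg (by omega), sub_eq_iff_eq_add]
  push_cast
  ring

lemma sO_odd (hn : 0 < n) (k : ℕ) (hk : k < n) :
    sO n ((2*k+1 : ℕ) : ZMod (2*n)) = ((2*k+2 : ℕ) : ZMod (2*n)) := by
  haveI : NeZero (2*n) := ⟨by omega⟩
  have hval : (((2*k+1 : ℕ) : ZMod (2*n))).val = 2*k+1 := ZMod.val_cast_of_lt (by omega)
  simp only [sO, hval]
  rw [if_neg (by omega)]
  push_cast
  ring

lemma sO_even (hn : 0 < n) (k : ℕ) (hk : k < n) :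
    sO n ((2*k+2 : ℕ) : ZMod (2*n)) = ((2*k+1 : ℕ) : ZMod (2*n)) := by
  haveI : NeZero (2*n) := ⟨by omega⟩
  have hpar : (((2*k+2 : ℕ) : ZMod (2*n))).val % 2 = 0 := by
    rw [val_cast_parity hn]
    omega
  simp only [sO]
  rw [if_pos hpar, sub_eq_iff_eq_add]
  push_cast
  ring

lemma canonE (hn : 0 < n) (i : ZMod (2*n)) :
    ∃ k : ℕ, k < n ∧
      ((i = ((2*k : ℕ) : ZMod (2*n)) ∧ sE n i = ((2*k+1 : ℕ) : ZMod (2*n)))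
        ∨ (i = ((2*k+1 : ℕ) : ZMod (2*n)) ∧ sE n i = ((2*k : ℕ) : ZMod (2*n)))) := by
  haveI : NeZero (2*n) := ⟨by omega⟩
  have hv : i.val < 2*n := ZMod.val_lt i
  have hiv : i = ((i.val : ℕ) : ZMod (2*n)) := (ZMod.natCast_zmod_val i).symm
  by_cases h : i.val % 2 = 0
  · obtain ⟨k, hk⟩ : ∃ k, i.val = 2*k := ⟨i.val/2, by omega⟩
    refine ⟨k, by omega, Or.inl ⟨by rw [← hk]; exact hiv, ?_⟩⟩
    have hkey := sE_even hn k (by omega)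
    rw [← hk, ← hiv, hk] at hkey
    exact hkey
  · obtain ⟨k, hk⟩ : ∃ k, i.val = 2*k+1 := ⟨i.val/2, by omega⟩
    refine ⟨k, by omega, Or.inr ⟨by rw [← hk]; exact hiv, ?_⟩⟩
    have hkey := sE_odd hn k (by omega)
    rw [← hk, ← hiv] at hkey
    exact hkey

lemma canonO (hn : 0 < n) (i : ZMod (2*n)) :
    ∃ k : ℕ, k < n ∧
      ((i = ((2*k+1 : ℕ) : ZMod (2*n)) ∧ sO n i = ((2*k+2 : ℕ) : ZMod (2*n)))
        ∨ (i = ((2*k+2 : ℕ) : ZMod (2*n)) ∧ sO n i = ((2*k+1 : ℕ) : ZMod (2*n)))) := by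
  haveI : NeZero (2*n) := ⟨by omega⟩
  have hv : i.val < 2*n := ZMod.val_lt i
  have hiv : i = ((i.val : ℕ) : ZMod (2*n)) := (ZMod.natCast_zmod_val i).symm
  by_cases h : i.val % 2 = 0
  · rcases Nat.eq_zero_or_pos i.val with h0 | h0
    · have hi0 : i = ((2*(n-1)+2 : ℕ) : ZMod (2*n)) := by
        rw [show (2*(n-1)+2 : ℕ) = 2*n by omega, ZMod.natCast_self, hiv, h0]
        simp
      refine ⟨n - 1, by omega, Or.inr ⟨hi0, ?_⟩⟩
      rw [hi0]
      exact sO_even hn (n-1) (by omega)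
    · obtain ⟨k, hk⟩ : ∃ k, i.val = 2*k+2 := ⟨i.val/2 - 1, by omega⟩
      refine ⟨k, by omega, Or.inr ⟨by rw [← hk]; exact hiv, ?_⟩⟩
      have hkey := sO_even hn k (by omega)
      rw [← hk, ← hiv] at hkey
      exact hkey
  · obtain ⟨k, hk⟩ : ∃ k, i.val = 2*k+1 := ⟨i.val/2, by omega⟩
    refine ⟨k, by omega, Or.inl ⟨by rw [← hk]; exact hiv, ?_⟩⟩
    have hkey := sO_odd hn k (by omega)
    rw [← hk, ← hiv] at hkey
    exact hkey

lemma sE_invol (hn : 0 < n) (i : ZMod (2*n)) : sE n (sE n i) = i := by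
  obtain ⟨k, hk, ⟨h1, h2⟩ | ⟨h1, h2⟩⟩ := canonE hn i
  · rw [h2, sE_odd hn k hk, ← h1]
  · rw [h2, sE_even hn k hk, ← h1]

lemma sO_invol (hn : 0 < n) (i : ZMod (2*n)) : sO n (sO n i) = i := by
  obtain ⟨k, hk, ⟨h1, h2⟩ | ⟨h1, h2⟩⟩ := canonO hn i
  · rw [h2, sO_even hn k hk, ← h1]
  · rw [h2, sO_odd hn k hk, ← h1]

lemma sE_nofix (hn : 0 < n) (i : ZMod (2*n)) : sE n i ≠ i := by
  obtain ⟨k, hk, ⟨h1, h2⟩ | ⟨h1, h2⟩⟩ := canonE hn i <;>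
  · rw [h2, h1]
    intro h
    have := congrArg (fun z : ZMod (2*n) => z.val % 2) h
    simp only [val_cast_parity hn] at this
    omega

lemma sO_nofix (hn : 0 < n) (i : ZMod (2*n)) : sO n i ≠ i := by
  obtain ⟨k, hk, ⟨h1, h2⟩ | ⟨h1, h2⟩⟩ := canonO hn i <;>
  · rw [h2, h1]
    intro h
    have := congrArg (fun z : ZMod (2*n) => z.val % 2) h
    simp only [val_cast_parity hn] at this
    omega

end Matchings

/-! ### The boundary matchings are non-crossing -/

section NonCrossing

variable {n : ℕ} {p : ZMod (2*n) → Pt}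

lemma bdisjE (hn : 0 < n)
    (hccw3 : ∀ i j k : ZMod (2*n), i.val < j.val → j.val < k.val →
      0 < det2 (p j - p i) (p k - p i))
    (k l : ℕ) (hkl : k < l) (hl : l < n) :
    segment ℝ (p ((2*k : ℕ) : ZMod (2*n))) (p ((2*k+1 : ℕ) : ZMod (2*n)))
      ∩ segment ℝ (p ((2*l : ℕ) : ZMod (2*n))) (p ((2*l+1 : ℕ) : ZMod (2*n))) = ∅ := by
  haveI : NeZero (2*n) := ⟨by omega⟩
  have v1 : (((2*k : ℕ) : ZMod (2*n))).val = 2*k := ZMod.val_cast_of_lt (by omega)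
  have v2 : (((2*k+1 : ℕ) : ZMod (2*n))).val = 2*k+1 := ZMod.val_cast_of_lt (by omega)
  have v3 : (((2*l : ℕ) : ZMod (2*n))).val = 2*l := ZMod.val_cast_of_lt (by omega)
  have v4 : (((2*l+1 : ℕ) : ZMod (2*n))).val = 2*l+1 := ZMod.val_cast_of_lt (by omega)
  apply seg_disjoint_s9
  · exact hccw3 _ _ _ (by rw [v1, v2]; omega) (by rw [v2, v3]; omega)
  · exact hccw3 _ _ _ (by rw [v1, v2]; omega) (by rw [v2, v4]; omega)

lemma bdisjO (hn : 0 < n)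
    (hccw3 : ∀ i j k : ZMod (2*n), i.val < j.val → j.val < k.val →
      0 < det2 (p j - p i) (p k - p i))
    (k l : ℕ) (hkl : k < l) (hl : l < n) :
    segment ℝ (p ((2*k+1 : ℕ) : ZMod (2*n))) (p ((2*k+2 : ℕ) : ZMod (2*n)))
      ∩ segment ℝ (p ((2*l+1 : ℕ) : ZMod (2*n))) (p ((2*l+2 : ℕ) : ZMod (2*n))) = ∅ := by
  haveI : NeZero (2*n) := ⟨by omega⟩
  have v1 : (((2*k+1 : ℕ) : ZMod (2*n))).val = 2*k+1 := ZMod.val_cast_of_lt (by omega)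
  have v2 : (((2*k+2 : ℕ) : ZMod (2*n))).val = 2*k+2 := ZMod.val_cast_of_lt (by omega)
  have v3 : (((2*l+1 : ℕ) : ZMod (2*n))).val = 2*l+1 := ZMod.val_cast_of_lt (by omega)
  by_cases hw : 2*l+2 < 2*n
  · have v4 : (((2*l+2 : ℕ) : ZMod (2*n))).val = 2*l+2 := ZMod.val_cast_of_lt hw
    apply seg_disjoint_s9
    · exact hccw3 _ _ _ (by rw [v1, v2]; omega) (by rw [v2, v3]; omega)
    · exact hccw3 _ _ _ (by rw [v1, v2]; omega) (by rw [v2, v4]; omega)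
  · have h2l : (2*l+2 : ℕ) = 2*n := by omega
    have v4 : (((2*l+2 : ℕ) : ZMod (2*n))).val = 0 := by
      rw [h2l, ZMod.natCast_self, ZMod.val_zero]
    rw [Set.inter_comm]
    apply seg_disjoint_s9
    · rw [det2_cyc_s9]
      exact hccw3 _ _ _ (by rw [v4, v1]; omega) (by rw [v1, v3]; omega)
    · rw [det2_cyc_s9]
      exact hccw3 _ _ _ (by rw [v4, v2]; omega) (by rw [v2, v3]; omega)

lemma ncE (hn : 0 < n)
    (hccw3 : ∀ i j k : ZMod (2*n), i.val < j.val → j.val < k.val →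
      0 < det2 (p j - p i) (p k - p i)) :
    ∀ i j : ZMod (2*n), j ≠ i → j ≠ sE n i →
      segment ℝ (p i) (p (sE n i)) ∩ segment ℝ (p j) (p (sE n j)) = ∅ := by
  intro i j hji hjsi
  obtain ⟨k, hk, hik⟩ := canonE hn i
  obtain ⟨l, hl, hjl⟩ := canonE hn j
  have hkl : k ≠ l := by
    rintro rfl
    rcases hik with ⟨hi1, hi2⟩ | ⟨hi1, hi2⟩ <;> rcases hjl with ⟨hj1, hj2⟩ | ⟨hj1, hj2⟩
    · exact hji (hj1.trans hi1.symm)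
    · exact hjsi (hj1.trans hi2.symm)
    · exact hjsi (hj1.trans hi2.symm)
    · exact hji (hj1.trans hi1.symm)
  have segi : segment ℝ (p i) (p (sE n i))
      = segment ℝ (p ((2*k : ℕ) : ZMod (2*n))) (p ((2*k+1 : ℕ) : ZMod (2*n))) := by
    rcases hik with ⟨h1, h2⟩ | ⟨h1, h2⟩
    · rw [h2, h1]
    · rw [h2, h1, segment_symm]
  have segj : segment ℝ (p j) (p (sE n j))
      = segment ℝ (p ((2*l : ℕ) : ZMod (2*n))) (p ((2*l+1 : ℕ) : ZMod (2*n))) := by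
    rcases hjl with ⟨h1, h2⟩ | ⟨h1, h2⟩
    · rw [h2, h1]
    · rw [h2, h1, segment_symm]
  rw [segi, segj]
  rcases Nat.lt_or_ge k l with h | h
  · exact bdisjE hn hccw3 k l h hl
  · rw [Set.inter_comm]
    exact bdisjE hn hccw3 l k (by omega) hk

lemma ncO (hn : 0 < n)
    (hccw3 : ∀ i j k : ZMod (2*n), i.val < j.val → j.val < k.val →
      0 < det2 (p j - p i) (p k - p i)) :
    ∀ i j : ZMod (2*n), j ≠ i → j ≠ sO n i →
      segment ℝ (p i) (p (sO n i)) ∩ segment ℝ (p j) (p (sO n j)) = ∅ := by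
  intro i j hji hjsi
  obtain ⟨k, hk, hik⟩ := canonO hn i
  obtain ⟨l, hl, hjl⟩ := canonO hn j
  have hkl : k ≠ l := by
    rintro rfl
    rcases hik with ⟨hi1, hi2⟩ | ⟨hi1, hi2⟩ <;> rcases hjl with ⟨hj1, hj2⟩ | ⟨hj1, hj2⟩
    · exact hji (hj1.trans hi1.symm)
    · exact hjsi (hj1.trans hi2.symm)
    · exact hjsi (hj1.trans hi2.symm)
    · exact hji (hj1.trans hi1.symm)
  have segi : segment ℝ (p i) (p (sO n i))
      = segment ℝ (p ((2*k+1 : ℕ) : ZMod (2*n))) (p ((2*k+2 : ℕ) : ZMod (2*n))) := by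
    rcases hik with ⟨h1, h2⟩ | ⟨h1, h2⟩
    · rw [h2, h1]
    · rw [h2, h1, segment_symm]
  have segj : segment ℝ (p j) (p (sO n j))
      = segment ℝ (p ((2*l+1 : ℕ) : ZMod (2*n))) (p ((2*l+2 : ℕ) : ZMod (2*n))) := by
    rcases hjl with ⟨h1, h2⟩ | ⟨h1, h2⟩
    · rw [h2, h1]
    · rw [h2, h1, segment_symm]
  rw [segi, segj]
  rcases Nat.lt_or_ge k l with h | h
  · exact bdisjO hn hccw3 k l h hl
  · rw [Set.inter_comm]
    exact bdisjO hn hccw3 l k (by omega) hk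

/-! ### Values of the boundary matchings -/

lemma supE (hn : 0 < n) (p : ZMod (2*n) → Pt) :
    (⨆ i, dist (p i) (p (sE n i)))
      = ⨆ k : Fin n, dist (p ((2*(k:ℕ) : ℕ) : ZMod (2*n))) (p ((2*(k:ℕ)+1 : ℕ) : ZMod (2*n))) := by
  haveI : NeZero (2*n) := ⟨by omega⟩
  haveI : Nonempty (Fin n) := ⟨⟨0, hn⟩⟩
  apply le_antisymm
  · apply ciSup_le
    intro i
    obtain ⟨k, hk, ⟨h1, h2⟩ | ⟨h1, h2⟩⟩ := canonE hn i
    · rw [h2, h1]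
      simpa using le_ciSup (f := fun k : Fin n => dist (p ((2*(k:ℕ) : ℕ) : ZMod (2*n))) (p ((2*(k:ℕ)+1 : ℕ) : ZMod (2*n))))
        (Set.Finite.bddAbove (Set.finite_range _)) (⟨k, hk⟩ : Fin n)
    · rw [h2, h1, dist_comm]
      simpa using le_ciSup (f := fun k : Fin n => dist (p ((2*(k:ℕ) : ℕ) : ZMod (2*n))) (p ((2*(k:ℕ)+1 : ℕ) : ZMod (2*n))))
        (Set.Finite.bddAbove (Set.finite_range _)) (⟨k, hk⟩ : Fin n)
  · apply ciSup_le
    intro k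
    have h2 := sE_even hn (k : ℕ) k.2
    rw [← h2]
    exact le_ciSup (f := fun i => dist (p i) (p (sE n i)))
      (Set.Finite.bddAbove (Set.finite_range _)) (((2*(k:ℕ) : ℕ) : ZMod (2*n)))

lemma supO (hn : 0 < n) (p : ZMod (2*n) → Pt) :
    (⨆ i, dist (p i) (p (sO n i)))
      = ⨆ k : Fin n, dist (p ((2*(k:ℕ)+1 : ℕ) : ZMod (2*n))) (p ((2*(k:ℕ)+2 : ℕ) : ZMod (2*n))) := by
  haveI : NeZero (2*n) := ⟨by omega⟩
  haveI : Nonempty (Fin n) := ⟨⟨0, hn⟩⟩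
  apply le_antisymm
  · apply ciSup_le
    intro i
    obtain ⟨k, hk, ⟨h1, h2⟩ | ⟨h1, h2⟩⟩ := canonO hn i
    · rw [h2, h1]
      simpa using le_ciSup (f := fun k : Fin n => dist (p ((2*(k:ℕ)+1 : ℕ) : ZMod (2*n))) (p ((2*(k:ℕ)+2 : ℕ) : ZMod (2*n))))
        (Set.Finite.bddAbove (Set.finite_range _)) (⟨k, hk⟩ : Fin n)
    · rw [h2, h1, dist_comm]
      simpa using le_ciSup (f := fun k : Fin n => dist (p ((2*(k:ℕ)+1 : ℕ) : ZMod (2*n))) (p ((2*(k:ℕ)+2 : ℕ) : ZMod (2*n))))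
        (Set.Finite.bddAbove (Set.finite_range _)) (⟨k, hk⟩ : Fin n)
  · apply ciSup_le
    intro k
    have h2 := sO_odd hn (k : ℕ) k.2
    rw [← h2]
    exact le_ciSup (f := fun i => dist (p i) (p (sO n i)))
      (Set.Finite.bddAbove (Set.finite_range _)) (((2*(k:ℕ)+1 : ℕ) : ZMod (2*n)))

end NonCrossing

/-! ### Lower bound: every matching has an edge at least as long as the smaller
of two given boundary gaps that separate the cycle into two odd blocks. -/

lemma lower_aux (n : ℕ) (hn : 0 < n) (p : ZMod (2*n) → Pt) (r : ℝ) (hr : 0 < r)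
    (θ : ZMod (2*n) → ℝ) (hθ0 : θ 0 = 0) (hnn : ∀ i, 0 ≤ θ i) (hlt : ∀ i, θ i < 2*π)
    (hmono : ∀ i j : ZMod (2*n), i.val < j.val → θ i < θ j)
    (hdist : ∀ i j : ZMod (2*n), dist (p i) (p j) = 2*r*|sin ((θ i - θ j)/2)|)
    (σ : ZMod (2*n) → ZMod (2*n)) (hinv : ∀ i, σ (σ i) = i) (hnf : ∀ i, σ i ≠ i)
    (g1 g2 : ℕ) (h12 : g1 < g2) (hg2 : g2 < 2*n) (hodd : ¬ 2 ∣ (g2 - g1)) :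
    min (dist (p ((g1 : ℕ) : ZMod (2*n))) (p ((g1+1 : ℕ) : ZMod (2*n))))
        (dist (p ((g2 : ℕ) : ZMod (2*n))) (p ((g2+1 : ℕ) : ZMod (2*n))))
      ≤ ⨆ i, dist (p i) (p (σ i)) := by
  haveI : NeZero (2*n) := ⟨by omega⟩
  classical
  have hpi := Real.pi_pos
  -- weak monotonicity
  have hmono' : ∀ i j : ZMod (2*n), i.val ≤ j.val → θ i ≤ θ j := by
    intro i j h
    rcases eq_or_lt_of_le h with h' | h'
    · rw [ZMod.val_injective _ h']
    · exact (hmono i j h').le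
  -- chord formula with ordering
  have hchord : ∀ i j : ZMod (2*n), i.val < j.val →
      dist (p i) (p j) = 2*r*sin ((θ j - θ i)/2) := by
    intro i j h
    rw [hdist i j]
    have h1 : 0 < θ j - θ i := by have := hmono i j h; linarith
    have h2 : θ j - θ i < 2*π := by have := hnn i; have := hlt j; linarith
    have habs : |sin ((θ i - θ j)/2)| = sin ((θ j - θ i)/2) := by
      rw [show (θ i - θ j)/2 = -((θ j - θ i)/2) by ring, Real.sin_neg, abs_neg,
        abs_of_nonneg (Real.sin_nonneg_of_nonneg_of_le_pi (by linarith) (by linarith))]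
    rw [habs]
  -- find a separating edge
  set S : Finset (ZMod (2*n)) := Finset.univ.filter (fun i => g1 < i.val ∧ i.val ≤ g2) with hS
  have hcard : S.card = g2 - g1 := by
    rw [← Nat.card_Ioc g1 g2]
    apply Finset.card_bij (fun (i : ZMod (2*n)) _ => i.val)
    · intro a ha
      simp only [hS, Finset.mem_filter] at ha
      simp only [Finset.mem_Ioc]
      exact ha.2
    · intro a _ b _ h
      exact ZMod.val_injective _ h
    · intro m hm
      simp only [Finset.mem_Ioc] at hm
      have hmlt : m < 2*n := by omega
      refine ⟨((m : ℕ) : ZMod (2*n)), ?_, ZMod.val_cast_of_lt hmlt⟩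
      simp only [hS, Finset.mem_filter, Finset.mem_univ, true_and, ZMod.val_cast_of_lt hmlt]
      omega
  have hsep : ∃ u, u ∈ S ∧ σ u ∉ S := by
    by_contra h
    push_neg at h
    have heven : Even S.card :=
      even_card_invol S σ (fun x hx => h x hx) (fun x _ => hinv x) (fun x _ => hnf x)
    rw [hcard] at heven
    rcases heven with ⟨m, hm⟩
    exact hodd ⟨m, by omega⟩
  obtain ⟨u, huS, hvS⟩ := hsep
  have hu : g1 < u.val ∧ u.val ≤ g2 := by
    simpa only [hS, Finset.mem_filter, Finset.mem_univ, true_and] using huS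
  have hv : ¬(g1 < (σ u).val ∧ (σ u).val ≤ g2) := by
    simpa only [hS, Finset.mem_filter, Finset.mem_univ, true_and] using hvS
  have hvlt : (σ u).val < 2*n := ZMod.val_lt (σ u)
  have hul2 : u.val < 2*n := ZMod.val_lt u
  -- target: min gaps ≤ dist u (σ u) ≤ sup
  have hle : dist (p u) (p (σ u)) ≤ ⨆ i, dist (p i) (p (σ i)) :=
    le_ciSup (f := fun i => dist (p i) (p (σ i))) (Set.Finite.bddAbove (Set.finite_range _)) u
  refine le_trans ?_ hle
  -- val facts for the gap points
  have vg1 : (((g1 : ℕ) : ZMod (2*n))).val = g1 := ZMod.val_cast_of_lt (by omega)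
  have vg1' : (((g1+1 : ℕ) : ZMod (2*n))).val = g1+1 := ZMod.val_cast_of_lt (by omega)
  have vg2 : (((g2 : ℕ) : ZMod (2*n))).val = g2 := ZMod.val_cast_of_lt (by omega)
  -- gap 1 distance
  set x : ℝ := θ ((g1+1 : ℕ) : ZMod (2*n)) - θ ((g1 : ℕ) : ZMod (2*n)) with hxdef
  have hxpos : 0 < x := by
    have := hmono _ _ (show (((g1 : ℕ) : ZMod (2*n))).val < (((g1+1 : ℕ) : ZMod (2*n))).val by rw [vg1, vg1']; omega)
    linarith
  have hd1 : dist (p ((g1 : ℕ) : ZMod (2*n))) (p ((g1+1 : ℕ) : ZMod (2*n))) = 2*r*sin (x/2) := by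
    rw [hchord _ _ (by rw [vg1, vg1']; omega)]
  -- gap 2 distance; B2 is the (possibly wrapped) angle of point g2+1
  set B2 : ℝ := if g2 + 1 = 2*n then 2*π else θ ((g2+1 : ℕ) : ZMod (2*n)) with hB2def
  set y : ℝ := B2 - θ ((g2 : ℕ) : ZMod (2*n)) with hydef
  have hypos : 0 < y := by
    rw [hydef, hB2def]
    split_ifs with hcase
    · have := hlt ((g2 : ℕ) : ZMod (2*n)); linarith
    · have vg2' : (((g2+1 : ℕ) : ZMod (2*n))).val = g2+1 := ZMod.val_cast_of_lt (by omega)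
      have := hmono ((g2 : ℕ) : ZMod (2*n)) ((g2+1 : ℕ) : ZMod (2*n)) (by rw [vg2, vg2']; omega)
      linarith
  have hd2 : dist (p ((g2 : ℕ) : ZMod (2*n))) (p ((g2+1 : ℕ) : ZMod (2*n))) = 2*r*sin (y/2) := by
    rw [hydef, hB2def]
    split_ifs with hcase
    · -- wrapped: point g2+1 is the point 0
      have hcast : ((g2+1 : ℕ) : ZMod (2*n)) = (0 : ZMod (2*n)) := by
        rw [hcase, ZMod.natCast_self]
      have hg2pos : 0 < g2 := by omega
      rw [hcast, dist_comm, hchord (0 : ZMod (2*n)) ((g2 : ℕ) : ZMod (2*n))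
        (by rw [ZMod.val_zero, vg2]; omega), hθ0]
      rw [show (2*π - θ ((g2 : ℕ) : ZMod (2*n)))/2 = π - (θ ((g2 : ℕ) : ZMod (2*n)) - 0)/2 by ring,
        Real.sin_pi_sub]
    · have vg2' : (((g2+1 : ℕ) : ZMod (2*n))).val = g2+1 := ZMod.val_cast_of_lt (by omega)
      rw [hchord _ _ (by rw [vg2, vg2']; omega)]
  rw [hd1, hd2]
  -- two cases for the position of σ u
  rcases (by omega : (σ u).val ≤ g1 ∨ g2 < (σ u).val) with hcase | hcase
  · -- σ u is before gap 1
    have huv : (σ u).val < u.val := by omega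
    have hduv : dist (p u) (p (σ u)) = 2*r*sin ((θ u - θ (σ u))/2) := by
      rw [dist_comm, hchord (σ u) u huv]
    rw [hduv]
    apply min_chord r hr
    apply sin_min_le x y _ hxpos hypos
    · -- x ≤ S
      have h1 : θ ((g1+1 : ℕ) : ZMod (2*n)) ≤ θ u := hmono' _ _ (by rw [vg1']; omega)
      have h2 : θ (σ u) ≤ θ ((g1 : ℕ) : ZMod (2*n)) := hmono' _ _ (by rw [vg1]; omega)
      rw [hxdef]; linarith
    · -- S ≤ 2π − y
      have h1 : θ u ≤ θ ((g2 : ℕ) : ZMod (2*n)) := hmono' _ _ (by rw [vg2]; omega)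
      have h2 : B2 ≤ θ (σ u) + 2*π := by
        rw [hB2def]
        split_ifs with hc
        · have := hnn (σ u); linarith
        · have := hlt ((g2+1 : ℕ) : ZMod (2*n)); have := hnn (σ u); linarith
      rw [hydef]; linarith
  · -- σ u is after gap 2
    have huv : u.val < (σ u).val := by omega
    have hduv : dist (p u) (p (σ u)) = 2*r*sin ((θ (σ u) - θ u)/2) := by
      rw [hchord u (σ u) huv]
    rw [hduv, min_comm]
    apply min_chord r hr
    apply sin_min_le y x _ hypos hxpos
    · -- y ≤ S ; here no wrap is possible since (σ u).val ≥ g2+1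
      have hnw : g2 + 1 < 2*n := by omega
      have vg2' : (((g2+1 : ℕ) : ZMod (2*n))).val = g2+1 := ZMod.val_cast_of_lt hnw
      have h1 : θ ((g2+1 : ℕ) : ZMod (2*n)) ≤ θ (σ u) := hmono' _ _ (by rw [vg2']; omega)
      have h2 : θ u ≤ θ ((g2 : ℕ) : ZMod (2*n)) := hmono' _ _ (by rw [vg2]; omega)
      have hB2 : B2 = θ ((g2+1 : ℕ) : ZMod (2*n)) := by
        rw [hB2def, if_neg (by omega)]
      rw [hydef, hB2]; linarith
    · -- S ≤ 2π − x
      have h1 : θ ((g1+1 : ℕ) : ZMod (2*n)) ≤ θ u := hmono' _ _ (by rw [vg1']; omega)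
      have h2 : 0 ≤ θ ((g1 : ℕ) : ZMod (2*n)) := hnn _
      have h3 : θ (σ u) < 2*π := hlt _
      rw [hxdef]; linarith

/-- For `2n` distinct points on a common circle in counterclockwise order, the
minimum over all perfect non-crossing matchings of the maximum edge length equals the smaller
of the two values obtained from the two perfect matchings consisting only of boundary edges. -/
theorem minmax_eq_min_of_two_boundary_matchings (n : ℕ) (hn : 0 < n) (p : ZMod (2 * n) → Pt)
    (hccw : OnCircleCCW (2 * n) p) :
    IsLeast {val : ℝ | ∃ σ, IsNCM (2 * n) p σ ∧ val = ⨆ i, dist (p i) (p (σ i))}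
      (min
        (⨆ k : Fin n, dist (p ((2 * (k : ℕ) : ℕ) : ZMod (2 * n)))
          (p (((2 * (k : ℕ) : ℕ) : ZMod (2 * n)) + 1)))
        (⨆ k : Fin n, dist (p ((2 * (k : ℕ) + 1 : ℕ) : ZMod (2 * n)))
          (p (((2 * (k : ℕ) + 1 : ℕ) : ZMod (2 * n)) + 1)))) := by
  obtain ⟨⟨c, r, hr, hc⟩, hinj, hccw3⟩ := hccw
  haveI : NeZero (2*n) := ⟨by omega⟩
  haveI : Nonempty (Fin n) := ⟨⟨0, hn⟩⟩
  have hA : (⨆ k : Fin n, dist (p ((2 * (k : ℕ) : ℕ) : ZMod (2 * n)))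
        (p (((2 * (k : ℕ) : ℕ) : ZMod (2 * n)) + 1)))
      = ⨆ k : Fin n, dist (p ((2*(k:ℕ) : ℕ) : ZMod (2*n))) (p ((2*(k:ℕ)+1 : ℕ) : ZMod (2*n))) := by
    apply iSup_congr
    intro k
    congr 1
    push_cast
    ring
  have hB : (⨆ k : Fin n, dist (p ((2 * (k : ℕ) + 1 : ℕ) : ZMod (2 * n)))
        (p (((2 * (k : ℕ) + 1 : ℕ) : ZMod (2 * n)) + 1)))
      = ⨆ k : Fin n, dist (p ((2*(k:ℕ)+1 : ℕ) : ZMod (2*n))) (p ((2*(k:ℕ)+2 : ℕ) : ZMod (2*n))) := by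
    apply iSup_congr
    intro k
    congr 1
    push_cast
    ring
  rw [hA, hB]
  constructor
  · -- one of the two boundary matchings attains the minimum
    rcases le_total
        (⨆ k : Fin n, dist (p ((2*(k:ℕ) : ℕ) : ZMod (2*n))) (p ((2*(k:ℕ)+1 : ℕ) : ZMod (2*n))))
        (⨆ k : Fin n, dist (p ((2*(k:ℕ)+1 : ℕ) : ZMod (2*n))) (p ((2*(k:ℕ)+2 : ℕ) : ZMod (2*n))))
      with h | h
    · rw [min_eq_left h]
      exact ⟨sE n, ⟨sE_invol hn, sE_nofix hn, ncE hn hccw3⟩, (supE hn p).symm⟩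
    · rw [min_eq_right h]
      exact ⟨sO n, ⟨sO_invol hn, sO_nofix hn, ncO hn hccw3⟩, (supO hn p).symm⟩
  · -- lower bound for every non-crossing matching
    rintro val ⟨σ, ⟨hinv, hnf, -⟩, rfl⟩
    obtain ⟨θ, hθ0, hnn, hlt, hmono, hdist⟩ :=
      exists_angles (2*n) (by omega) p c r hr hc hinj hccw3
    obtain ⟨ka, hka⟩ := Finite.exists_max
      (fun k : Fin n => dist (p ((2*(k:ℕ) : ℕ) : ZMod (2*n))) (p ((2*(k:ℕ)+1 : ℕ) : ZMod (2*n))))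
    obtain ⟨kb, hkb⟩ := Finite.exists_max
      (fun k : Fin n => dist (p ((2*(k:ℕ)+1 : ℕ) : ZMod (2*n))) (p ((2*(k:ℕ)+2 : ℕ) : ZMod (2*n))))
    have hAval : (⨆ k : Fin n, dist (p ((2*(k:ℕ) : ℕ) : ZMod (2*n))) (p ((2*(k:ℕ)+1 : ℕ) : ZMod (2*n))))
        = dist (p ((2*(ka:ℕ) : ℕ) : ZMod (2*n))) (p ((2*(ka:ℕ)+1 : ℕ) : ZMod (2*n))) :=
      le_antisymm (ciSup_le hka)
        (le_ciSup (f := fun k : Fin n => dist (p ((2*(k:ℕ) : ℕ) : ZMod (2*n)))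
          (p ((2*(k:ℕ)+1 : ℕ) : ZMod (2*n)))) (Set.Finite.bddAbove (Set.finite_range _)) ka)
    have hBval : (⨆ k : Fin n, dist (p ((2*(k:ℕ)+1 : ℕ) : ZMod (2*n))) (p ((2*(k:ℕ)+2 : ℕ) : ZMod (2*n))))
        = dist (p ((2*(kb:ℕ)+1 : ℕ) : ZMod (2*n))) (p ((2*(kb:ℕ)+2 : ℕ) : ZMod (2*n))) :=
      le_antisymm (ciSup_le hkb)
        (le_ciSup (f := fun k : Fin n => dist (p ((2*(k:ℕ)+1 : ℕ) : ZMod (2*n)))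
          (p ((2*(k:ℕ)+2 : ℕ) : ZMod (2*n)))) (Set.Finite.bddAbove (Set.finite_range _)) kb)
    rw [hAval, hBval]
    have hkan : (ka : ℕ) < n := ka.2
    have hkbn : (kb : ℕ) < n := kb.2
    rcases Nat.lt_trichotomy (2*(ka:ℕ)) (2*(kb:ℕ)+1) with h | h | h
    · have hl := lower_aux n hn p r hr θ hθ0 hnn hlt hmono hdist σ hinv hnf
        (2*(ka:ℕ)) (2*(kb:ℕ)+1) h (by omega) (by omega)
      rw [show (2*(kb:ℕ)+1+1 : ℕ) = 2*(kb:ℕ)+2 from by omega] at hl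
      exact hl
    · omega
    · have hl := lower_aux n hn p r hr θ hθ0 hnn hlt hmono hdist σ hinv hnf
        (2*(kb:ℕ)+1) (2*(ka:ℕ)) h (by omega) (by omega)
      rw [show (2*(kb:ℕ)+1+1 : ℕ) = 2*(kb:ℕ)+2 from by omega] at hl
      rw [min_comm]
      exact hl
end
end
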